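/- arXiv:2605.03833 — 6 statements merged into one kernel-verified Lean document; each statement's English description precedes it below -/
import Mathlib

section
/- For every real number a and every real number s with s > 2|a|, the function t ↦ e^{−st}·(sinh(at))²/t is integrable on (0, ∞) and ∫₀^∞ e^{−st}·(sinh(at))²/t dt = (1/4)·log(1/(1 − (2a/s)²)). -/
open MeasureTheory Real Set

lemma exp_inner_integral {x : ℝ} (hx : 0 < x) :
    ∫ t in Ioi (0:ℝ), Real.exp (-(x * t)) = 1 / x := by
  have h := integral_comp_mul_left_Ioi (fun u => Real.exp (-u)) 0 hx
  simp only [mul_zero] at h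
  rw [show (fun t : ℝ => Real.exp (-(x*t))) = fun t => (fun u => Real.exp (-u)) (x*t) from rfl]
  rw [h, integral_exp_neg_Ioi_zero, smul_eq_mul, mul_one, one_div]

lemma exp_icc_integral {p q t : ℝ} (hpq : p ≤ q) (ht : 0 < t) :
    ∫ x in Icc p q, Real.exp (-(x * t))
      = (Real.exp (-(p*t)) - Real.exp (-(q*t))) / t := by
  rw [integral_Icc_eq_integral_Ioc, ← intervalIntegral.integral_of_le hpq]
  have hderiv : ∀ x ∈ uIcc p q,
      HasDerivAt (fun y => -Real.exp (-(y*t))/t) (Real.exp (-(x*t))) x := by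
    intro x _
    have h1 : HasDerivAt (fun y : ℝ => -(y*t)) (-t) x := by
      simpa using ((hasDerivAt_id x).mul_const t).fun_neg
    have h2 := (h1.exp.div_const t).fun_neg
    refine HasDerivAt.congr_deriv (h2.congr_of_eventuallyEq (Filter.Eventually.of_forall fun y => ?_)) ?_
    · show -Real.exp (-(y*t))/t = -(Real.exp (-(y*t))/t); rw [neg_div]
    · rw [mul_neg, neg_div, neg_neg, mul_div_assoc, div_self ht.ne', mul_one]
  have hcont : IntervalIntegrable (fun x => Real.exp (-(x*t))) volume p q :=
    (Real.continuous_exp.comp ((continuous_id.mul continuous_const).neg)).intervalIntegrable p q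
  rw [intervalIntegral.integral_eq_sub_of_hasDerivAt hderiv hcont]
  ring

lemma frullani_le {p q : ℝ} (hp : 0 < p) (hpq : p ≤ q) :
    IntegrableOn (fun t => (Real.exp (-(p*t)) - Real.exp (-(q*t)))/t) (Ioi 0) volume ∧
    ∫ t in Ioi (0:ℝ), (Real.exp (-(p*t)) - Real.exp (-(q*t)))/t = Real.log (q/p) := by
  let μ := volume.restrict (Icc p q)
  let ν := volume.restrict (Ioi (0:ℝ))
  have hmeas : AEStronglyMeasurable (fun z : ℝ × ℝ => Real.exp (-(z.1 * z.2))) (μ.prod ν) :=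
    (Real.continuous_exp.comp ((continuous_fst.mul continuous_snd).neg)).aestronglyMeasurable
  have hF : Integrable (fun z : ℝ × ℝ => Real.exp (-(z.1 * z.2))) (μ.prod ν) := by
    refine (integrable_prod_iff hmeas).2 ⟨?_, ?_⟩
    · filter_upwards [ae_restrict_mem measurableSet_Icc] with x hx
      have hx0 : 0 < x := lt_of_lt_of_le hp hx.1
      exact (by simpa [neg_mul] using exp_neg_integrableOn_Ioi 0 hx0 :
        IntegrableOn (fun t => Real.exp (-(x*t))) (Ioi 0) volume)
    · have h1 : IntegrableOn (fun x : ℝ => 1/x) (Icc p q) volume := by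
        apply ContinuousOn.integrableOn_Icc
        exact continuousOn_const.div continuousOn_id
          (fun x hx => ne_of_gt (lt_of_lt_of_le hp hx.1))
      apply h1.congr
      filter_upwards [ae_restrict_mem measurableSet_Icc] with x hx
      have hx0 : 0 < x := lt_of_lt_of_le hp hx.1
      rw [show (fun t => ‖Real.exp (-(x*t))‖) = fun t => Real.exp (-(x*t)) by
        ext t; exact Real.norm_of_nonneg (Real.exp_pos _).le]
      exact (exp_inner_integral hx0).symm
  have hswap := integral_integral_swap (f := fun x t => Real.exp (-(x * t))) hF
  have hL : (∫ x in Icc p q, ∫ t in Ioi (0:ℝ), Real.exp (-(x * t))) = Real.log (q/p) := by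
    rw [setIntegral_congr_fun measurableSet_Icc
      (fun x hx => exp_inner_integral (lt_of_lt_of_le hp hx.1))]
    rw [integral_Icc_eq_integral_Ioc, ← intervalIntegral.integral_of_le hpq]
    exact integral_one_div (notMem_uIcc_of_lt hp (lt_of_lt_of_le hp hpq))
  have hR : (∫ t in Ioi (0:ℝ), ∫ x in Icc p q, Real.exp (-(x * t)))
      = ∫ t in Ioi (0:ℝ), (Real.exp (-(p*t)) - Real.exp (-(q*t)))/t := by
    exact setIntegral_congr_fun measurableSet_Ioi (fun t ht => exp_icc_integral hpq ht)
  constructor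
  · have hint : Integrable (fun t => ∫ x in Icc p q, Real.exp (-(x * t)))
        (volume.restrict (Ioi (0:ℝ))) := hF.swap.integral_prod_left
    refine Integrable.congr hint ?_
    filter_upwards [ae_restrict_mem measurableSet_Ioi] with t ht
    exact exp_icc_integral hpq ht
  · rw [← hR, ← hswap, hL]

lemma frullani {p q : ℝ} (hp : 0 < p) (hq : 0 < q) :
    IntegrableOn (fun t => (Real.exp (-(p*t)) - Real.exp (-(q*t)))/t) (Ioi 0) volume ∧
    ∫ t in Ioi (0:ℝ), (Real.exp (-(p*t)) - Real.exp (-(q*t)))/t = Real.log (q/p) := by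
  rcases le_total p q with h | h
  · exact frullani_le hp h
  · obtain ⟨hi, hv⟩ := frullani_le hq h
    have heq : (fun t : ℝ => (Real.exp (-(p*t)) - Real.exp (-(q*t)))/t)
        = fun t => -((Real.exp (-(q*t)) - Real.exp (-(p*t)))/t) := by
      ext t; ring
    constructor
    · rw [heq]; exact hi.neg
    · rw [heq, integral_neg, hv, ← Real.log_inv, inv_div]

lemma key_pointwise (a s : ℝ) (t : ℝ) :
    Real.exp (-s * t) * (Real.sinh (a * t)) ^ 2 / t
      = (1/4) * ((Real.exp (-((s - 2*a) * t)) - Real.exp (-(s * t))) / t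
          + ((Real.exp (-((s + 2*a) * t)) - Real.exp (-(s * t))) / t)) := by
  rcases eq_or_ne t 0 with rfl | ht
  · simp
  · have e1 : Real.exp (-((s - 2*a) * t))
        = Real.exp (-(s*t)) * (Real.exp (a*t) * Real.exp (a*t)) := by
      rw [← Real.exp_add, ← Real.exp_add]; ring_nf
    have e2 : Real.exp (-((s + 2*a) * t))
        = Real.exp (-(s*t)) * (Real.exp (-(a*t)) * Real.exp (-(a*t))) := by
      rw [← Real.exp_add, ← Real.exp_add]; ring_nf
    have e3 : Real.exp (a*t) * Real.exp (-(a*t)) = 1 := by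
      rw [← Real.exp_add]; simp
    rw [Real.sinh_eq, e1, e2, neg_mul, Real.exp_neg (a*t)]
    field_simp
    ring

/-- For every real `a` and every real `s > 2|a|`, the function
`t ↦ exp(-s t) · (sinh(a t))² / t` is integrable on `(0, ∞)` and
`∫₀^∞ exp(-s t) · (sinh(a t))² / t dt = (1/4) · log(1/(1 − (2a/s)²))`. -/
theorem laplace_sinh_sq_div_t (a s : ℝ) (hs : s > 2 * |a|) :
    IntegrableOn (fun t : ℝ => Real.exp (-s * t) * (Real.sinh (a * t)) ^ 2 / t)
      (Set.Ioi (0 : ℝ)) volume ∧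
    ∫ t in Set.Ioi (0 : ℝ), Real.exp (-s * t) * (Real.sinh (a * t)) ^ 2 / t
      = (1 / 4) * Real.log (1 / (1 - (2 * a / s) ^ 2)) := by
  have ha1 : 0 < s - 2*a := by
    have := le_abs_self a; linarith
  have ha2 : 0 < s + 2*a := by
    have := neg_abs_le a; linarith
  have hs0 : 0 < s := by
    have := abs_nonneg a; linarith
  obtain ⟨hi1, hv1⟩ := frullani (p := s - 2*a) (q := s) ha1 hs0
  obtain ⟨hi2, hv2⟩ := frullani (p := s + 2*a) (q := s) ha2 hs0
  have heq : (fun t : ℝ => Real.exp (-s * t) * (Real.sinh (a * t)) ^ 2 / t)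
      = fun t => (1/4) * ((Real.exp (-((s - 2*a) * t)) - Real.exp (-(s * t))) / t
          + ((Real.exp (-((s + 2*a) * t)) - Real.exp (-(s * t))) / t)) :=
    funext (key_pointwise a s)
  have hsum : IntegrableOn (fun t : ℝ =>
      (1/4) * ((Real.exp (-((s - 2*a) * t)) - Real.exp (-(s * t))) / t
        + ((Real.exp (-((s + 2*a) * t)) - Real.exp (-(s * t))) / t)) ) (Ioi 0) volume :=
    (hi1.add hi2).const_mul (1/4)
  have hlog : Real.log (s / (s - 2*a)) + Real.log (s / (s + 2*a))
      = Real.log (1 / (1 - (2 * a / s) ^ 2)) := by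
    rw [← Real.log_mul (by positivity) (by positivity)]
    congr 1
    have h4 : (1 : ℝ) - (2 * a / s) ^ 2 = (s - 2*a) * (s + 2*a) / s^2 := by
      field_simp; ring
    rw [h4]
    field_simp
  constructor
  · rw [heq]; exact hsum
  · rw [heq, MeasureTheory.integral_const_mul, integral_add hi1 hi2, hv1, hv2, hlog]
end

section
/- There exists a real number L > 0 such that (1 − 2z/ι_0)^{μ_0}·φ(z) → L as z → ι_0/2 along real z < ι_0/2 (φ has no real poles in some interval (ι_0/2 − δ, ι_0/2), so this makes sense). Equivalently, φ has a pole of order exactly μ_0 at z = ι_0/2 and the coefficient of (1 − 2z/ι_0)^{−μ_0} in its Laurent expansion there is strictly positive. -/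
open Real Set Filter

/-- `±1` sign attached to a boolean. -/
noncomputable def sg (b : Bool) : ℝ := if b then 1 else -1

lemma sg_le_one (b : Bool) : sg b ≤ 1 := by cases b <;> simp [sg] <;> norm_num
lemma sg_true : sg true = 1 := rfl
lemma sg_sq (b : Bool) : sg b * sg b = 1 := by cases b <;> simp [sg]

noncomputable def Fsum (α β : Type) [Fintype α] [Fintype β] [DecidableEq β] (A : α → ℝ) (b : α → β → ℝ) : ℝ :=
  ∑ ε : β → Bool, (∏ j, sg (ε j)) * ∏ i, (A i - ∑ j, sg (ε j) * b i j)⁻¹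

lemma inner_le {β : Type} [Fintype β] (bi : β → ℝ) (hb : ∀ j, 0 ≤ bi j) (ε : β → Bool) :
    ∑ j, sg (ε j) * bi j ≤ ∑ j, bi j := by
  apply Finset.sum_le_sum
  intro j _
  have := sg_le_one (ε j)
  nlinarith [hb j]

lemma Fsum_update_sub (α β : Type) [Fintype α] [Fintype β] [DecidableEq β] [DecidableEq α]
    (A : α → ℝ) (b : α → β → ℝ) (i0 : α) (a a' : ℝ)
    (hb : ∀ j, 0 ≤ b i0 j) (ha : ∑ j, b i0 j < a) (ha' : ∑ j, b i0 j < a') :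
    Fsum α β (Function.update A i0 a') b - Fsum α β (Function.update A i0 a) b
      = (a - a') * Fsum (Option α) β (fun o => o.elim a' (Function.update A i0 a))
          (fun o => o.elim (b i0) b) := by
  unfold Fsum
  rw [Finset.mul_sum, ← Finset.sum_sub_distrib]
  apply Finset.sum_congr rfl
  intro ε _
  set w : α → ℝ := fun i => ∑ j, sg (ε j) * b i j with hw
  have hprod : ∀ x : ℝ, ∏ i, (Function.update A i0 x i - w i)⁻¹
      = (x - w i0)⁻¹ * ∏ i ∈ Finset.univ.erase i0, (A i - w i)⁻¹ := by
    intro x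
    rw [← Finset.mul_prod_erase Finset.univ _ (Finset.mem_univ i0)]
    simp only [Function.update_self]
    congr 1
    apply Finset.prod_congr rfl
    intro i hi
    rw [Function.update_of_ne (Finset.ne_of_mem_erase hi)]
  have hoption : ∏ o : Option α, ((fun o => Option.elim o a' (Function.update A i0 a)) o
        - ∑ j, sg (ε j) * (fun o => Option.elim o (b i0) b) o j)⁻¹
      = (a' - w i0)⁻¹ * ((a - w i0)⁻¹ * ∏ i ∈ Finset.univ.erase i0, (A i - w i)⁻¹) := by
    rw [Fintype.prod_option]
    simp only [Option.elim]
    rw [hprod a]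
  rw [hprod a', hprod a, hoption]
  have hwle : w i0 ≤ ∑ j, b i0 j := inner_le (b i0) hb ε
  have hx : a' - w i0 > 0 := by linarith
  have hy : a - w i0 > 0 := by linarith
  have key : (a' - w i0)⁻¹ - (a - w i0)⁻¹ = (a - a') * ((a' - w i0)⁻¹ * (a - w i0)⁻¹) := by
    field_simp
    ring
  linear_combination ((∏ j, sg (ε j)) * ∏ i ∈ Finset.univ.erase i0, (A i - w i)⁻¹) * key

lemma Fsum_congr_cols (α β γ : Type) [Fintype α] [Fintype β] [DecidableEq β]
    [Fintype γ] [DecidableEq γ] (e : β ≃ γ) (A : α → ℝ) (b : α → γ → ℝ) :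
    Fsum α γ A b = Fsum α β A (fun i j => b i (e j)) := by
  unfold Fsum
  rw [← Equiv.sum_comp (Equiv.arrowCongr e (Equiv.refl Bool))]
  apply Finset.sum_congr rfl
  intro ε _
  have h1 : ∀ j : γ, (Equiv.arrowCongr e (Equiv.refl Bool)) ε j = ε (e.symm j) := by
    intro j; simp [Equiv.arrowCongr]
  congr 1
  · rw [← Equiv.prod_comp e (fun j => sg ((Equiv.arrowCongr e (Equiv.refl Bool)) ε j))]
    apply Finset.prod_congr rfl
    intro j _; rw [h1]; simp
  · apply Finset.prod_congr rfl
    intro i _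
    congr 2
    rw [← Equiv.sum_comp e (fun j => sg ((Equiv.arrowCongr e (Equiv.refl Bool)) ε j) * b i j)]
    apply Finset.sum_congr rfl
    intro j _; rw [h1]; simp

lemma Fsum_option (α β : Type) [Fintype α] [Fintype β] [DecidableEq β]
    (A : α → ℝ) (b : α → Option β → ℝ) :
    Fsum α (Option β) A b
      = Fsum α β (fun i => A i - b i none) (fun i j => b i (some j))
        - Fsum α β (fun i => A i + b i none) (fun i j => b i (some j)) := by
  unfold Fsum
  rw [← Equiv.sum_comp (Equiv.piOptionEquivProd (β := fun _ : Option β => Bool)).symm]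
  rw [Fintype.sum_prod_type, Fintype.sum_bool, ← Finset.sum_add_distrib, ← Finset.sum_sub_distrib]
  apply Finset.sum_congr rfl
  intro ε _
  have hnone : ∀ t : Bool, (Equiv.piOptionEquivProd (β := fun _ : Option β => Bool)).symm (t, ε) none = t := by
    intro t; rfl
  have hsome : ∀ (t : Bool) (j : β), (Equiv.piOptionEquivProd (β := fun _ : Option β => Bool)).symm (t, ε) (some j) = ε j := by
    intro t j; rfl
  rw [Fintype.prod_option, Fintype.prod_option]
  simp only [hnone, hsome]
  have hsumo : ∀ (t : Bool) (i : α), ∑ j : Option β, sg ((Equiv.piOptionEquivProd (β := fun _ : Option β => Bool)).symm (t, ε) j) * b i j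
      = sg t * b i none + ∑ j : β, sg (ε j) * b i (some j) := by
    intro t i
    rw [Fintype.sum_option]
    simp only [hnone, hsome]
  simp only [hsumo]
  have h1 : ∀ i : α, A i - (sg true * b i none + ∑ j : β, sg (ε j) * b i (some j))
      = (A i - b i none) - ∑ j : β, sg (ε j) * b i (some j) := by
    intro i; simp [sg]; ring
  have h2 : ∀ i : α, A i - (sg false * b i none + ∑ j : β, sg (ε j) * b i (some j))
      = (A i + b i none) - ∑ j : β, sg (ε j) * b i (some j) := by
    intro i; simp [sg]; ring
  simp only [h1, h2]
  rw [show sg true = (1:ℝ) from rfl, show sg false = (-1:ℝ) from by simp [sg]]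
  ring

section Chain
variable (α β : Type) [Fintype α] [DecidableEq α] [Fintype β] [DecidableEq β]

lemma Fsum_chain
    (hP : ∀ (α' : Type) (_ : Fintype α') (A' : α' → ℝ) (b' : α' → β → ℝ),
      (∀ i j, 0 ≤ b' i j) → (∀ i, ∑ j, b' i j < A' i) → (∀ j, ∃ i, 0 < b' i j) →
      0 < Fsum α' β A' b')
    (A v : α → ℝ) (b : α → β → ℝ) (hb : ∀ i j, 0 ≤ b i j) (hv : ∀ i, 0 ≤ v i)
    (hA : ∀ i, ∑ j, b i j < A i - v i) (hcov : ∀ j, ∃ i, 0 < b i j)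
    (i0 : α) (hv0 : 0 < v i0) :
    Fsum α β (fun i => A i + v i) b < Fsum α β (fun i => A i - v i) b := by
  set D : Finset α → ℝ := fun s => Fsum α β (fun i => if i ∈ s then A i - v i else A i + v i) b with hD
  have hstep : ∀ (s : Finset α) (i1 : α), i1 ∉ s →
      D (insert i1 s) - D s = 2 * v i1 *
        Fsum (Option α) β
          (fun o => o.elim (A i1 - v i1)
            (Function.update (fun i => if i ∈ s then A i - v i else A i + v i) i1 (A i1 + v i1)))
          (fun o => o.elim (b i1) b) := by
    intro s i1 hi1
    have hχins : (fun i => if i ∈ insert i1 s then A i - v i else A i + v i)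
        = Function.update (fun i => if i ∈ s then A i - v i else A i + v i) i1 (A i1 - v i1) := by
      funext i
      by_cases h : i = i1
      · subst h; simp [hi1]
      · simp [Function.update_of_ne h, Finset.mem_insert, h]
    have hχs : (fun i => if i ∈ s then A i - v i else A i + v i)
        = Function.update (fun i => if i ∈ s then A i - v i else A i + v i) i1 (A i1 + v i1) := by
      funext i
      by_cases h : i = i1
      · subst h; simp [hi1]
      · simp [Function.update_of_ne h]
    have := Fsum_update_sub α β (fun i => if i ∈ s then A i - v i else A i + v i) b i1
      (A i1 + v i1) (A i1 - v i1) (hb i1) (by have := hA i1; have := hv i1; linarith)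
      (by have := hA i1; linarith)
    rw [hD]
    simp only []
    rw [hχins]
    nth_rewrite 2 [hχs]
    rw [this]
    ring
  have hFpos : ∀ (s : Finset α) (i1 : α),
      0 < Fsum (Option α) β
          (fun o => o.elim (A i1 - v i1)
            (Function.update (fun i => if i ∈ s then A i - v i else A i + v i) i1 (A i1 + v i1)))
          (fun o => o.elim (b i1) b) := by
    intro s i1
    apply hP (Option α) inferInstance
    · rintro (_ | i) j
      · exact hb i1 j
      · exact hb i j
    · rintro (_ | i)
      · exact hA i1
      · simp only [Option.elim]
        by_cases h : i = i1
        · subst h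
          rw [Function.update_self]
          have := hA i; have := hv i; linarith
        · rw [Function.update_of_ne h]
          by_cases h2 : i ∈ s <;> simp only [h2, if_true, if_false] <;>
            [skip; skip] <;> (have := hA i; have := hv i; linarith)
    · intro j
      obtain ⟨i, hi⟩ := hcov j
      exact ⟨some i, hi⟩
  have hmono : ∀ s : Finset α, D ∅ ≤ D s := by
    intro s
    induction s using Finset.induction_on with
    | empty => exact le_refl _
    | @insert i1 s hi ih =>
      have h := hstep s i1 hi
      have hF := hFpos s i1
      nlinarith [hv i1]
  have hχempty : D ∅ = Fsum α β (fun i => A i + v i) b := by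
    rw [hD]; simp
  have hχuniv : D Finset.univ = Fsum α β (fun i => A i - v i) b := by
    rw [hD]; simp
  have h1 : D (Finset.univ.erase i0) < D Finset.univ := by
    have h := hstep (Finset.univ.erase i0) i0 (Finset.notMem_erase i0 _)
    rw [Finset.insert_erase (Finset.mem_univ i0)] at h
    have hF := hFpos (Finset.univ.erase i0) i0
    nlinarith
  have h2 := hmono (Finset.univ.erase i0)
  rw [← hχempty, ← hχuniv]
  linarith

end Chain

lemma Fsum_irrel (α β : Type) [Fintype α] [Fintype β] (d1 d2 : DecidableEq β)
    (A : α → ℝ) (b : α → β → ℝ) :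
    @Fsum α β _ _ d1 A b = @Fsum α β _ _ d2 A b := by
  obtain rfl := Subsingleton.elim d1 d2
  rfl

theorem Fsum_pos_aux : ∀ (β : Type) (instβ : Fintype β),
    ∀ (α : Type) (instα : Fintype α) (A : α → ℝ) (b : α → β → ℝ),
    (∀ i j, 0 ≤ b i j) → (∀ i, ∑ j, b i j < A i) → (∀ j, ∃ i, 0 < b i j) →
    0 < @Fsum α β instα instβ (Classical.decEq β) A b := by
  intro β instβ
  refine Fintype.induction_empty_option
    (P := fun γ instγ => ∀ (α : Type) (instα : Fintype α)
      (A : α → ℝ) (b : α → γ → ℝ),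
      (∀ i j, 0 ≤ b i j) → (∀ i, ∑ j, b i j < A i) → (∀ j, ∃ i, 0 < b i j) →
      0 < @Fsum α γ instα instγ (Classical.decEq γ) A b)
    ?_ ?_ ?_ β
  case refine_1 =>
    intro α' β' instβ' e ih
    intro α instα A b hb hA hcov
    letI : Fintype α' := Fintype.ofEquiv β' e.symm
    rw [@Fsum_congr_cols α α' β' instα (Fintype.ofEquiv β' e.symm) (Classical.decEq α')
      instβ' (Classical.decEq β') e A b]
    apply ih α instα
    · intro i j; exact hb i (e j)
    · intro i
      calc ∑ j : α', b i (e j) = ∑ j : β', b i j := Equiv.sum_comp e _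
      _ < A i := hA i
    · intro j
      exact hcov (e j)
  case refine_2 =>
    intro α instα A b hb hA hcov
    unfold Fsum
    haveI : Unique (PEmpty → Bool) := ⟨⟨fun x => x.elim⟩, fun f => funext fun x => x.elim⟩
    rw [Fintype.sum_unique]
    simp only [Finset.univ_eq_empty, Finset.prod_empty, Finset.sum_empty, sub_zero, one_mul]
    apply Finset.prod_pos
    intro i _
    rw [inv_pos]
    have := hA i
    simpa using this
  case refine_3 =>
    intro α' insto ih
    intro α instα A b hb hA hcov
    haveI instd' : DecidableEq α' := Classical.decEq α'
    rw [Fsum_irrel α (Option α') (Classical.decEq (Option α')) inferInstance]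
    rw [Fsum_option]
    rw [sub_pos]
    haveI : DecidableEq α := Classical.decEq α
    obtain ⟨i0, hi0⟩ := hcov none
    apply Fsum_chain α α'
      (fun α'' i A' b' hb' hA' hcov' => by
        rw [Fsum_irrel α'' α' _ (Classical.decEq α')]
        exact ih α'' i A' b' hb' hA' hcov')
      A (fun i => b i none) (fun i j => b i (some j))
      (fun i j => hb i (some j)) (fun i => hb i none)
      (fun i => by
        have := hA i
        rw [Fintype.sum_option] at this
        linarith)
      (fun j => hcov (some j)) i0 hi0


theorem Fsum_pos (α β : Type) [Fintype α] [Fintype β] [DecidableEq β] (A : α → ℝ) (b : α → β → ℝ)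
    (hb : ∀ i j, 0 ≤ b i j) (hA : ∀ i, ∑ j, b i j < A i) (hcov : ∀ j, ∃ i, 0 < b i j) :
    0 < Fsum α β A b := by
  rw [Fsum_irrel α β _ (Classical.decEq β)]
  exact Fsum_pos_aux β _ α _ A b hb hA hcov

lemma sg_le_one' (b : Bool) : sg b ≤ 1 := by cases b <;> simp [sg]

/-- The paper's Lemma lem:Linxiao: the rational function
`φ(z) = ∑_{ε ∈ {−1,1}^n} (ε₁⋯εₙ)·∏ᵢ (ιᵢ − ⟨ε,cᵢ⟩z)⁻¹` has a pole of order exactly `μ₀`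
at `z = ι₀/2` with strictly positive leading Laurent coefficient: there is `L > 0` with
`(1 − 2z/ι₀)^{μ₀}·φ(z) → L` as `z → ι₀/2` along real `z < ι₀/2`. -/
theorem principal_singularity_survives
    (n r : ℕ) (hn : 1 ≤ n) (hr : 1 ≤ r)
    (ι : Fin r → ℕ) (hι : ∀ i, 1 ≤ ι i)
    (c : Fin r → Fin n → ℕ)
    (hc2 : ∀ i j, c i j ≤ 2)
    (hrow : ∀ i, ∑ j, c i j = 2)
    (hcol : ∀ j, 0 < ∑ i, c i j)
    (ι0 : ℕ) (hι0 : IsLeast (Set.range ι) ι0)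
    (μ0 : ℕ) (hμ0 : μ0 = (Finset.univ.filter fun i => ι i = ι0).card)
    (φ : ℝ → ℝ)
    (hφ : φ = fun z : ℝ =>
      ∑ ε : Fin n → Bool,
        (∏ j, sg (ε j)) *
          ∏ i, ((ι i : ℝ) - (∑ j, sg (ε j) * (c i j : ℝ)) * z)⁻¹) :
    ∃ L : ℝ, 0 < L ∧
      Tendsto (fun z : ℝ => (1 - 2 * z / (ι0 : ℝ)) ^ μ0 * φ z)
        (nhdsWithin ((ι0 : ℝ) / 2) (Set.Iio ((ι0 : ℝ) / 2))) (nhds L) := by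
  classical
  obtain ⟨hι0mem, hleast⟩ := hι0
  obtain ⟨imin, himin⟩ := hι0mem
  have hι0ge1 : 1 ≤ ι0 := himin ▸ hι imin
  have hι0le : ∀ i, ι0 ≤ ι i := fun i => hleast ⟨i, rfl⟩
  have hι0pos : (0:ℝ) < (ι0:ℝ) := by exact_mod_cast hι0ge1
  set z0 : ℝ := (ι0:ℝ)/2 with hz0
  have hz0pos : 0 < z0 := by positivity
  set W : (Fin n → Bool) → Fin r → ℝ := fun ε i => ∑ j, sg (ε j) * (c i j : ℝ) with hW
  set pS : Fin n → Prop := fun j => ∃ i, ι i = ι0 ∧ 0 < c i j with hpS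
  set M : Finset (Fin r) := Finset.univ.filter (fun i => ι i = ι0) with hM
  set B : (Fin n → Bool) → Finset (Fin r) :=
    fun ε => Finset.univ.filter (fun i => ι i = ι0 ∧ W ε i = 2) with hB
  have hcard_M : M.card = μ0 := hμ0.symm
  have hcsum : ∀ i, ∑ j, (c i j : ℝ) = 2 := by
    intro i
    rw [← Nat.cast_sum, hrow i]
    norm_num
  have hWle : ∀ ε i, W ε i ≤ 2 := by
    intro ε i
    calc W ε i ≤ ∑ j, (c i j : ℝ) := by
          apply Finset.sum_le_sum
          intro j _
          have h1 := sg_le_one' (ε j)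
          have h0 : (0:ℝ) ≤ (c i j : ℝ) := by positivity
          nlinarith
      _ = 2 := hcsum i
  have hWeq2 : ∀ ε i, W ε i = 2 ↔ ∀ j, 0 < c i j → ε j = true := by
    intro ε i
    have hsub : (2:ℝ) - W ε i = ∑ j, (1 - sg (ε j)) * (c i j : ℝ) := by
      simp only [sub_mul, one_mul]
      rw [Finset.sum_sub_distrib, hcsum i, hW]
    have hterm_nonneg : ∀ j : Fin n, j ∈ Finset.univ → 0 ≤ (1 - sg (ε j)) * (c i j : ℝ) := by
      intro j _
      have h1 := sg_le_one' (ε j)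
      have h0 : (0:ℝ) ≤ (c i j : ℝ) := by positivity
      nlinarith
    constructor
    · intro h2 j hcj
      by_contra hne
      have hfalse : ε j = false := by
        cases hεj : ε j
        · rfl
        · exact absurd hεj hne
      have : (0:ℝ) < (1 - sg (ε j)) * (c i j : ℝ) := by
        rw [hfalse]
        have : (0:ℝ) < (c i j : ℝ) := by exact_mod_cast hcj
        simp [sg]
        linarith
      have hlt : (0:ℝ) < (2:ℝ) - W ε i := by
        rw [hsub]
        apply Finset.sum_pos' hterm_nonneg ⟨j, Finset.mem_univ j, this⟩
      linarith [h2]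
    · intro hall
      have : (2:ℝ) - W ε i = 0 := by
        rw [hsub]
        apply Finset.sum_eq_zero
        intro j _
        by_cases hcj : 0 < c i j
        · rw [hall j hcj, show sg true = (1:ℝ) from rfl]
          ring
        · have : c i j = 0 := Nat.eq_zero_of_not_pos hcj
          rw [this]
          simp
      linarith
  -- pole factor positivity off B
  have hfac_pos : ∀ (ε : Fin n → Bool) (i : Fin r), ¬(ι i = ι0 ∧ W ε i = 2) →
      0 < (ι i : ℝ) - W ε i * z0 := by
    intro ε i hni
    have hWi := hWle ε i
    by_cases hmin : ι i = ι0
    · have hWne : W ε i ≠ 2 := fun h => hni ⟨hmin, h⟩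
      have hWlt : W ε i < 2 := lt_of_le_of_ne hWi hWne
      rw [hmin]
      have : W ε i * z0 < 2 * z0 := by
        apply mul_lt_mul_of_pos_right hWlt hz0pos
      have h2z0 : 2 * z0 = (ι0:ℝ) := by rw [hz0]; ring
      linarith
    · have hgt : ι0 < ι i := lt_of_le_of_ne (hι0le i) (Ne.symm hmin)
      have hgtR : (ι0:ℝ) < (ι i:ℝ) := by exact_mod_cast hgt
      have : W ε i * z0 ≤ 2 * z0 := by nlinarith
      have h2z0 : 2 * z0 = (ι0:ℝ) := by rw [hz0]; ring
      linarith
  -- factor positivity for z ∈ (-∞, z0), for ALL i (used implicitly); only need i ∈ B handled separately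
  have hBsubM : ∀ ε, B ε ⊆ M := by
    intro ε
    rw [hB, hM]
    intro i hi
    rw [Finset.mem_filter] at hi ⊢
    exact ⟨hi.1, hi.2.1⟩
  set good : (Fin n → Bool) → Prop := fun ε => ∀ j, pS j → ε j = true with hgoodd
  have hgoodB : ∀ ε, good ε → B ε = M := by
    intro ε hg
    apply Finset.Subset.antisymm (hBsubM ε)
    intro i hi
    rw [hM, Finset.mem_filter] at hi
    rw [hB, Finset.mem_filter]
    refine ⟨Finset.mem_univ i, hi.2, ?_⟩
    rw [hWeq2]
    intro j hcj
    exact hg j ⟨i, hi.2, hcj⟩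
  have hbadB : ∀ ε, ¬ good ε → (B ε).card < μ0 := by
    intro ε hg
    rw [← hcard_M]
    apply Finset.card_lt_card
    rw [Finset.ssubset_iff_of_subset (hBsubM ε)]
    have hg' : ¬ ∀ j, pS j → ε j = true := hg
    push_neg at hg'
    obtain ⟨j, hjS, hjf⟩ := hg'
    obtain ⟨i, hiι, hcij⟩ := hjS
    refine ⟨i, ?_, ?_⟩
    · rw [hM, Finset.mem_filter]; exact ⟨Finset.mem_univ i, hiι⟩
    · rw [hB, Finset.mem_filter]
      rintro ⟨-, -, hW2⟩
      rw [hWeq2] at hW2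
      exact hjf (hW2 j hcij)
  have hcardB_le : ∀ ε, (B ε).card ≤ μ0 := by
    intro ε
    rw [← hcard_M]
    exact Finset.card_le_card (hBsubM ε)
  -- per-ε data
  set Bc : (Fin n → Bool) → Finset (Fin r) :=
    fun ε => Finset.univ.filter (fun i => ¬(ι i = ι0 ∧ W ε i = 2)) with hBc
  set Q : (Fin n → Bool) → ℝ → ℝ :=
    fun ε z => ∏ i ∈ Bc ε, ((ι i : ℝ) - W ε i * z)⁻¹ with hQ
  set C : (Fin n → Bool) → ℝ := fun ε => (∏ j, sg (ε j)) * ((ι0:ℝ)^μ0)⁻¹ with hC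
  set g : (Fin n → Bool) → ℝ → ℝ :=
    fun ε z => C ε * ((ι0:ℝ) - 2*z)^(μ0 - (B ε).card) * Q ε z with hg
  set Lε : (Fin n → Bool) → ℝ := fun ε =>
    if good ε then C ε * Q ε z0 else 0 with hLε
  -- the algebraic identity on Iio z0
  have hident : ∀ (ε : Fin n → Bool) (z : ℝ), z < z0 →
      (1 - 2 * z / (ι0 : ℝ)) ^ μ0 *
        ((∏ j, sg (ε j)) * ∏ i, ((ι i : ℝ) - W ε i * z)⁻¹) = g ε z := by
    intro ε z hz
    have hnz : (ι0:ℝ) - 2*z ≠ 0 := by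
      have : 2*z < 2*z0 := by linarith
      have h2z0 : 2 * z0 = (ι0:ℝ) := by rw [hz0]; ring
      intro h; rw [sub_eq_zero] at h; linarith
    have hsplit : ∏ i, ((ι i : ℝ) - W ε i * z)⁻¹
        = (∏ i ∈ B ε, ((ι i : ℝ) - W ε i * z)⁻¹) * Q ε z := by
      rw [hQ, hB, hBc]
      simp only []
      exact (Finset.prod_filter_mul_prod_filter_not Finset.univ
        (fun i => ι i = ι0 ∧ W ε i = 2) _).symm
    have hBconst : ∏ i ∈ B ε, ((ι i : ℝ) - W ε i * z)⁻¹
        = (((ι0:ℝ) - 2*z)⁻¹) ^ (B ε).card := by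
      rw [← Finset.prod_const]
      apply Finset.prod_congr rfl
      intro i hi
      rw [hB, Finset.mem_filter] at hi
      rw [hi.2.1, hi.2.2]
    have hone : (1 - 2 * z / (ι0 : ℝ)) = ((ι0:ℝ) - 2*z) / (ι0:ℝ) := by
      field_simp
    rw [hsplit, hBconst, hone, hg]
    simp only []
    rw [hC]
    have hpow : (((ι0:ℝ) - 2*z) / (ι0:ℝ))^μ0 = ((ι0:ℝ) - 2*z)^μ0 * ((ι0:ℝ)^μ0)⁻¹ := by
      rw [div_pow, div_eq_mul_inv]
    have hpowsub : ((ι0:ℝ) - 2*z)^(μ0 - (B ε).card)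
        = ((ι0:ℝ) - 2*z)^μ0 * (((ι0:ℝ) - 2*z)^(B ε).card)⁻¹ := by
      rw [pow_sub₀ _ hnz (hcardB_le ε)]
    rw [hpow, hpowsub, inv_pow]
    ring
  have h2z0 : 2 * z0 = (ι0:ℝ) := by rw [hz0]; ring
  have htlin : Tendsto (fun z : ℝ => (ι0:ℝ) - 2*z) (nhdsWithin z0 (Iio z0)) (nhds 0) := by
    have hc : Continuous fun z : ℝ => (ι0:ℝ) - 2*z := continuous_const.sub (continuous_const.mul continuous_id)
    have h0 : (ι0:ℝ) - 2*z0 = 0 := by linarith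
    have := (hc.tendsto z0).mono_left (nhdsWithin_le_nhds (s := Iio z0))
    rwa [h0] at this
  have htQ : ∀ ε, Tendsto (Q ε) (nhdsWithin z0 (Iio z0)) (nhds (Q ε z0)) := by
    intro ε
    rw [hQ]
    simp only []
    apply tendsto_finset_prod
    intro i hi
    rw [hBc, Finset.mem_filter] at hi
    have hne : (ι i : ℝ) - W ε i * z0 ≠ 0 := ne_of_gt (hfac_pos ε i hi.2)
    have hc : Continuous fun z : ℝ => (ι i : ℝ) - W ε i * z := continuous_const.sub (continuous_const.mul continuous_id)
    exact (((hc.tendsto z0).inv₀ hne).mono_left (nhdsWithin_le_nhds (s := Iio z0)))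
  have htg : ∀ ε, Tendsto (g ε) (nhdsWithin z0 (Iio z0)) (nhds (Lε ε)) := by
    intro ε
    by_cases hgd : good ε
    · have hBM : (B ε).card = μ0 := by rw [hgoodB ε hgd, hcard_M]
      have hexp : μ0 - (B ε).card = 0 := by omega
      have hLval : Lε ε = C ε * Q ε z0 := by rw [hLε]; simp only [if_pos hgd]
      rw [hg, hLval]
      simp only [hexp, pow_zero, mul_one]
      exact tendsto_const_nhds.mul (htQ ε)
    · have hlt := hbadB ε hgd
      have hexp : μ0 - (B ε).card ≠ 0 := by omega
      have hLval : Lε ε = 0 := by rw [hLε]; simp only [if_neg hgd]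
      rw [hg, hLval]
      have hpow : Tendsto (fun z : ℝ => ((ι0:ℝ) - 2*z) ^ (μ0 - (B ε).card))
          (nhdsWithin z0 (Iio z0)) (nhds 0) := by
        have := htlin.pow (μ0 - (B ε).card)
        rwa [zero_pow hexp] at this
      have h := (tendsto_const_nhds (x := C ε)).mul (hpow.mul (htQ ε))
      rw [show C ε * (0 * Q ε z0) = 0 by ring] at h
      apply h.congr
      intro z
      ring
  set L : ℝ := ∑ ε : Fin n → Bool, Lε ε with hL
  have htsum : Tendsto (fun z => ∑ ε : Fin n → Bool, g ε z)
      (nhdsWithin z0 (Iio z0)) (nhds L) := by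
    rw [hL]
    exact tendsto_finset_sum _ (fun ε _ => htg ε)
  have hmain : Tendsto (fun z : ℝ => (1 - 2 * z / (ι0 : ℝ)) ^ μ0 * φ z)
      (nhdsWithin z0 (Iio z0)) (nhds L) := by
    apply htsum.congr'
    filter_upwards [self_mem_nhdsWithin] with z hz
    rw [hφ]
    simp only []
    rw [Finset.mul_sum]
    exact (Finset.sum_congr rfl fun ε _ => hident ε z hz).symm
  refine ⟨L, ?_, hmain⟩
  -- Positivity of L
  have hgoodBc : ∀ ε, good ε → Bc ε = Finset.univ.filter (fun i => ¬ ι i = ι0) := by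
    intro ε hgd
    rw [hBc]
    apply Finset.filter_congr
    intro i _
    constructor
    · intro hni hii
      exact hni ⟨hii, (hWeq2 ε i).mpr (fun j hcj => hgd j ⟨i, hii, hcj⟩)⟩
    · rintro hni ⟨hii, -⟩
      exact hni hii
  -- set up the Fsum instance
  set Mc : Finset (Fin r) := Finset.univ.filter (fun i => ¬ ι i = ι0) with hMc
  set Sc : Finset (Fin n) := Finset.univ.filter (fun j => ¬ pS j) with hSc
  let α' : Type := {x // x ∈ Mc}
  let β' : Type := {x // x ∈ Sc}
  have hmemMc : ∀ i : Fin r, i ∈ Mc ↔ ¬ ι i = ι0 := by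
    intro i; rw [hMc, Finset.mem_filter]; simp
  have hmemSc : ∀ j : Fin n, j ∈ Sc ↔ ¬ pS j := by
    intro j; rw [hSc, Finset.mem_filter]; simp
  let A' : α' → ℝ := fun i => (ι i.1 : ℝ) - (∑ j ∈ Finset.univ.filter pS, (c i.1 j : ℝ)) * z0
  let b' : α' → β' → ℝ := fun i j => (c i.1 j.1 : ℝ) * z0
  have hsum_split : ∀ (f : Fin n → ℝ),
      ∑ j, f j = (∑ j ∈ Finset.univ.filter pS, f j) + ∑ j : β', f j.1 := by
    intro f
    rw [← Finset.sum_filter_add_sum_filter_not Finset.univ pS f]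
    congr 1
    exact (Finset.sum_coe_sort Sc f).symm
  have hprod_split : ∀ (f : Fin n → ℝ),
      ∏ j, f j = (∏ j ∈ Finset.univ.filter pS, f j) * ∏ j : β', f j.1 := by
    intro f
    rw [← Finset.prod_filter_mul_prod_filter_not Finset.univ pS f]
    congr 1
    exact (Finset.prod_coe_sort Sc f).symm
  have hprodMc : ∀ (f : Fin r → ℝ),
      ∏ i ∈ Mc, f i = ∏ i : α', f i.1 := fun f => (Finset.prod_coe_sort Mc f).symm
  have hrow' : ∀ i : α',
      (∑ j ∈ Finset.univ.filter pS, (c i.1 j : ℝ)) + ∑ j : β', (c i.1 j.1 : ℝ) = 2 := by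
    intro i
    rw [← hsum_split (fun j => (c i.1 j : ℝ))]
    exact hcsum i.1
  have hFpos : 0 < Fsum α' β' A' b' := by
    apply Fsum_pos
    · intro i j
      have : (0:ℝ) ≤ (c i.1 j.1 : ℝ) := by positivity
      positivity
    · intro i
      have hii : ι0 < ι i.1 := lt_of_le_of_ne (hι0le i.1) (fun h => ((hmemMc i.1).mp i.2) h.symm)
      have hiiR : (ι0:ℝ) < (ι i.1:ℝ) := by exact_mod_cast hii
      have hsum2 := hrow' i
      have hbs : ∑ j : β', b' i j = (∑ j : β', (c i.1 j.1 : ℝ)) * z0 := by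
        rw [Finset.sum_mul]
      rw [hbs]
      show (∑ j : β', (c i.1 j.1 : ℝ)) * z0
        < (ι i.1 : ℝ) - (∑ j ∈ Finset.univ.filter pS, (c i.1 j : ℝ)) * z0
      nlinarith
    · intro j
      have hex : ∃ i, 0 < c i j.1 := by
        by_contra hno
        push_neg at hno
        have hz : ∑ i, c i j.1 = 0 := Finset.sum_eq_zero fun i _ => Nat.le_zero.mp (hno i)
        have := hcol j.1
        omega
      obtain ⟨i, hi⟩ := hex
      have hiι : ¬ ι i = ι0 := fun h => ((hmemSc j.1).mp j.2) ⟨i, h, hi⟩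
      refine ⟨⟨i, (hmemMc i).mpr hiι⟩, ?_⟩
      show 0 < (c i j.1 : ℝ) * z0
      have : (0:ℝ) < (c i j.1 : ℝ) := by exact_mod_cast hi
      positivity
  have hgood_of_mem : ∀ ε ∈ Finset.univ.filter good, good ε := by
    intro ε hε; exact (Finset.mem_filter.mp hε).2
  have hbij2 : ∑ ε ∈ Finset.univ.filter good, (∏ j, sg (ε j)) * Q ε z0
      = Fsum α' β' A' b' := by
    unfold Fsum
    apply Finset.sum_nbij' (fun ε => fun j : β' => ε j.1)
      (fun η => fun jj : Fin n => if h : jj ∈ Sc then η ⟨jj, h⟩ else true)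
    · intro ε _; exact Finset.mem_univ _
    · intro η _
      rw [Finset.mem_filter]
      refine ⟨Finset.mem_univ _, ?_⟩
      intro jj hpjj
      have hnot : ¬ jj ∈ Sc := fun h => ((hmemSc jj).mp h) hpjj
      simp [hnot]
    · intro ε hε
      funext jj
      by_cases h : jj ∈ Sc
      · simp [h]
      · simp only [dif_neg h]
        have hpjj : pS jj := by
          by_contra hc
          exact h ((hmemSc jj).mpr hc)
        exact (hgood_of_mem ε hε jj hpjj).symm
    · intro η _
      funext j
      simp only [dif_pos j.2]
      rfl
    · intro ε hε
      have hgd := hgood_of_mem ε hε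
      have ha : ∏ j, sg (ε j) = ∏ j : β', sg (ε j.1) := by
        rw [hprod_split (fun j => sg (ε j))]
        have h1 : ∏ j ∈ Finset.univ.filter pS, sg (ε j) = 1 := by
          apply Finset.prod_eq_one
          intro j hj
          rw [Finset.mem_filter] at hj
          rw [hgd j hj.2]
          rfl
        rw [h1, one_mul]
      have hWsplit : ∀ i : α', W ε i.1
          = (∑ j ∈ Finset.univ.filter pS, (c i.1 j : ℝ)) + ∑ j : β', sg (ε j.1) * (c i.1 j.1 : ℝ) := by
        intro i
        rw [hW]
        simp only []
        rw [hsum_split (fun j => sg (ε j) * (c i.1 j : ℝ))]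
        congr 1
        apply Finset.sum_congr rfl
        intro j hj
        rw [Finset.mem_filter] at hj
        rw [hgd j hj.2]
        simp [sg]
      have hb : Q ε z0 = ∏ i : α', (A' i - ∑ j : β', sg (ε j.1) * b' i j)⁻¹ := by
        rw [hQ]
        simp only []
        have : Bc ε = Mc := by rw [hgoodBc ε hgd, hMc]
        rw [this, hprodMc (fun i => ((ι i : ℝ) - W ε i * z0)⁻¹)]
        apply Finset.prod_congr rfl
        intro i _
        congr 1
        rw [hWsplit i]
        have hsb : ∑ j : β', sg (ε j.1) * b' i j
            = (∑ j : β', sg (ε j.1) * (c i.1 j.1 : ℝ)) * z0 := by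
          rw [Finset.sum_mul]
          apply Finset.sum_congr rfl
          intro j _
          show sg (ε j.1) * ((c i.1 j.1 : ℝ) * z0) = sg (ε j.1) * (c i.1 j.1 : ℝ) * z0
          ring
        rw [hsb]
        show (ι i.1 : ℝ)
            - ((∑ j ∈ Finset.univ.filter pS, (c i.1 j : ℝ)) + ∑ j : β', sg (ε j.1) * (c i.1 j.1 : ℝ)) * z0
          = (ι i.1 : ℝ) - (∑ j ∈ Finset.univ.filter pS, (c i.1 j : ℝ)) * z0
            - (∑ j : β', sg (ε j.1) * (c i.1 j.1 : ℝ)) * z0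
        ring
      rw [ha, hb]
  have hLeq : L = ((ι0:ℝ)^μ0)⁻¹ * Fsum α' β' A' b' := by
    rw [hL, hLε]
    simp only []
    rw [← Finset.sum_filter, ← hbij2, Finset.mul_sum]
    apply Finset.sum_congr rfl
    intro ε _
    rw [hC]
    ring
  rw [hLeq]
  have hipos : (0:ℝ) < ((ι0:ℝ)^μ0)⁻¹ := by positivity
  exact mul_pos hipos hFpos
end

section
/- The rational function ψ(w) = w^{μ_0}·φ(ι_0(1 − w)/2) has no pole at w = 0, and there is a constant C depending only on n, r and ι_0 (one may take C = 2^n·binom(2r−2, r−1)·(ι_0·(ι_0+1)²)^r) such that |ψ^{(j)}(0)/j!| ≤ C·∏_{i=1}^r ι_i^{−1} for every 0 ≤ j ≤ μ_0 − 1. Equivalently, every Laurent coefficient of φ at z = ι_0/2 of negative order −m with 1 ≤ m ≤ μ_0 is bounded in absolute value by C·∏_{i=1}^r ι_i^{−1}; by the parity φ(−z) = (−1)^n·φ(z), the same bounds hold for the Laurent coefficients at z = −ι_0/2. -/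
open Real Set Filter

/-- iterated derivative (within an open set) of `(a+bw)⁻¹`. -/
lemma iterDeriv_affine_inv {a b : ℝ} {s : Set ℝ} (hs : IsOpen s)
    (hne : ∀ w ∈ s, a + b * w ≠ 0) :
    ∀ (m : ℕ), ∀ x ∈ s, iteratedDerivWithin m (fun w => (a + b * w)⁻¹) s x
      = (-1) ^ m * (Nat.factorial m : ℝ) * b ^ m * ((a + b * x) ^ (m + 1))⁻¹ := by
  intro m
  induction m with
  | zero => intro x hx; simp
  | succ m IH =>
    intro x hx
    rw [iteratedDerivWithin_succ]
    rw [derivWithin_of_isOpen hs hx]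
    have hev : iteratedDerivWithin m (fun w => (a + b * w)⁻¹) s
        =ᶠ[nhds x] fun y => (-1) ^ m * (Nat.factorial m : ℝ) * b ^ m * ((a + b * y) ^ (m + 1))⁻¹ := by
      filter_upwards [hs.mem_nhds hx] with y hy using IH y hy
    rw [hev.deriv_eq]
    have hu : HasDerivAt (fun y : ℝ => a + b * y) b x := by
      simpa using ((hasDerivAt_id x).const_mul b).const_add a
    have hpow : HasDerivAt (fun y : ℝ => (a + b * y) ^ (m + 1))
        (((m : ℝ) + 1) * (a + b * x) ^ m * b) x := by
      simpa using hu.fun_pow (m + 1)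
    have hne' : (a + b * x) ^ (m + 1) ≠ 0 := pow_ne_zero _ (hne x hx)
    have hinv : HasDerivAt (fun y : ℝ => ((a + b * y) ^ (m + 1))⁻¹)
        (-(((m : ℝ) + 1) * (a + b * x) ^ m * b) / ((a + b * x) ^ (m + 1)) ^ 2) x :=
      hpow.inv hne'
    rw [(hinv.const_mul ((-1 : ℝ) ^ m * (Nat.factorial m : ℝ) * b ^ m)).deriv]
    have h0 : a + b * x ≠ 0 := hne x hx
    rw [Nat.factorial_succ]
    push_cast
    field_simp
    ring

/-- iterated derivative of a monomial. -/
lemma iterDeriv_const_pow (C : ℝ) (p : ℕ) :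
    ∀ (l : ℕ), iteratedDeriv l (fun x : ℝ => C * x ^ p)
      = fun x => C * (p.descFactorial l : ℝ) * x ^ (p - l) := by
  intro l
  induction l with
  | zero => simp
  | succ l IH =>
    rw [iteratedDeriv_succ, IH]
    funext x
    rw [deriv_const_mul _ (differentiable_pow _ |>.differentiableAt)]
    rw [deriv_pow_field]
    rw [Nat.descFactorial_succ]
    rcases le_or_gt p l with h | h
    · have h1 : p - l = 0 := Nat.sub_eq_zero_of_le h
      have h2 : p - (l + 1) = 0 := Nat.sub_eq_zero_of_le (by omega)
      have h3 : p.descFactorial l * (p - l) = 0 := by rw [h1]; ring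
      rw [h1, h2]
      push_cast [h3]
      ring
    · have h2 : p - l - 1 = p - (l + 1) := by omega
      rw [h2]
      push_cast
      ring

lemma sym_count_sum {α : Type*} [DecidableEq α] {G : Finset α} {m : ℕ}
    (q : Sym α m) (hq : q ∈ G.sym m) :
    ∑ i ∈ G, Multiset.count i (q : Multiset α) = m := by
  have hsub : (q : Multiset α).toFinset ⊆ G := by
    intro a ha
    exact (Finset.mem_sym_iff.1 hq) a (by simpa [Sym.mem_coe] using Multiset.mem_toFinset.1 ha)
  rw [← Finset.sum_subset hsub (by
    intro x _ hx
    simpa [Multiset.count_eq_zero] using fun h => hx (Multiset.mem_toFinset.2 h))]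
  rw [Multiset.toFinset_sum_count_eq, Sym.card_coe]

lemma sym_multinomial_mul_prod_factorial {α : Type*} [DecidableEq α] {G : Finset α} {m : ℕ}
    (q : Sym α m) (hq : q ∈ G.sym m) :
    ((q : Multiset α).countPerms : ℕ) * ∏ i ∈ G, (Multiset.count i (q : Multiset α)).factorial
      = m.factorial := by
  have hsub : (q : Multiset α).toFinset ⊆ G := by
    intro a ha
    exact (Finset.mem_sym_iff.1 hq) a (by simpa [Sym.mem_coe] using Multiset.mem_toFinset.1 ha)
  have h1 : ∏ i ∈ G, (Multiset.count i (q : Multiset α)).factorial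
      = ∏ i ∈ (q : Multiset α).toFinset, (Multiset.count i (q : Multiset α)).factorial := by
    refine (Finset.prod_subset hsub ?_).symm
    intro x _ hx
    have : Multiset.count x (q : Multiset α) = 0 := by
      simpa [Multiset.count_eq_zero] using fun h => hx (Multiset.mem_toFinset.2 h)
    simp [this]
  have h2 : (q : Multiset α).countPerms
      = Nat.multinomial (q : Multiset α).toFinset (fun a => Multiset.count a (q : Multiset α)) := by
    rw [Multiset.countPerms, Finsupp.multinomial_eq, Multiset.toFinsupp_support]
    exact Nat.multinomial_congr (fun a _ => by simp)
  rw [h1, h2, mul_comm, Nat.multinomial_spec, Multiset.toFinset_sum_count_eq, Sym.card_coe]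

namespace LaurentAux

variable {n r : ℕ}

def sInt (c : Fin r → Fin n → ℕ) (ε : Fin n → Bool) (i : Fin r) : ℤ :=
  ∑ j, (if ε j then (c i j : ℤ) else -(c i j : ℤ))

lemma sum_sg_eq (c : Fin r → Fin n → ℕ) (ε : Fin n → Bool) (i : Fin r) :
    (∑ j, sg (ε j) * (c i j : ℝ)) = ((sInt c ε i : ℤ) : ℝ) := by
  rw [sInt]
  push_cast
  refine Finset.sum_congr rfl fun j _ => ?_
  by_cases h : ε j <;> simp [sg, h]

lemma sInt_le {c : Fin r → Fin n → ℕ} {i : Fin r} (hrow : ∑ j, c i j = 2) (ε : Fin n → Bool) :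
    sInt c ε i ≤ 2 := by
  have h1 : sInt c ε i ≤ ∑ j, (c i j : ℤ) := by
    refine Finset.sum_le_sum fun j _ => ?_
    by_cases h : ε j <;> simp [h] <;> positivity
  have h2 : (∑ j, (c i j : ℤ)) = 2 := by exact_mod_cast congrArg (Nat.cast : ℕ → ℤ) hrow
  omega

lemma neg_le_sInt {c : Fin r → Fin n → ℕ} {i : Fin r} (hrow : ∑ j, c i j = 2) (ε : Fin n → Bool) :
    -2 ≤ sInt c ε i := by
  have h1 : -∑ j, (c i j : ℤ) ≤ sInt c ε i := by
    rw [← Finset.sum_neg_distrib]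
    refine Finset.sum_le_sum fun j _ => ?_
    by_cases h : ε j <;> simp [h]
    all_goals positivity
  have h2 : (∑ j, (c i j : ℤ)) = 2 := by exact_mod_cast congrArg (Nat.cast : ℕ → ℤ) hrow
  omega

def bad (ι : Fin r → ℕ) (ι0 : ℕ) (c : Fin r → Fin n → ℕ) (ε : Fin n → Bool) : Finset (Fin r) :=
  Finset.univ.filter fun i => 2 * (ι i : ℤ) = sInt c ε i * ι0

noncomputable def aR (ι : Fin r → ℕ) (ι0 : ℕ) (c : Fin r → Fin n → ℕ) (ε : Fin n → Bool)
    (i : Fin r) : ℝ := (ι i : ℝ) - (sInt c ε i : ℝ) * ι0 / 2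

noncomputable def bR (ι0 : ℕ) (c : Fin r → Fin n → ℕ) (ε : Fin n → Bool) (i : Fin r) : ℝ :=
  (sInt c ε i : ℝ) * ι0 / 2

section facts

variable {ι : Fin r → ℕ} {ι0 : ℕ} {c : Fin r → Fin n → ℕ} {ε : Fin n → Bool} {i : Fin r}
-- integer facts
lemma bad_eq (h1ι0 : 1 ≤ ι0) (hle : ι0 ≤ ι i) (hS2 : sInt c ε i ≤ 2) (hbad : 2 * (ι i : ℤ) = sInt c ε i * ι0) :
    sInt c ε i = 2 ∧ ι i = ι0 := by
  have hI0 : (1 : ℤ) ≤ (ι0 : ℤ) := by exact_mod_cast h1ι0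
  have hII : (ι0 : ℤ) ≤ (ι i : ℤ) := by exact_mod_cast hle
  have h1 : sInt c ε i * ι0 ≤ 2 * ι0 := by
    apply mul_le_mul_of_nonneg_right hS2 (by omega)
  have hII0 : (ι i : ℤ) = ι0 := by omega
  have h3 : (sInt c ε i - 2) * ι0 = 0 := by
    rw [sub_mul]
    omega
  rcases mul_eq_zero.1 h3 with h | h
  · exact ⟨by omega, by exact_mod_cast hII0⟩
  · omega

lemma good_int (h1ι0 : 1 ≤ ι0) (hle : ι0 ≤ ι i) (hS2 : sInt c ε i ≤ 2) (hgood : 2 * (ι i : ℤ) ≠ sInt c ε i * ι0) :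
    1 ≤ 2 * (ι i : ℤ) - sInt c ε i * ι0 := by
  have hI0 : (1 : ℤ) ≤ (ι0 : ℤ) := by exact_mod_cast h1ι0
  have hII : (ι0 : ℤ) ≤ (ι i : ℤ) := by exact_mod_cast hle
  have h1 : sInt c ε i * ι0 ≤ 2 * ι0 := by
    apply mul_le_mul_of_nonneg_right hS2 (by omega)
  omega

lemma good_int2 (h1ι0 : 1 ≤ ι0) (hle : ι0 ≤ ι i) (hS2 : sInt c ε i ≤ 2) (hgood : 2 * (ι i : ℤ) ≠ sInt c ε i * ι0) :
    2 * (ι i : ℤ) ≤ (2 * (ι i : ℤ) - sInt c ε i * ι0) * (ι0 + 1) := by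
  have hI0 : (1 : ℤ) ≤ (ι0 : ℤ) := by exact_mod_cast h1ι0
  have hII : (ι0 : ℤ) ≤ (ι i : ℤ) := by exact_mod_cast hle
  rcases lt_or_eq_of_le hS2 with h1 | h1
  · -- S ≤ 1
    have hS1 : sInt c ε i ≤ 1 := by omega
    have h2 : sInt c ε i * ι0 ≤ (ι0 : ℤ) := by
      calc sInt c ε i * ι0 ≤ 1 * ι0 := mul_le_mul_of_nonneg_right hS1 (by omega)
      _ = (ι0 : ℤ) := one_mul _
    have h3 : (ι i : ℤ) ≤ 2 * (ι i : ℤ) - sInt c ε i * ι0 := by omega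
    calc 2 * (ι i : ℤ) ≤ (ι i : ℤ) * (ι0 + 1) := by nlinarith
    _ ≤ (2 * (ι i : ℤ) - sInt c ε i * ι0) * (ι0 + 1) :=
        mul_le_mul_of_nonneg_right h3 (by omega)
  · -- S = 2
    have hd : 1 ≤ (ι i : ℤ) - ι0 := by
      have h5 := good_int h1ι0 hle hS2 hgood
      rw [h1] at h5
      omega
    rw [h1]
    nlinarith [mul_le_mul_of_nonneg_right hd (show (0:ℤ) ≤ (ι0:ℤ) by omega)]

end facts


section realfacts

variable {ι : Fin r → ℕ} {ι0 : ℕ} {c : Fin r → Fin n → ℕ} {ε : Fin n → Bool} {i : Fin r}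

lemma mem_bad_iff : i ∈ bad ι ι0 c ε ↔ 2 * (ι i : ℤ) = sInt c ε i * ι0 := by
  simp [bad]

lemma aR_good_half (h1ι0 : 1 ≤ ι0) (hleι : ι0 ≤ ι i) (hrow : ∑ j, c i j = 2)
    (hg : i ∉ bad ι ι0 c ε) : (1:ℝ)/2 ≤ aR ι ι0 c ε i := by
  have h := good_int h1ι0 hleι (sInt_le hrow ε) (by simpa [mem_bad_iff] using hg)
  have h' : (1:ℝ) ≤ 2 * (ι i : ℝ) - (sInt c ε i : ℝ) * ι0 := by exact_mod_cast h
  rw [aR]; linarith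

lemma aR_good_iota (h1ι0 : 1 ≤ ι0) (hleι : ι0 ≤ ι i) (hrow : ∑ j, c i j = 2)
    (hg : i ∉ bad ι ι0 c ε) : (ι i : ℝ) ≤ aR ι ι0 c ε i * ((ι0:ℝ) + 1) := by
  have h := good_int2 h1ι0 hleι (sInt_le hrow ε) (by simpa [mem_bad_iff] using hg)
  have h' : 2 * (ι i : ℝ) ≤ (2 * (ι i : ℝ) - (sInt c ε i : ℝ) * ι0) * ((ι0:ℝ) + 1) := by
    exact_mod_cast h
  have h2 : aR ι ι0 c ε i * ((ι0:ℝ) + 1)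
      = (2 * (ι i : ℝ) - (sInt c ε i : ℝ) * ι0) * ((ι0:ℝ) + 1) / 2 := by
    rw [aR]; ring
  rw [h2]; linarith

lemma aR_good_pos (h1ι0 : 1 ≤ ι0) (hleι : ι0 ≤ ι i) (hrow : ∑ j, c i j = 2)
    (hg : i ∉ bad ι ι0 c ε) : 0 < aR ι ι0 c ε i :=
  lt_of_lt_of_le (by norm_num) (aR_good_half h1ι0 hleι hrow hg)

lemma abs_bR_le (hrow : ∑ j, c i j = 2) : |bR ι0 c ε i| ≤ (ι0 : ℝ) := by
  have h2 : (sInt c ε i : ℝ) ≤ 2 := by exact_mod_cast sInt_le hrow ε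
  have hm2 : (-2:ℝ) ≤ (sInt c ε i : ℝ) := by exact_mod_cast neg_le_sInt hrow ε
  have h0 : (0:ℝ) ≤ (ι0:ℝ) := by positivity
  rw [bR, abs_le]
  constructor <;> nlinarith

lemma bad_iota (h1ι0 : 1 ≤ ι0) (hleι : ι0 ≤ ι i) (hrow : ∑ j, c i j = 2)
    (hb : i ∈ bad ι ι0 c ε) : ι i = ι0 :=
  (bad_eq h1ι0 hleι (sInt_le hrow ε) (mem_bad_iff.1 hb)).2

lemma bad_aR (h1ι0 : 1 ≤ ι0) (hleι : ι0 ≤ ι i) (hrow : ∑ j, c i j = 2)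
    (hb : i ∈ bad ι ι0 c ε) : aR ι ι0 c ε i = 0 ∧ bR ι0 c ε i = ι0 := by
  obtain ⟨hS, hII⟩ := bad_eq h1ι0 hleι (sInt_le hrow ε) (mem_bad_iff.1 hb)
  constructor
  · rw [aR, hS, hII]; push_cast; ring
  · rw [bR, hS]; push_cast; ring

lemma bad_subset (h1ι0 : 1 ≤ ι0) (hleι : ∀ i, ι0 ≤ ι i) (hrow : ∀ i, ∑ j, c i j = 2) :
    bad ι ι0 c ε ⊆ Finset.univ.filter fun i => ι i = ι0 := by
  intro i hi
  simp only [Finset.mem_filter, Finset.mem_univ, true_and]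
  exact bad_iota h1ι0 (hleι i) (hrow i) hi

/-- the candidate analytic extension -/
noncomputable def psi (ι : Fin r → ℕ) (ι0 μ0 : ℕ) (c : Fin r → Fin n → ℕ) : ℝ → ℝ :=
  fun w => ∑ ε : Fin n → Bool,
    ((∏ j, sg (ε j)) * ((ι0:ℝ)⁻¹) ^ (bad ι ι0 c ε).card * w ^ (μ0 - (bad ι ι0 c ε).card)) *
      ∏ i ∈ (bad ι ι0 c ε)ᶜ, (aR ι ι0 c ε i + bR ι0 c ε i * w)⁻¹

end realfacts

lemma psi_analytic {n r : ℕ} {ι : Fin r → ℕ} {ι0 μ0 : ℕ} {c : Fin r → Fin n → ℕ}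
    (h1ι0 : 1 ≤ ι0) (hleι : ∀ i, ι0 ≤ ι i) (hrow : ∀ i, ∑ j, c i j = 2) :
    AnalyticAt ℝ (psi ι ι0 μ0 c) 0 := by
  apply Finset.analyticAt_fun_sum
  intro ε _
  apply AnalyticAt.mul
  · exact analyticAt_const.mul ((analyticAt_id).pow _)
  · apply Finset.analyticAt_fun_prod
    intro i hi
    apply AnalyticAt.inv
    · exact analyticAt_const.add (analyticAt_const.mul analyticAt_id)
    · have := aR_good_pos h1ι0 (hleι i) (hrow i) (Finset.mem_compl.1 hi)
      simp only [mul_zero, add_zero]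
      exact ne_of_gt this

lemma psi_eventually_eq {n r : ℕ} {ι : Fin r → ℕ} {ι0 μ0 : ℕ} {c : Fin r → Fin n → ℕ}
    (h1ι0 : 1 ≤ ι0) (hleι : ∀ i, ι0 ≤ ι i) (hrow : ∀ i, ∑ j, c i j = 2)
    (hμ : ∀ ε : Fin n → Bool, (bad ι ι0 c ε).card ≤ μ0) :
    ∀ᶠ w in nhdsWithin (0 : ℝ) {(0 : ℝ)}ᶜ,
      psi ι ι0 μ0 c w = w ^ μ0 * ∑ ε : Fin n → Bool,
        (∏ j, sg (ε j)) *
          ∏ i, ((ι i : ℝ) - (∑ j, sg (ε j) * (c i j : ℝ)) * ((ι0 : ℝ) * (1 - w) / 2))⁻¹ := by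
  -- a neighbourhood where all "good" factors are nonvanishing
  have hopen : ∀ᶠ w in nhds (0:ℝ), ∀ ε : Fin n → Bool, ∀ i ∈ (bad ι ι0 c ε)ᶜ,
      aR ι ι0 c ε i + bR ι0 c ε i * w ≠ 0 := by
    rw [eventually_all]
    intro ε
    rw [eventually_all_finset]
    intro i hi
    have hpos := aR_good_pos h1ι0 (hleι i) (hrow i) (Finset.mem_compl.1 hi)
    have hcont : Continuous fun w : ℝ => aR ι ι0 c ε i + bR ι0 c ε i * w := by fun_prop
    have : (fun w : ℝ => aR ι ι0 c ε i + bR ι0 c ε i * w) 0 ≠ 0 := by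
      simpa using ne_of_gt hpos
    exact hcont.continuousAt.eventually_ne this
  filter_upwards [mem_nhdsWithin_of_mem_nhds hopen, self_mem_nhdsWithin] with w hw hw0
  have hw0' : w ≠ 0 := hw0
  rw [Finset.mul_sum]
  apply Finset.sum_congr rfl
  intro ε _
  -- identify each factor
  have hfac : ∀ i : Fin r,
      ((ι i : ℝ) - (∑ j, sg (ε j) * (c i j : ℝ)) * ((ι0 : ℝ) * (1 - w) / 2))⁻¹
        = (aR ι ι0 c ε i + bR ι0 c ε i * w)⁻¹ := by
    intro i
    rw [sum_sg_eq]
    congr 1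
    rw [aR, bR]
    ring
  rw [Finset.prod_congr rfl (fun i _ => hfac i)]
  rw [← Finset.prod_mul_prod_compl (bad ι ι0 c ε)
    (fun i => (aR ι ι0 c ε i + bR ι0 c ε i * w)⁻¹)]
  have hbadfac : ∏ i ∈ bad ι ι0 c ε, (aR ι ι0 c ε i + bR ι0 c ε i * w)⁻¹
      = (((ι0:ℝ) * w)⁻¹) ^ (bad ι ι0 c ε).card := by
    rw [← Finset.prod_const]
    apply Finset.prod_congr rfl
    intro i hi
    obtain ⟨ha, hb⟩ := bad_aR h1ι0 (hleι i) (hrow i) hi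
    rw [ha, hb, zero_add]
  rw [hbadfac]
  have hpow : w ^ (μ0 - (bad ι ι0 c ε).card)
      = w ^ μ0 * (w ^ (bad ι ι0 c ε).card)⁻¹ := by
    rw [pow_sub₀ w hw0' (hμ ε)]
  rw [hpow, mul_inv, mul_pow]
  ring


lemma factor_bound {a b I0 Ii : ℝ} (ha2 : 1/2 ≤ a) (haI : Ii ≤ a * (I0+1))
    (hb : |b| ≤ I0) (hIi : 1 ≤ Ii) (hI0 : 1 ≤ I0) (mi : ℕ) :
    |b| ^ mi * (a ^ (mi+1))⁻¹ ≤ (2*I0) ^ mi * ((I0+1) * Ii⁻¹) := by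
  have ha : 0 < a := by linarith
  have hIi0 : 0 < Ii := by linarith
  have h1 : a⁻¹ ≤ 2 := by
    have h := one_div_le_one_div_of_le (by norm_num : (0:ℝ) < 1/2) ha2
    rw [one_div] at h
    norm_num at h
    linarith
  have h3 : |b| * a⁻¹ ≤ 2 * I0 := by
    calc |b| * a⁻¹ ≤ I0 * 2 := mul_le_mul hb h1 (by positivity) (by linarith)
    _ = 2 * I0 := by ring
  have h4 : a⁻¹ ≤ (I0+1) * Ii⁻¹ := by
    rw [inv_eq_one_div, ← div_eq_mul_inv, div_le_div_iff₀ ha hIi0]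
    nlinarith
  have heq : |b| ^ mi * (a ^ (mi+1))⁻¹ = (|b| * a⁻¹) ^ mi * a⁻¹ := by
    rw [pow_succ, mul_inv, mul_pow, inv_pow]; ring
  rw [heq]
  apply mul_le_mul (pow_le_pow_left₀ (by positivity) h3 mi) h4 (by positivity) (by positivity)


lemma key_term_bound {r : ℕ} {s : Set ℝ} (hso : IsOpen s) (h0s : (0:ℝ) ∈ s)
    {G : Finset (Fin r)} {A Bv X : Fin r → ℝ} {Y : ℝ}
    (hne : ∀ i ∈ G, ∀ w ∈ s, A i + Bv i * w ≠ 0)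
    (hfac : ∀ i ∈ G, ∀ mi : ℕ, |Bv i| ^ mi * (|A i| ^ (mi+1))⁻¹ ≤ Y ^ mi * X i)
    (hX : ∀ i ∈ G, 0 ≤ X i) (hY : 0 ≤ Y)
    (C : ℝ) (P j : ℕ) :
    ‖iteratedFDerivWithin ℝ j (fun w => C * w ^ P * ∏ i ∈ G, (A i + Bv i * w)⁻¹) s 0‖
      ≤ (Nat.factorial j : ℝ) * |C| * (((G.sym (j-P)).card : ℕ) : ℝ) * Y ^ (j-P)
        * ∏ i ∈ G, X i := by
  classical
  have hud : UniqueDiffOn ℝ s := hso.uniqueDiffOn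
  have hcast : ∀ q : ℕ, (q : WithTop ℕ∞) ≤ ((⊤:ℕ∞) : WithTop ℕ∞) := fun q => by
    exact_mod_cast (le_top : (q:ℕ∞) ≤ ⊤)
  have hg_cd : ∀ i ∈ G, ContDiffOn ℝ ((⊤:ℕ∞) : WithTop ℕ∞)
      (fun w => (A i + Bv i * w)⁻¹) s := fun i hi =>
    ContDiffOn.inv ((contDiff_const.add (contDiff_const.mul contDiff_id)).contDiffOn) (hne i hi)
  have hH_cd : ContDiffOn ℝ ((⊤:ℕ∞) : WithTop ℕ∞)
      (fun w => ∏ i ∈ G, (A i + Bv i * w)⁻¹) s := contDiffOn_prod hg_cd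
  have hmono_cd : ContDiff ℝ ((⊤:ℕ∞) : WithTop ℕ∞) (fun w : ℝ => C * w ^ P) :=
    contDiff_const.mul (contDiff_id.pow _)
  have hXprod : 0 ≤ ∏ i ∈ G, X i := Finset.prod_nonneg hX
  have hRHS : 0 ≤ (Nat.factorial j : ℝ) * |C| * (((G.sym (j-P)).card : ℕ) : ℝ) * Y ^ (j-P)
      * ∏ i ∈ G, X i := by positivity
  have hmono_norm : ∀ l : ℕ, ‖iteratedFDerivWithin ℝ l (fun w : ℝ => C * w ^ P) s 0‖
      = |C * (P.descFactorial l : ℝ) * (0:ℝ) ^ (P - l)| := by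
    intro l
    rw [iteratedFDerivWithin_of_isOpen l hso h0s, norm_iteratedFDeriv_eq_norm_iteratedDeriv,
      iterDeriv_const_pow C P l, Real.norm_eq_abs]
  have hgnorm : ∀ i ∈ G, ∀ mi : ℕ,
      ‖iteratedFDerivWithin ℝ mi (fun w => (A i + Bv i * w)⁻¹) s 0‖
        = (Nat.factorial mi : ℝ) * (|Bv i| ^ mi * (|A i| ^ (mi+1))⁻¹) := by
    intro i hi mi
    rw [norm_iteratedFDerivWithin_eq_norm_iteratedDerivWithin,
      iterDeriv_affine_inv hso (hne i hi) mi 0 h0s, Real.norm_eq_abs]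
    rw [mul_zero, add_zero, abs_mul, abs_mul, abs_mul, abs_pow, abs_pow, abs_inv, abs_pow,
      abs_neg, abs_one, one_pow, one_mul, Nat.abs_cast]
    ring
  have hmul := norm_iteratedFDerivWithin_mul_le (𝕜 := ℝ)
    (hmono_cd.contDiffOn) hH_cd hud h0s (hcast j)
  refine le_trans hmul ?_
  rcases lt_or_ge j P with hjP | hPj
  · have hz : ∀ l ∈ Finset.range (j+1), (Nat.choose j l : ℝ)
        * ‖iteratedFDerivWithin ℝ l (fun w : ℝ => C * w ^ P) s 0‖
        * ‖iteratedFDerivWithin ℝ (j-l) (fun w => ∏ i ∈ G, (A i + Bv i * w)⁻¹) s 0‖ = 0 := by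
      intro l hl
      have hlP : l < P := by
        have := Finset.mem_range.1 hl; omega
      rw [hmono_norm l, zero_pow (by omega : P - l ≠ 0)]
      simp
    rw [Finset.sum_eq_zero hz]
    exact hRHS
  · have hsum_single : ∑ l ∈ Finset.range (j+1), (Nat.choose j l : ℝ)
        * ‖iteratedFDerivWithin ℝ l (fun w : ℝ => C * w ^ P) s 0‖
        * ‖iteratedFDerivWithin ℝ (j-l) (fun w => ∏ i ∈ G, (A i + Bv i * w)⁻¹) s 0‖
        = (Nat.choose j P : ℝ) * (|C| * (Nat.factorial P : ℝ))
          * ‖iteratedFDerivWithin ℝ (j-P) (fun w => ∏ i ∈ G, (A i + Bv i * w)⁻¹) s 0‖ := by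
      rw [Finset.sum_eq_single_of_mem P (Finset.mem_range.2 (by omega))]
      · rw [hmono_norm P, Nat.sub_self, pow_zero, mul_one, Nat.descFactorial_self,
          abs_mul, Nat.abs_cast]
      · intro l hl hlP
        rw [hmono_norm l]
        rcases lt_or_gt_of_ne hlP with h | h
        · rw [zero_pow (by omega : P - l ≠ 0)]; simp
        · rw [Nat.descFactorial_eq_zero_iff_lt.2 h]; simp
    rw [hsum_single]
    have hprod := norm_iteratedFDerivWithin_prod_le (𝕜 := ℝ) (u := G)
      (f := fun i => fun w => (A i + Bv i * w)⁻¹) (fun i hi => hg_cd i hi) hud h0s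
      (hcast (j-P))
    have hterm : ∀ q ∈ G.sym (j-P), ((q : Multiset (Fin r)).countPerms : ℝ)
        * ∏ i ∈ G, ‖iteratedFDerivWithin ℝ (Multiset.count i (q : Multiset (Fin r)))
            (fun w => (A i + Bv i * w)⁻¹) s 0‖
        ≤ (Nat.factorial (j-P) : ℝ) * (Y ^ (j-P) * ∏ i ∈ G, X i) := by
      intro q hq
      have h1 : ∏ i ∈ G, ‖iteratedFDerivWithin ℝ (Multiset.count i (q:Multiset (Fin r)))
            (fun w => (A i + Bv i * w)⁻¹) s 0‖
          = (∏ i ∈ G, (Nat.factorial (Multiset.count i (q:Multiset (Fin r))) : ℝ))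
            * ∏ i ∈ G, (|Bv i| ^ (Multiset.count i (q:Multiset (Fin r)))
                * (|A i| ^ (Multiset.count i (q:Multiset (Fin r)) + 1))⁻¹) := by
        rw [← Finset.prod_mul_distrib]
        exact Finset.prod_congr rfl (fun i hi => hgnorm i hi _)
      rw [h1]
      have h2 : ∏ i ∈ G, (|Bv i| ^ (Multiset.count i (q:Multiset (Fin r)))
            * (|A i| ^ (Multiset.count i (q:Multiset (Fin r)) + 1))⁻¹)
          ≤ ∏ i ∈ G, (Y ^ (Multiset.count i (q:Multiset (Fin r))) * X i) :=
        Finset.prod_le_prod (fun i _ => by positivity) (fun i hi => hfac i hi _)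
      have h3 : ∏ i ∈ G, (Y ^ (Multiset.count i (q:Multiset (Fin r))) * X i)
          = Y ^ (j-P) * ∏ i ∈ G, X i := by
        rw [Finset.prod_mul_distrib, Finset.prod_pow_eq_pow_sum, sym_count_sum q hq]
      have h4 : ((q:Multiset (Fin r)).countPerms : ℝ)
          * ∏ i ∈ G, (Nat.factorial (Multiset.count i (q:Multiset (Fin r))) : ℝ)
          = (Nat.factorial (j-P) : ℝ) := by
        rw [← Nat.cast_prod, ← Nat.cast_mul, sym_multinomial_mul_prod_factorial q hq]
      have h5 : 0 ≤ ((q:Multiset (Fin r)).countPerms : ℝ)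
          * ∏ i ∈ G, (Nat.factorial (Multiset.count i (q:Multiset (Fin r))) : ℝ) := by
        positivity
      calc ((q : Multiset (Fin r)).countPerms : ℝ)
          * ((∏ i ∈ G, (Nat.factorial (Multiset.count i (q:Multiset (Fin r))) : ℝ))
            * ∏ i ∈ G, (|Bv i| ^ (Multiset.count i (q:Multiset (Fin r)))
                * (|A i| ^ (Multiset.count i (q:Multiset (Fin r)) + 1))⁻¹))
          = (((q : Multiset (Fin r)).countPerms : ℝ)
              * ∏ i ∈ G, (Nat.factorial (Multiset.count i (q:Multiset (Fin r))) : ℝ))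
            * ∏ i ∈ G, (|Bv i| ^ (Multiset.count i (q:Multiset (Fin r)))
                * (|A i| ^ (Multiset.count i (q:Multiset (Fin r)) + 1))⁻¹) := by ring
      _ ≤ (((q : Multiset (Fin r)).countPerms : ℝ)
              * ∏ i ∈ G, (Nat.factorial (Multiset.count i (q:Multiset (Fin r))) : ℝ))
            * ∏ i ∈ G, (Y ^ (Multiset.count i (q:Multiset (Fin r))) * X i) :=
          mul_le_mul_of_nonneg_left h2 h5
      _ = (Nat.factorial (j-P) : ℝ) * (Y ^ (j-P) * ∏ i ∈ G, X i) := by rw [h4, h3]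
    have hprod2 : ‖iteratedFDerivWithin ℝ (j-P) (fun w => ∏ i ∈ G, (A i + Bv i * w)⁻¹) s 0‖
        ≤ (((G.sym (j-P)).card : ℕ) : ℝ)
          * ((Nat.factorial (j-P) : ℝ) * (Y ^ (j-P) * ∏ i ∈ G, X i)) := by
      refine le_trans hprod ?_
      refine le_trans (Finset.sum_le_card_nsmul _ _ _ hterm) ?_
      rw [nsmul_eq_mul]
    calc (Nat.choose j P : ℝ) * (|C| * (Nat.factorial P : ℝ))
        * ‖iteratedFDerivWithin ℝ (j-P) (fun w => ∏ i ∈ G, (A i + Bv i * w)⁻¹) s 0‖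
        ≤ (Nat.choose j P : ℝ) * (|C| * (Nat.factorial P : ℝ))
          * ((((G.sym (j-P)).card : ℕ) : ℝ)
            * ((Nat.factorial (j-P) : ℝ) * (Y ^ (j-P) * ∏ i ∈ G, X i))) :=
        mul_le_mul_of_nonneg_left hprod2 (by positivity)
    _ = ((Nat.choose j P : ℝ) * (Nat.factorial P : ℝ) * (Nat.factorial (j-P) : ℝ))
          * |C| * (((G.sym (j-P)).card : ℕ) : ℝ) * Y ^ (j-P) * ∏ i ∈ G, X i := by ring
    _ = (Nat.factorial j : ℝ) * |C| * (((G.sym (j-P)).card : ℕ) : ℝ) * Y ^ (j-P)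
          * ∏ i ∈ G, X i := by
        rw [← Nat.cast_mul, ← Nat.cast_mul, Nat.choose_mul_factorial_mul_factorial hPj]


lemma psi_bound {n r : ℕ} {ι : Fin r → ℕ} {ι0 μ0 : ℕ} {c : Fin r → Fin n → ℕ}
    (hr : 1 ≤ r) (hι : ∀ i, 1 ≤ ι i)
    (h1ι0 : 1 ≤ ι0) (hleι : ∀ i, ι0 ≤ ι i) (hrow : ∀ i, ∑ j, c i j = 2)
    (hμ : ∀ ε : Fin n → Bool, (bad ι ι0 c ε).card ≤ μ0)
    (hμr : μ0 ≤ r)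
    {j : ℕ} (hj : j < μ0) :
    |iteratedDeriv j (psi ι ι0 μ0 c) 0 / (Nat.factorial j : ℝ)| ≤
      (2:ℝ)^n * (Nat.choose (2*r-2) (r-1) : ℝ) * ((ι0:ℝ) * ((ι0:ℝ)+1)^2)^r
        * ∏ i, ((ι i : ℝ))⁻¹ := by
  classical
  set δ : ℝ := ((2*ι0:ℝ)+1)⁻¹ with hδ
  have hι0pos : (0:ℝ) < ι0 := by exact_mod_cast h1ι0
  have hι0one : (1:ℝ) ≤ ι0 := by exact_mod_cast h1ι0
  have hδpos : 0 < δ := by positivity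
  set s : Set ℝ := Metric.ball (0:ℝ) δ with hsdef
  have hso : IsOpen s := Metric.isOpen_ball
  have h0s : (0:ℝ) ∈ s := Metric.mem_ball_self hδpos
  have hud : UniqueDiffOn ℝ s := hso.uniqueDiffOn
  have hcast : ∀ q : ℕ, (q : WithTop ℕ∞) ≤ ((⊤:ℕ∞) : WithTop ℕ∞) := fun q => by
    exact_mod_cast (le_top : (q:ℕ∞) ≤ ⊤)
  -- positivity of good factors on s
  have hposf : ∀ ε : Fin n → Bool, ∀ i ∈ (bad ι ι0 c ε)ᶜ, ∀ w ∈ s,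
      0 < aR ι ι0 c ε i + bR ι0 c ε i * w := by
    intro ε i hi w hws
    have h12 := aR_good_half h1ι0 (hleι i) (hrow i) (Finset.mem_compl.1 hi)
    have hb := abs_bR_le (ε := ε) (i := i) (ι0 := ι0) (hrow i)
    have hwd : |w| < δ := by
      have := Metric.mem_ball.1 hws
      simpa [Real.dist_eq] using this
    have hδhalf : (ι0:ℝ) * δ ≤ 1/2 := by
      rw [hδ, ← div_eq_mul_inv, div_le_iff₀ (by positivity)]
      linarith
    have h1 : |bR ι0 c ε i * w| < 1/2 := by
      rw [abs_mul]
      calc |bR ι0 c ε i| * |w| ≤ (ι0:ℝ) * |w| :=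
            mul_le_mul_of_nonneg_right hb (abs_nonneg w)
      _ < (ι0:ℝ) * δ := mul_lt_mul_of_pos_left hwd hι0pos
      _ ≤ 1/2 := hδhalf
    have h2 := (abs_lt.1 h1).1
    linarith
  have hne : ∀ ε : Fin n → Bool, ∀ i ∈ (bad ι ι0 c ε)ᶜ, ∀ w ∈ s,
      aR ι ι0 c ε i + bR ι0 c ε i * w ≠ 0 :=
    fun ε i hi w hw => ne_of_gt (hposf ε i hi w hw)
  -- the per-term bound
  have key : ∀ ε : Fin n → Bool,
      ‖iteratedFDerivWithin ℝ j (fun w =>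
          (∏ j', sg (ε j')) * ((ι0:ℝ)⁻¹) ^ (bad ι ι0 c ε).card
            * w ^ (μ0 - (bad ι ι0 c ε).card)
          * ∏ i ∈ (bad ι ι0 c ε)ᶜ, (aR ι ι0 c ε i + bR ι0 c ε i * w)⁻¹) s 0‖
        ≤ (Nat.factorial j : ℝ) * ((Nat.choose (2*r-2) (r-1) : ℝ)
            * ((ι0:ℝ) * ((ι0:ℝ)+1)^2)^r * ∏ i, ((ι i : ℝ))⁻¹) := by
    intro ε
    have hKμ : (bad ι ι0 c ε).card ≤ μ0 := hμ ε
    -- abbreviations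
    set K := (bad ι ι0 c ε).card with hK
    set G : Finset (Fin r) := (bad ι ι0 c ε)ᶜ with hG
    set P := μ0 - K with hP
    set m := j - P with hm
    have happly := key_term_bound (A := fun i => aR ι ι0 c ε i)
      (Bv := fun i => bR ι0 c ε i)
      (X := fun i => ((ι0:ℝ)+1) * ((ι i : ℝ))⁻¹) (Y := 2*(ι0:ℝ))
      hso h0s (fun i hi w hw => hne ε i hi w hw)
      (fun i hi mi => by
        have hgood := Finset.mem_compl.1 (hG ▸ hi)
        have h12 := aR_good_half h1ι0 (hleι i) (hrow i) hgood
        have hIa := aR_good_iota h1ι0 (hleι i) (hrow i) hgood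
        have hb := abs_bR_le (ε := ε) (i := i) (ι0 := ι0) (hrow i)
        have hIi : (1:ℝ) ≤ (ι i : ℝ) := by exact_mod_cast hι i
        have hapos : 0 < aR ι ι0 c ε i := by linarith
        rw [abs_of_pos hapos]
        exact factor_bound h12 hIa hb hIi hι0one mi)
      (fun i hi => by positivity) (by positivity)
      ((∏ j', sg (ε j')) * ((ι0:ℝ)⁻¹) ^ K) P j
    refine le_trans happly ?_
    -- now pure arithmetic
    have habsC : |(∏ j', sg (ε j')) * ((ι0:ℝ)⁻¹) ^ K| = ((ι0:ℝ)⁻¹) ^ K := by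
      rw [abs_mul, Finset.abs_prod]
      have h1 : ∀ j' : Fin n, |sg (ε j')| = 1 := by
        intro j'
        rcases Bool.eq_false_or_eq_true (ε j') with h | h <;> simp [sg, h]
      rw [Finset.prod_congr rfl (fun j' _ => h1 j'), Finset.prod_const_one, one_mul,
        abs_of_nonneg (by positivity)]
    rw [habsC]
    -- split the X-product
    have hXsplit : ∏ i ∈ G, (((ι0:ℝ)+1) * ((ι i : ℝ))⁻¹)
        = ((ι0:ℝ)+1) ^ G.card * ∏ i ∈ G, ((ι i : ℝ))⁻¹ := by
      rw [Finset.prod_mul_distrib, Finset.prod_const]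
    -- merge the inverse powers of ι0 with the complement product
    have hBprod : ((ι0:ℝ)⁻¹) ^ K = ∏ i ∈ bad ι ι0 c ε, ((ι i : ℝ))⁻¹ := by
      rw [← Finset.prod_const]
      refine Finset.prod_congr rfl fun i hi => ?_
      rw [bad_iota h1ι0 (hleι i) (hrow i) hi]
    have hmerge : ((ι0:ℝ)⁻¹) ^ K * ∏ i ∈ G, ((ι i : ℝ))⁻¹ = ∏ i, ((ι i : ℝ))⁻¹ := by
      rw [hBprod, hG, Finset.prod_mul_prod_compl]
    -- card bound
    have hmr : m ≤ r - 1 := by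
      have h1 : K ≤ r := le_trans hKμ hμr
      omega
    have hcard : ((G.sym m).card : ℕ) ≤ Nat.choose (2*r-2) (r-1) := by
      calc (G.sym m).card ≤ Fintype.card (Sym (Fin r) m) := Finset.card_le_univ _
      _ = Nat.choose (Fintype.card (Fin r) + m - 1) m := Sym.card_sym_eq_choose m
      _ = Nat.choose (r + m - 1) m := by rw [Fintype.card_fin]
      _ ≤ Nat.choose (2*r-2) m := Nat.choose_le_choose m (by omega)
      _ ≤ Nat.choose (2*r-2) ((2*r-2)/2) := Nat.choose_le_middle m (2*r-2)
      _ = Nat.choose (2*r-2) (r-1) := by congr 1; omega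
    have hGr : G.card ≤ r := by
      calc G.card ≤ Fintype.card (Fin r) := Finset.card_le_univ _
      _ = r := Fintype.card_fin r
    -- power bound
    have hpowb : (2*(ι0:ℝ)) ^ m * ((ι0:ℝ)+1) ^ G.card
        ≤ ((ι0:ℝ) * ((ι0:ℝ)+1)^2) ^ r := by
      have h1 : (2*(ι0:ℝ)) ^ m ≤ ((ι0:ℝ) * ((ι0:ℝ)+1)) ^ m := by
        apply pow_le_pow_left₀ (by positivity)
        nlinarith
      have h2 : ((ι0:ℝ) * ((ι0:ℝ)+1)) ^ m ≤ ((ι0:ℝ) * ((ι0:ℝ)+1)) ^ r := by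
        apply pow_le_pow_right₀ (by nlinarith)
        omega
      have h3 : ((ι0:ℝ)+1) ^ G.card ≤ ((ι0:ℝ)+1) ^ r := by
        apply pow_le_pow_right₀ (by linarith)
        exact hGr
      calc (2*(ι0:ℝ)) ^ m * ((ι0:ℝ)+1) ^ G.card
          ≤ ((ι0:ℝ) * ((ι0:ℝ)+1)) ^ r * ((ι0:ℝ)+1) ^ r := by
            apply mul_le_mul (le_trans h1 h2) h3 (by positivity) (by positivity)
      _ = ((ι0:ℝ) * ((ι0:ℝ)+1)^2) ^ r := by
            rw [← mul_pow]; congr 1; ring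
    -- assemble
    have hprodinv_nonneg : (0:ℝ) ≤ ∏ i, ((ι i : ℝ))⁻¹ := by positivity
    have hGinv_nonneg : (0:ℝ) ≤ ∏ i ∈ G, ((ι i : ℝ))⁻¹ := by positivity
    have hc : (((G.sym m).card : ℕ) : ℝ) ≤ (Nat.choose (2*r-2) (r-1) : ℝ) := by
      exact_mod_cast hcard
    have hfj : (0:ℝ) ≤ (Nat.factorial j : ℝ) := by positivity
    calc (Nat.factorial j : ℝ) * ((ι0:ℝ)⁻¹) ^ K * (((G.sym m).card : ℕ) : ℝ)
        * (2*(ι0:ℝ)) ^ m * ∏ i ∈ G, (((ι0:ℝ)+1) * ((ι i : ℝ))⁻¹)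
        = (Nat.factorial j : ℝ) * ((((G.sym m).card : ℕ) : ℝ)
            * ((2*(ι0:ℝ)) ^ m * ((ι0:ℝ)+1) ^ G.card))
          * (((ι0:ℝ)⁻¹) ^ K * ∏ i ∈ G, ((ι i : ℝ))⁻¹) := by
          rw [hXsplit]; ring
    _ = (Nat.factorial j : ℝ) * ((((G.sym m).card : ℕ) : ℝ)
            * ((2*(ι0:ℝ)) ^ m * ((ι0:ℝ)+1) ^ G.card)) * ∏ i, ((ι i : ℝ))⁻¹ := by
          rw [hmerge]
    _ ≤ (Nat.factorial j : ℝ) * ((Nat.choose (2*r-2) (r-1) : ℝ)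
            * ((ι0:ℝ) * ((ι0:ℝ)+1)^2)^r) * ∏ i, ((ι i : ℝ))⁻¹ := by
          have hmid : (((G.sym m).card : ℕ) : ℝ) * ((2*(ι0:ℝ)) ^ m * ((ι0:ℝ)+1) ^ G.card)
              ≤ (Nat.choose (2*r-2) (r-1) : ℝ) * ((ι0:ℝ) * ((ι0:ℝ)+1)^2)^r :=
            mul_le_mul hc hpowb (by positivity) (by positivity)
          exact mul_le_mul_of_nonneg_right
            (mul_le_mul_of_nonneg_left hmid hfj) hprodinv_nonneg
    _ = (Nat.factorial j : ℝ) * ((Nat.choose (2*r-2) (r-1) : ℝ)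
          * ((ι0:ℝ) * ((ι0:ℝ)+1)^2)^r * ∏ i, ((ι i : ℝ))⁻¹) := by ring
  -- assemble the sum
  have hψ : psi ι ι0 μ0 c = fun w => ∑ ε : Fin n → Bool,
      ((∏ j', sg (ε j')) * ((ι0:ℝ)⁻¹) ^ (bad ι ι0 c ε).card
        * w ^ (μ0 - (bad ι ι0 c ε).card))
      * ∏ i ∈ (bad ι ι0 c ε)ᶜ, (aR ι ι0 c ε i + bR ι0 c ε i * w)⁻¹ := rfl
  have hF_cd : ∀ ε : Fin n → Bool, ContDiffOn ℝ j
      (fun w => ((∏ j', sg (ε j')) * ((ι0:ℝ)⁻¹) ^ (bad ι ι0 c ε).card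
          * w ^ (μ0 - (bad ι ι0 c ε).card))
        * ∏ i ∈ (bad ι ι0 c ε)ᶜ, (aR ι ι0 c ε i + bR ι0 c ε i * w)⁻¹) s := by
    intro ε
    apply ContDiffOn.mul
    · exact (contDiff_const.mul (contDiff_id.pow _)).contDiffOn
    · apply contDiffOn_prod
      intro i hi
      exact ContDiffOn.inv
        ((contDiff_const.add (contDiff_const.mul contDiff_id)).contDiffOn)
        (fun w hw => hne ε i hi w hw)
  have hsumeq : iteratedFDerivWithin ℝ j (psi ι ι0 μ0 c) s 0
      = ∑ ε : Fin n → Bool, iteratedFDerivWithin ℝ j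
          (fun w => ((∏ j', sg (ε j')) * ((ι0:ℝ)⁻¹) ^ (bad ι ι0 c ε).card
              * w ^ (μ0 - (bad ι ι0 c ε).card))
            * ∏ i ∈ (bad ι ι0 c ε)ᶜ, (aR ι ι0 c ε i + bR ι0 c ε i * w)⁻¹) s 0 := by
    rw [hψ]
    have h := iteratedFDerivWithin_sum_apply (u := Finset.univ) hud h0s (fun ε _ => hF_cd ε 0 h0s)
    rw [Finset.sum_fn] at h
    exact h
  -- final computation
  have hnorm : |iteratedDeriv j (psi ι ι0 μ0 c) 0|
      ≤ (2:ℝ)^n * ((Nat.factorial j : ℝ) * ((Nat.choose (2*r-2) (r-1) : ℝ)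
          * ((ι0:ℝ) * ((ι0:ℝ)+1)^2)^r * ∏ i, ((ι i : ℝ))⁻¹)) := by
    rw [← Real.norm_eq_abs, ← norm_iteratedFDeriv_eq_norm_iteratedDeriv,
      ← iteratedFDerivWithin_of_isOpen j hso h0s, hsumeq]
    refine le_trans (norm_sum_le _ _) ?_
    refine le_trans (Finset.sum_le_card_nsmul _ _ _ (fun ε _ => key ε)) ?_
    rw [nsmul_eq_mul]
    have hcard2 : (Finset.univ : Finset (Fin n → Bool)).card = 2^n := by
      rw [Finset.card_univ]
      simp [Fintype.card_fun]
    rw [hcard2]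
    apply le_of_eq
    push_cast
    ring
  rw [abs_div, abs_of_nonneg (by positivity : (0:ℝ) ≤ (Nat.factorial j : ℝ)),
    div_le_iff₀ (by positivity : (0:ℝ) < (Nat.factorial j : ℝ))]
  calc |iteratedDeriv j (psi ι ι0 μ0 c) 0|
      ≤ (2:ℝ)^n * ((Nat.factorial j : ℝ) * ((Nat.choose (2*r-2) (r-1) : ℝ)
          * ((ι0:ℝ) * ((ι0:ℝ)+1)^2)^r * ∏ i, ((ι i : ℝ))⁻¹)) := hnorm
  _ = (2:ℝ)^n * (Nat.choose (2*r-2) (r-1) : ℝ) * ((ι0:ℝ) * ((ι0:ℝ)+1)^2)^r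
        * (∏ i, ((ι i : ℝ))⁻¹) * (Nat.factorial j : ℝ) := by ring

end LaurentAux

/-- The paper's Lemma lem:Laurent: the function `ψ(w) = w^{μ₀}·φ(ι₀(1−w)/2)` has no pole at
`w = 0`, i.e. it agrees near `0` with a function `ψ̃` analytic at `0`, and the Taylor
coefficients `ψ̃^{(j)}(0)/j!` for `0 ≤ j ≤ μ₀ − 1` (equivalently, the Laurent coefficients of
`φ` at `z = ι₀/2` of negative order) are bounded in absolute value by
`2^n·binom(2r−2,r−1)·(ι₀(ι₀+1)²)^r·∏ᵢ ιᵢ⁻¹`. -/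
theorem laurent_coefficient_bound
    (n r : ℕ) (hn : 1 ≤ n) (hr : 1 ≤ r)
    (ι : Fin r → ℕ) (hι : ∀ i, 1 ≤ ι i)
    (c : Fin r → Fin n → ℕ)
    (hc2 : ∀ i j, c i j ≤ 2)
    (hrow : ∀ i, ∑ j, c i j = 2)
    (hcol : ∀ j, 0 < ∑ i, c i j)
    (ι0 : ℕ) (hι0 : IsLeast (Set.range ι) ι0)
    (μ0 : ℕ) (hμ0 : μ0 = (Finset.univ.filter fun i => ι i = ι0).card)
    (φ : ℝ → ℝ)
    (hφ : φ = fun z : ℝ =>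
      ∑ ε : Fin n → Bool,
        (∏ j, sg (ε j)) *
          ∏ i, ((ι i : ℝ) - (∑ j, sg (ε j) * (c i j : ℝ)) * z)⁻¹) :
    ∃ ψ : ℝ → ℝ, AnalyticAt ℝ ψ 0 ∧
      (∀ᶠ w in nhdsWithin (0 : ℝ) {(0 : ℝ)}ᶜ,
        ψ w = w ^ μ0 * φ ((ι0 : ℝ) * (1 - w) / 2)) ∧
      ∀ j : ℕ, j < μ0 →
        |iteratedDeriv j ψ 0 / (Nat.factorial j : ℝ)| ≤
          (2 : ℝ) ^ n * (Nat.choose (2 * r - 2) (r - 1) : ℝ) *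
            ((ι0 : ℝ) * ((ι0 : ℝ) + 1) ^ 2) ^ r * ∏ i, ((ι i : ℝ))⁻¹ := by
  classical
  obtain ⟨i0, hi0⟩ := hι0.1
  have hleι : ∀ i, ι0 ≤ ι i := fun i => hι0.2 ⟨i, rfl⟩
  have h1ι0 : 1 ≤ ι0 := hi0 ▸ hι i0
  have hμ : ∀ ε : Fin n → Bool, (LaurentAux.bad ι ι0 c ε).card ≤ μ0 := by
    intro ε
    rw [hμ0]
    exact Finset.card_le_card (LaurentAux.bad_subset h1ι0 hleι hrow)
  have hμr : μ0 ≤ r := by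
    rw [hμ0]
    refine le_trans (Finset.card_filter_le _ _) ?_
    simp
  refine ⟨LaurentAux.psi ι ι0 μ0 c, LaurentAux.psi_analytic h1ι0 hleι hrow, ?_, ?_⟩
  · have h := LaurentAux.psi_eventually_eq (μ0 := μ0) h1ι0 hleι hrow hμ
    rw [hφ]
    exact h
  · intro j hj
    exact LaurentAux.psi_bound hr hι h1ι0 hleι hrow hμ hμr hj
end

section
/- Let R > 1, let k be a nonnegative integer, and let f be holomorphic on Ω = {z ∈ ℂ : |z| < R} ∖ {x ∈ ℝ : |x| ≥ 1}. Assume there exist constants M > 0 and δ ∈ (0,1) such that for each ζ ∈ {−1, 1} and every z ∈ Ω with |z − ζ| < δ one has |f(z)| ≤ M·|1 − z/ζ|·(1 + |log|1 − z/ζ||)^k. Then there is a constant C such that the Taylor coefficients of f at 0 satisfy |f^{(N)}(0)/N!| ≤ C·(log N)^k/N² for all integers N ≥ 2. -/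
open Filter Set Metric intervalIntegral

section TwoSingularityHelpers




lemma TS_le_of_sq_le_sq (a b : ℝ) (ha : 0 ≤ a) (hb : 0 ≤ b) (h : a ^ 2 ≤ b ^ 2) : a ≤ b := by
  nlinarith

lemma TS_cauchy_integral_bound (h : ℂ → ℂ) (c : ℂ) (r : ℝ) (hr : 0 < r)
    (hd : DifferentiableOn ℂ h (closedBall c r)) (n : ℕ) :
    ‖iteratedDeriv n h c‖ ≤
      (n.factorial : ℝ) * ((2 * Real.pi)⁻¹ *
        ∫ θ in (0:ℝ)..2 * Real.pi, ‖h (circleMap c r θ)‖) * r⁻¹ ^ n := by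
  set R : NNReal := ⟨r, hr.le⟩ with hR
  have hrc : (R : ℝ) = r := rfl
  have hp : HasFPowerSeriesOnBall h (cauchyPowerSeries h c R) c R := by
    refine DifferentiableOn.hasFPowerSeriesOnBall ?_ ?_
    · rwa [hrc]
    · exact_mod_cast hr
  have h1 : iteratedDeriv n h c = n.factorial • ((cauchyPowerSeries h c R n) fun _ => (1:ℂ)) := by
    rw [iteratedDeriv_eq_iteratedFDeriv, ← hp.factorial_smul (1:ℂ) n]
  rw [h1, ← Nat.cast_smul_eq_nsmul ℝ, norm_smul]
  have h2 : ‖(cauchyPowerSeries h c R n) fun _ => (1:ℂ)‖ ≤ ‖cauchyPowerSeries h c R n‖ := by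
    have := (cauchyPowerSeries h c R n).le_opNorm (fun _ => (1:ℂ))
    simpa using this
  have h3 := norm_cauchyPowerSeries_le h c r n
  have h4 : |r| = r := abs_of_pos hr
  rw [h4] at h3
  have hfin : ‖(cauchyPowerSeries h c R n) fun _ => (1:ℂ)‖ ≤
      ((2 * Real.pi)⁻¹ * ∫ θ in (0:ℝ)..2 * Real.pi, ‖h (circleMap c r θ)‖) * r⁻¹ ^ n := by
    exact h2.trans (by exact_mod_cast h3)
  calc ‖((n.factorial : ℕ) : ℝ)‖ * ‖(cauchyPowerSeries h c R n) fun _ => (1:ℂ)‖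
      ≤ (n.factorial : ℝ) * (((2 * Real.pi)⁻¹ *
          ∫ θ in (0:ℝ)..2 * Real.pi, ‖h (circleMap c r θ)‖) * r⁻¹ ^ n) := by
        rw [Real.norm_natCast]
        apply mul_le_mul_of_nonneg_left hfin (by positivity)
    _ = _ := by ring

lemma TS_cauchy_sup_bound (h : ℂ → ℂ) (c : ℂ) (r : ℝ) (hr : 0 < r)
    (hd : DifferentiableOn ℂ h (closedBall c r)) (K : ℝ)
    (hK : ∀ w ∈ sphere c r, ‖h w‖ ≤ K) (n : ℕ) :
    ‖iteratedDeriv n h c‖ ≤ (n.factorial : ℝ) * K * r⁻¹ ^ n := by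
  have hint : ∫ θ in (0:ℝ)..2 * Real.pi, ‖h (circleMap c r θ)‖ ≤ 2 * Real.pi * K := by
    have hKn : ∀ θ ∈ Set.Icc (0:ℝ) (2 * Real.pi), ‖h (circleMap c r θ)‖ ≤ K := fun θ _ =>
      hK _ (circleMap_mem_sphere c hr.le θ)
    calc ∫ θ in (0:ℝ)..2 * Real.pi, ‖h (circleMap c r θ)‖
        ≤ ∫ _ in (0:ℝ)..2 * Real.pi, K := by
          apply intervalIntegral.integral_mono_on Real.two_pi_pos.le ?_
            intervalIntegrable_const hKn
          apply ContinuousOn.intervalIntegrable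
          apply ContinuousOn.norm
          apply hd.continuousOn.comp (continuous_circleMap c r).continuousOn
          intro θ _
          exact sphere_subset_closedBall (circleMap_mem_sphere c hr.le θ)
      _ = 2 * Real.pi * K := by simp [mul_comm]
  have h1 := TS_cauchy_integral_bound h c r hr hd n
  have h2 : (2 * Real.pi)⁻¹ * ∫ θ in (0:ℝ)..2 * Real.pi, ‖h (circleMap c r θ)‖ ≤ K := by
    rw [inv_mul_le_iff₀ Real.two_pi_pos]
    linarith [hint]
  refine h1.trans ?_
  have hnn : (0:ℝ) ≤ r⁻¹ ^ n := by positivity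
  apply mul_le_mul_of_nonneg_right _ hnn
  exact mul_le_mul_of_nonneg_left h2 (by positivity)

lemma TS_int_inv_sq (α β a b : ℝ) (hβ : β ≠ 0)
    (hpos : ∀ θ ∈ Set.uIcc a b, 0 < α + β * θ) :
    ∫ θ in a..b, ((α + β * θ) ^ 2)⁻¹
      = β⁻¹ * ((α + β * a)⁻¹ - (α + β * b)⁻¹) := by
  have hderiv : ∀ θ ∈ Set.uIcc a b,
      HasDerivAt (fun t => -β⁻¹ * (α + β * t)⁻¹) ((α + β * θ) ^ 2)⁻¹ θ := by
    intro θ hθ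
    have h0 : α + β * θ ≠ 0 := (hpos θ hθ).ne'
    have h1 : HasDerivAt (fun t : ℝ => α + β * t) β θ := by
      simpa using ((hasDerivAt_id θ).const_mul β).const_add α
    have h2 := h1.inv h0
    have h3 := h2.const_mul (-β⁻¹)
    convert h3 using 1
    · rfl
    · rfl
    · rfl
    · field_simp
  have hcont : ContinuousOn (fun θ => ((α + β * θ) ^ 2)⁻¹) (Set.uIcc a b) := by
    apply ContinuousOn.inv₀
    · fun_prop
    · intro θ hθ; exact pow_ne_zero _ (hpos θ hθ).ne'
  rw [intervalIntegral.integral_eq_sub_of_hasDerivAt hderiv hcont.intervalIntegrable]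
  ring

lemma TS_one_sub_cos_ge (t : ℝ) (ht0 : 0 ≤ t) (htπ : t ≤ Real.pi) :
    2 * t ^ 2 / Real.pi ^ 2 ≤ 1 - Real.cos t := by
  have h1 : Real.sin (t / 2) ^ 2 = 1 / 2 - Real.cos t / 2 := by
    have := Real.sin_sq_eq_half_sub (t / 2)
    rw [this]; ring_nf
  have h2 : 2 / Real.pi * (t / 2) ≤ Real.sin (t / 2) :=
    Real.mul_le_sin (by linarith) (by linarith)
  have hπ : (0:ℝ) < Real.pi := Real.pi_pos
  have h3 : (2 / Real.pi * (t / 2)) ^ 2 ≤ Real.sin (t / 2) ^ 2 := by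
    apply sq_le_sq' _ h2
    have : 0 ≤ 2 / Real.pi * (t / 2) := by positivity
    nlinarith [Real.sin_nonneg_of_nonneg_of_le_pi (x := t/2) (by linarith) (by linarith)]
  rw [h1] at h3
  have heq : (2 / Real.pi * (t / 2)) ^ 2 = t ^ 2 / Real.pi ^ 2 := by field_simp
  rw [heq] at h3
  rw [show 2 * t ^ 2 / Real.pi ^ 2 = 2 * (t ^ 2 / Real.pi ^ 2) from by ring]
  linarith

lemma TS_norm_circleMap_sub_one_sq (r θ : ℝ) :
    ‖circleMap 0 r θ - 1‖ ^ 2 = (1 - r) ^ 2 + 2 * r * (1 - Real.cos θ) := by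
  rw [Complex.sq_norm]
  simp only [Complex.normSq_apply, circleMap, Complex.add_re, Complex.add_im,
    Complex.zero_re, Complex.zero_im, Complex.mul_re, Complex.mul_im,
    Complex.ofReal_re, Complex.ofReal_im, Complex.sub_re, Complex.sub_im,
    Complex.one_re, Complex.one_im, Complex.exp_ofReal_mul_I_re,
    Complex.exp_ofReal_mul_I_im]
  linear_combination r ^ 2 * Real.sin_sq_add_cos_sq θ

lemma TS_norm_circleMap_add_one_sq (r θ : ℝ) :
    ‖circleMap 0 r θ + 1‖ ^ 2 = (1 - r) ^ 2 + 2 * r * (1 + Real.cos θ) := by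
  rw [Complex.sq_norm]
  simp only [Complex.normSq_apply, circleMap, Complex.add_re, Complex.add_im,
    Complex.zero_re, Complex.zero_im, Complex.mul_re, Complex.mul_im,
    Complex.ofReal_re, Complex.ofReal_im,
    Complex.one_re, Complex.one_im, Complex.exp_ofReal_mul_I_re,
    Complex.exp_ofReal_mul_I_im]
  linear_combination r ^ 2 * Real.sin_sq_add_cos_sq θ

lemma TS_circle_dist_one (c θ : ℝ) (hc0 : 0 < c) (hc2 : c ≤ 1/2) (hθ : |θ| ≤ Real.pi) :
    (c + |θ|/3)/2 ≤ ‖circleMap 0 (1-c) θ - 1‖ := by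
  apply TS_le_of_sq_le_sq _ _ (by positivity) (norm_nonneg _)
  rw [TS_norm_circleMap_sub_one_sq]
  have h1 := TS_one_sub_cos_ge |θ| (abs_nonneg θ) hθ
  rw [Real.cos_abs] at h1
  have hπ2 : Real.pi ^ 2 ≤ 16 := by nlinarith [Real.pi_le_four, Real.pi_pos]
  have h5 : |θ| ^ 2 / 8 ≤ 2 * |θ| ^ 2 / Real.pi ^ 2 := by
    rw [div_le_div_iff₀ (by norm_num) (by positivity)]
    nlinarith [sq_nonneg θ, sq_abs θ]
  have h6 : |θ| ^ 2 / 8 ≤ 1 - Real.cos θ := h5.trans h1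
  nlinarith [Real.cos_le_one θ, sq_nonneg (c - |θ|/3), sq_abs θ, abs_nonneg θ,
    mul_nonneg (by linarith : (0:ℝ) ≤ 2*(1-c) - 1) (by linarith [Real.cos_le_one θ] : (0:ℝ) ≤ 1 - Real.cos θ)]

lemma TS_circle_dist_neg_one (c θ : ℝ) (hc0 : 0 < c) (hc2 : c ≤ 1/2) (hθ : |θ| ≤ Real.pi) :
    (c + (Real.pi - |θ|)/3)/2 ≤ ‖circleMap 0 (1-c) θ + 1‖ := by
  have hv0 : 0 ≤ Real.pi - |θ| := by linarith
  apply TS_le_of_sq_le_sq _ _ (by positivity) (norm_nonneg _)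
  rw [TS_norm_circleMap_add_one_sq]
  have h1 := TS_one_sub_cos_ge (Real.pi - |θ|) hv0 (by linarith [abs_nonneg θ])
  rw [Real.cos_pi_sub, Real.cos_abs] at h1
  have hπ2 : Real.pi ^ 2 ≤ 16 := by nlinarith [Real.pi_le_four, Real.pi_pos]
  have h5 : (Real.pi - |θ|) ^ 2 / 8 ≤ 2 * (Real.pi - |θ|) ^ 2 / Real.pi ^ 2 := by
    rw [div_le_div_iff₀ (by norm_num) (by positivity)]
    nlinarith [sq_nonneg (Real.pi - |θ|)]
  have h6 : (Real.pi - |θ|) ^ 2 / 8 ≤ 1 + Real.cos θ := by linarith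
  nlinarith [Real.neg_one_le_cos θ, sq_nonneg (c - (Real.pi - |θ|)/3),
    mul_nonneg (by linarith : (0:ℝ) ≤ 2*(1-c) - 1) (by linarith [Real.neg_one_le_cos θ] : (0:ℝ) ≤ 1 + Real.cos θ)]

lemma TS_slit_far (z w : ℂ) (hz : |z.re| < 1) (hw : w.im = 0) (hw1 : 1 ≤ |w.re|) :
    ‖z - 1‖ ≤ ‖z - w‖ ∨ ‖z + 1‖ ≤ ‖z - w‖ := by
  have hzre := abs_lt.mp hz
  rcases le_abs.mp hw1 with h | h
  · left
    apply TS_le_of_sq_le_sq _ _ (norm_nonneg _) (norm_nonneg _)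
    rw [Complex.sq_norm, Complex.sq_norm]
    simp only [Complex.normSq_apply, Complex.sub_re, Complex.sub_im, Complex.one_re,
      Complex.one_im, hw]
    nlinarith [hzre.1, hzre.2]
  · right
    apply TS_le_of_sq_le_sq _ _ (norm_nonneg _) (norm_nonneg _)
    rw [Complex.sq_norm, Complex.sq_norm]
    simp only [Complex.normSq_apply, Complex.add_re, Complex.add_im, Complex.sub_re,
      Complex.sub_im, Complex.one_re, Complex.one_im, hw]
    nlinarith [hzre.1, hzre.2]


lemma TS_key (M Lk bk d s : ℝ) (hM : 0 < M) (hLk : 0 ≤ Lk) (hbk : 0 ≤ bk)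
    (hpk : bk ≤ Lk) (hd0 : 0 < d) (hs0 : 0 < s) (hsd : s ≤ 2*d) :
    72 * M * bk / d ^ 2 ≤ 288 * M * Lk * (s^2)⁻¹ := by
  rw [← div_eq_mul_inv, div_le_div_iff₀ (by positivity) (by positivity)]
  have hsq : s^2 ≤ 4*d^2 := by nlinarith
  have h1 : 72 * M * bk * s^2 ≤ 72 * M * bk * (4*d^2) :=
    mul_le_mul_of_nonneg_left hsq (by positivity)
  have h2 : 72 * M * bk * (4*d^2) ≤ 72 * M * Lk * (4*d^2) := by
    have := mul_le_mul_of_nonneg_right hpk (by positivity : (0:ℝ) ≤ 72 * M * (4*d^2))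
    nlinarith
  nlinarith

lemma TS_six_div_pi (x p : ℝ) (hx : 0 ≤ x) (hp : 3 < p) : 6*x/p ≤ 2*x := by
  rw [div_le_iff₀ (by linarith)]
  nlinarith

lemma TS_final (B P2 e2 lg n X2 A : ℝ) (hB : 0 ≤ B) (hP2 : 0 ≤ P2) (he2 : 0 < e2)
    (hlg : 1 ≤ lg) (hn : 3 ≤ n) (hX2 : 0 ≤ X2) (hA0 : 0 ≤ A) (hA : A ≤ 288*P2*lg) :
    (B + 2*A*n) * e2 * (6/n^3) ≤ (e2*(6*B + 3456*P2) + X2) * lg / n^2 := by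
  have hn0 : (0:ℝ) < n := by linarith
  rw [show (B + 2*A*n) * e2 * (6/n^3) = (6*((B + 2*A*n)*e2))/n^3 from by ring,
    div_le_div_iff₀ (by positivity) (by positivity)]
  have hlgn : 1 ≤ lg * n := by nlinarith
  have t1 : 6*B*e2 ≤ 6*B*e2*(lg*n) := by nlinarith [mul_nonneg (mul_nonneg hB he2.le) (by linarith : (0:ℝ) ≤ lg*n - 1)]
  have t2 : 12*A*e2*n ≤ 12*(288*P2*lg)*e2*n := by
    have := mul_le_mul_of_nonneg_right hA (by positivity : (0:ℝ) ≤ 12*e2*n)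
    nlinarith
  have h6 : 6*((B + 2*A*n)*e2) ≤ (e2*(6*B + 3456*P2) + X2)*lg*n := by
    have hx2 : 0 ≤ X2*(lg*n) := by positivity
    nlinarith
  nlinarith [mul_le_mul_of_nonneg_right h6 (sq_nonneg n)]

lemma TS_fact_ratio (x Fm : ℝ) (hx : 0 ≤ x) (hF : 0 < Fm) :
    Fm * (x+3)^3 ≤ 6*((x+3)*((x+2)*((x+1)*Fm))) := by
  nlinarith [mul_nonneg (mul_nonneg hx hx) (mul_nonneg hx hF.le), mul_nonneg hx hF.le,
    mul_nonneg (mul_nonneg hx hx) hF.le]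

end TwoSingularityHelpers

set_option maxHeartbeats 1000000 in
/-- The two-singularity coefficient-transfer lemma of the paper (Section 7.3.3): if `f` is
holomorphic on `{|z| < R} ∖ {x ∈ ℝ : |x| ≥ 1}` with `R > 1` and satisfies
`|f(z)| ≤ M·|1 − z/ζ|·(1 + |log|1 − z/ζ||)^k` near each `ζ ∈ {−1,1}`, then its Taylor
coefficients at `0` are `O((log N)^k/N²)`. -/
theorem two_singularity_transfer
    (R : ℝ) (hR : 1 < R) (k : ℕ) (f : ℂ → ℂ)
    (hf : DifferentiableOn ℂ f
      ({z : ℂ | ‖z‖ < R} \ {z : ℂ | z.im = 0 ∧ 1 ≤ |z.re|}))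
    (M δ : ℝ) (hM : 0 < M) (hδ0 : 0 < δ) (hδ1 : δ < 1)
    (hbound : ∀ ζ : ℂ, (ζ = 1 ∨ ζ = -1) →
      ∀ z ∈ ({z : ℂ | ‖z‖ < R} \ {z : ℂ | z.im = 0 ∧ 1 ≤ |z.re|}),
        ‖z - ζ‖ < δ →
          ‖f z‖ ≤ M * ‖1 - z / ζ‖ * (1 + |Real.log ‖1 - z / ζ‖|) ^ k) :
    ∃ C : ℝ, ∀ N : ℕ, 2 ≤ N →
      ‖iteratedDeriv N f 0 / (Nat.factorial N : ℂ)‖ ≤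
        C * (Real.log N) ^ k / (N : ℝ) ^ 2 := by
  set Ω : Set ℂ := {z : ℂ | ‖z‖ < R} \ {z : ℂ | z.im = 0 ∧ 1 ≤ |z.re|} with hΩdef
  have hΩopen : IsOpen Ω := by
    apply IsOpen.sdiff
    · exact isOpen_lt continuous_norm continuous_const
    · rw [Set.setOf_and]
      exact (isClosed_eq Complex.continuous_im continuous_const).inter
        (isClosed_le continuous_const (continuous_abs.comp Complex.continuous_re))
  have hfa : AnalyticOnNhd ℂ f Ω := hf.analyticOnNhd hΩopen
  set g : ℂ → ℂ := deriv (deriv (deriv f)) with hgdef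
  have hga : AnalyticOnNhd ℂ g Ω := ((hfa.deriv).deriv).deriv
  have hgd : DifferentiableOn ℂ g Ω := hga.differentiableOn
  have hgc : ContinuousOn g Ω := hgd.continuousOn
  have hiter : ∀ m : ℕ, iteratedDeriv (m + 3) f = iteratedDeriv m g := by
    intro m
    rw [show m + 3 = (m + 2) + 1 from rfl, iteratedDeriv_succ',
        show m + 2 = (m + 1) + 1 from rfl, iteratedDeriv_succ', iteratedDeriv_succ']
  have hg3 : g = iteratedDeriv 3 f := by
    have := hiter 0
    rw [zero_add] at this
    rw [this, iteratedDeriv_zero]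
  set ε : ℝ := min (min δ (R - 1)) 1 / 2 with hεdef
  have hε0 : 0 < ε := by
    apply div_pos _ two_pos
    exact lt_min (lt_min hδ0 (by linarith)) one_pos
  have hεδ : ε ≤ δ / 2 := by
    have h1 := min_le_left (min δ (R-1)) 1
    have h2 := min_le_left δ (R-1)
    rw [hεdef]; linarith
  have hεR : ε ≤ (R - 1) / 2 := by
    have h1 := min_le_left (min δ (R-1)) 1
    have h2 := min_le_right δ (R-1)
    rw [hεdef]; linarith
  have hε1 : ε ≤ 1 / 2 := by
    have h1 := min_le_right (min δ (R-1)) 1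
    rw [hεdef]; linarith
  -- near-singularity bound on the third derivative
  have hnear : ∀ ζ : ℂ, (ζ = 1 ∨ ζ = -1) → ∀ z : ℂ, ‖z‖ < 1 → ‖z - ζ‖ < ε →
      ‖g z‖ ≤ 72 * M * (1 + Real.log 2 - Real.log ‖z - ζ‖) ^ k / ‖z - ζ‖ ^ 2 := by
    intro ζ hζ z hz hzd
    have hζ1 : ‖ζ‖ = 1 := by rcases hζ with h|h <;> simp [h]
    set d := ‖z - ζ‖ with hddef
    have hd0 : 0 < d := by
      rw [hddef, norm_pos_iff, sub_ne_zero]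
      intro h
      rw [h, hζ1] at hz
      exact lt_irrefl 1 hz
    have hd2 : d < 1/2 := hzd.trans_le hε1
    have hsub : closedBall z (d/2) ⊆ Ω := by
      intro w hw
      rw [mem_closedBall, dist_eq_norm] at hw
      constructor
      · show ‖w‖ < R
        have h1 : ‖w‖ ≤ ‖z‖ + ‖w - z‖ := by
          calc ‖w‖ = ‖z + (w - z)‖ := by ring_nf
          _ ≤ ‖z‖ + ‖w - z‖ := norm_add_le _ _
        have : ε ≤ (R-1)/2 := hεR
        linarith
      · intro hwslit
        obtain ⟨hwim, hwre⟩ := hwslit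
        have hzre : |z.re| < 1 := lt_of_le_of_lt (Complex.abs_re_le_norm z) hz
        have hzw : ‖z - w‖ ≤ d / 2 := by rwa [norm_sub_rev]
        have hz1ζ : d ≤ ‖z - 1‖ ∧ d ≤ ‖z + 1‖ := by
          rcases hζ with h|h
          · subst h
            constructor
            · exact le_refl _
            · have h2 := norm_sub_le (z+1) (z-1)
              have h3 : (z+1)-(z-1) = (2:ℂ) := by ring
              rw [h3] at h2
              have h4 : ‖(2:ℂ)‖ = 2 := by norm_num
              rw [h4] at h2
              linarith
          · subst h
            constructor
            · have h2 := norm_sub_le (z-1) (z+1)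
              have h3 : (z-1)-(z+1) = (-2:ℂ) := by ring
              rw [h3] at h2
              have h4 : ‖(-2:ℂ)‖ = 2 := by norm_num
              rw [h4] at h2
              have h5 : ‖z - -1‖ = ‖z + 1‖ := by rw [show z - -1 = z + 1 from by ring]
              rw [hddef, h5]
              linarith
            · have h5 : z - -1 = z + 1 := by ring
              rw [hddef, h5]
        rcases TS_slit_far z w hzre hwim hwre with h|h
        · have := hz1ζ.1
          linarith [h.trans hzw]
        · have := hz1ζ.2
          linarith [h.trans hzw]
    set base : ℝ := 1 + Real.log 2 - Real.log d with hbasedef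
    have hlogd : Real.log d < 0 := Real.log_neg hd0 (by linarith)
    have hlog2 : (0:ℝ) < Real.log 2 := Real.log_pos one_lt_two
    have hbase0 : 0 < base := by rw [hbasedef]; linarith
    have hfb : ∀ w ∈ sphere z (d/2), ‖f w‖ ≤ M * (3/2*d) * base ^ k := by
      intro w hwmem
      have hw : ‖w - z‖ = d/2 := by rw [mem_sphere, dist_eq_norm] at hwmem; exact hwmem
      have hwζub : ‖w - ζ‖ ≤ 3*d/2 := by
        have h1 : w - ζ = (w - z) + (z - ζ) := by ring
        have h2 := norm_add_le (w - z) (z - ζ)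
        rw [← h1] at h2
        rw [hw] at h2
        linarith
      have hwζlb : d/2 ≤ ‖w - ζ‖ := by
        have h1 : z - ζ = (z - w) + (w - ζ) := by ring
        have h2 := norm_add_le (z - w) (w - ζ)
        rw [← h1] at h2
        rw [norm_sub_rev z w, hw] at h2
        linarith
      have hwΩ : w ∈ Ω := hsub (sphere_subset_closedBall hwmem)
      have hwδ : ‖w - ζ‖ < δ := by linarith [hεδ]
      have hb := hbound ζ hζ w hwΩ hwδ
      have hnormeq : ‖1 - w / ζ‖ = ‖w - ζ‖ := by
        rcases hζ with h|h <;> subst h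
        · rw [div_one, norm_sub_rev]
        · rw [show (1:ℂ) - w / (-1) = -((-1) - w) from by field_simp; ring, norm_neg,
            norm_sub_rev]
      rw [hnormeq] at hb
      set t := ‖w - ζ‖ with htdef
      have ht0 : 0 < t := lt_of_lt_of_le (by linarith) hwζlb
      have htlt : t < 1 := by linarith
      have hlogt : |Real.log t| ≤ Real.log 2 - Real.log d := by
        rw [abs_of_nonpos (Real.log_nonpos ht0.le htlt.le)]
        have h2 : Real.log (d/2) ≤ Real.log t := Real.log_le_log (by positivity) hwζlb
        rw [Real.log_div hd0.ne' two_ne_zero] at h2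
        linarith
      have hbb : 1 + |Real.log t| ≤ base := by rw [hbasedef]; linarith
      have hpow : (1 + |Real.log t|) ^ k ≤ base ^ k :=
        pow_le_pow_left₀ (by positivity) hbb k
      calc ‖f w‖ ≤ M * t * (1 + |Real.log t|) ^ k := hb
        _ ≤ M * (3/2*d) * base ^ k := by
            apply mul_le_mul _ hpow (by positivity) (by positivity)
            apply mul_le_mul_of_nonneg_left _ hM.le
            linarith
    have happ := TS_cauchy_sup_bound f z (d/2) (by positivity) (hf.mono hsub) _ hfb 3
    have hfact3 : ((Nat.factorial 3 : ℕ) : ℝ) = 6 := by norm_num [Nat.factorial]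
    rw [hg3]
    refine happ.trans (le_of_eq ?_)
    rw [hfact3]
    have hd' : d ≠ 0 := hd0.ne'
    field_simp
    ring
  -- bound away from the singularities
  set K : Set ℂ := closedBall (0:ℂ) 1 \ (ball (1:ℂ) ε ∪ ball (-1:ℂ) ε) with hKdef
  have hKcomp : IsCompact K := (isCompact_closedBall 0 1).diff (isOpen_ball.union isOpen_ball)
  have hKΩ : K ⊆ Ω := by
    rintro z ⟨hz1, hz2⟩
    rw [mem_closedBall, dist_zero_right] at hz1
    constructor
    · exact lt_of_le_of_lt hz1 hR
    · rintro ⟨him, hre⟩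
      have hre1 : |z.re| = 1 :=
        le_antisymm (le_trans (Complex.abs_re_le_norm z) hz1) hre
      rcases abs_eq (by norm_num : (0:ℝ) ≤ 1) |>.mp hre1 with h|h
      · apply hz2
        left
        rw [mem_ball]
        have hz1' : z = 1 := Complex.ext h him
        rw [hz1']
        simpa using hε0
      · apply hz2
        right
        rw [mem_ball]
        have hz1' : z = -1 := by
          apply Complex.ext
          · simpa using h
          · simpa using him
        rw [hz1']
        simpa using hε0
  obtain ⟨B, hB⟩ := hKcomp.exists_bound_of_continuousOn (hgc.mono hKΩ)
  have h0K : (0:ℂ) ∈ K := by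
    constructor
    · simp
    · rintro (h|h) <;> rw [mem_ball] at h
      · rw [show dist (0:ℂ) 1 = 1 from by simp] at h; linarith
      · rw [show dist (0:ℂ) (-1) = 1 from by simp] at h; linarith
  have hB0 : 0 ≤ B := le_trans (norm_nonneg _) (hB 0 h0K)
  set C2 : ℝ := ‖iteratedDeriv 2 f 0 / (Nat.factorial 2 : ℂ)‖ with hC2def
  refine ⟨Real.exp 2 * (6*B + 3456*(3^k*M)) + 4*2^k*C2, fun N hN => ?_⟩
  have hE1 : 0 ≤ Real.exp 2 * (6*B + 3456*(3^k*M)) := by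
    apply mul_nonneg (Real.exp_pos 2).le
    have h1 : (0:ℝ) < 3456*(3^k*M) := by positivity
    linarith
  rcases eq_or_lt_of_le hN with h2|h3
  · -- the case N = 2
    subst h2
    have hC20 : 0 ≤ C2 := norm_nonneg _
    have hl2 : (0.6931471803:ℝ) < Real.log 2 := Real.log_two_gt_d9
    have h1k : (1:ℝ) ≤ (2*Real.log 2)^k := one_le_pow₀ (by linarith)
    have hcast : ((2:ℕ):ℝ) = (2:ℝ) := by norm_num
    rw [hcast]
    have hlhs : ‖iteratedDeriv 2 f 0 / (Nat.factorial 2 : ℂ)‖ = C2 := rfl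
    rw [hlhs]
    have hlogpow : (0:ℝ) ≤ (Real.log 2)^k := by positivity
    calc C2 = C2 * 1 := (mul_one _).symm
      _ ≤ C2 * (2*Real.log 2)^k := mul_le_mul_of_nonneg_left h1k hC20
      _ = 4*2^k*C2*(Real.log 2)^k/(2:ℝ)^2 := by rw [mul_pow]; ring
      _ ≤ (Real.exp 2 * (6*B + 3456*(3^k*M)) + 4*2^k*C2)*(Real.log 2)^k/(2:ℝ)^2 := by
          have h4 : 0 ≤ Real.exp 2 * (6*B + 3456*(3^k*M)) * (Real.log 2)^k :=
            mul_nonneg hE1 hlogpow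
          have h5 : (0:ℝ) < (2:ℝ)^2 := by norm_num
          rw [div_le_div_iff₀ h5 h5]
          nlinarith [h4, hlogpow, hC20]
  · -- the case N ≥ 3
    have hN3 : 3 ≤ N := h3
    obtain ⟨m, hm⟩ : ∃ m, N = m + 3 := ⟨N - 3, by omega⟩
    have hNcast3 : (3:ℝ) ≤ (N:ℝ) := by exact_mod_cast hN3
    have hN0 : (0:ℝ) < N := by linarith
    set c : ℝ := (N:ℝ)⁻¹ with hcdef
    have hc0 : 0 < c := by rw [hcdef]; positivity
    have hc3 : c ≤ 1/3 := by
      rw [hcdef]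
      calc (N:ℝ)⁻¹ ≤ (3:ℝ)⁻¹ := inv_anti₀ (by norm_num) hNcast3
        _ = 1/3 := by norm_num
    have hc2 : c ≤ 1/2 := by linarith
    set r : ℝ := 1 - c with hrdef
    have hr0 : 0 < r := by rw [hrdef]; linarith
    have hr1 : r < 1 := by rw [hrdef]; linarith
    have hsubr : closedBall (0:ℂ) r ⊆ Ω := by
      intro z hz
      rw [mem_closedBall, dist_zero_right] at hz
      constructor
      · exact lt_of_le_of_lt hz (by linarith)
      · rintro ⟨him, hre⟩
        have := le_trans (Complex.abs_re_le_norm z) hz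
        linarith
    have hmain := TS_cauchy_integral_bound g 0 r hr0 (hgd.mono hsubr) m
    have hmemθ : ∀ θ : ℝ, circleMap 0 r θ ∈ Ω := fun θ =>
      hsubr (sphere_subset_closedBall (circleMap_mem_sphere 0 hr0.le θ))
    have hcomp : Continuous fun θ : ℝ => ‖g (circleMap 0 r θ)‖ :=
      (hgc.comp_continuous (continuous_circleMap 0 r) hmemθ).norm
    have hznorm : ∀ θ : ℝ, ‖circleMap 0 r θ‖ = r := by
      intro θ
      rw [norm_circleMap_zero, abs_of_pos hr0]
    set L : ℝ := 1 + Real.log 2 + Real.log N with hLdef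
    have hlogN1 : 1 ≤ Real.log N := by
      rw [Real.le_log_iff_exp_le (by linarith)]
      calc Real.exp 1 ≤ 2.7182818286 := Real.exp_one_lt_d9.le
        _ ≤ (N:ℝ) := by linarith
    have hlog2 : (0:ℝ) < Real.log 2 := Real.log_pos one_lt_two
    have hL0 : 0 < L := by rw [hLdef]; linarith
    set A : ℝ := 288 * M * L ^ k with hAdef
    have hA0 : 0 ≤ A := by
      rw [hAdef]
      exact mul_nonneg (by linarith) (pow_nonneg hL0.le k)
    set F : ℝ → ℝ := fun u => ((c + 3⁻¹ * u)^2)⁻¹ with hFdef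
    have hFpos : ∀ u : ℝ, 0 ≤ u → 0 < c + 3⁻¹ * u := by
      intro u hu
      have : 0 ≤ 3⁻¹ * u := by positivity
      linarith
    have hFnonneg : ∀ u : ℝ, 0 ≤ F u := by
      intro u; rw [hFdef]; positivity
    have hεhalf : ε ≤ 1/2 := hε1
    -- pointwise bound on the circle of radius r
    have hpoint : ∀ θ : ℝ, |θ| ≤ Real.pi →
        ‖g (circleMap 0 r θ)‖ ≤ B + A * F |θ| + A * F (Real.pi - |θ|) := by
      intro θ hθ
      set z := circleMap 0 r θ with hzdef
      have hz1 : ‖z‖ = r := hznorm θ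
      have hzlt : ‖z‖ < 1 := by rw [hz1]; exact hr1
      have hs1pos : 0 < c + 3⁻¹ * |θ| := hFpos _ (abs_nonneg θ)
      have hs2pos : 0 < c + 3⁻¹ * (Real.pi - |θ|) := hFpos _ (by linarith)
      have hAF1 : 0 ≤ A * F |θ| := mul_nonneg hA0 (hFnonneg _)
      have hAF2 : 0 ≤ A * F (Real.pi - |θ|) := mul_nonneg hA0 (hFnonneg _)
      by_cases h1 : ‖z - 1‖ < ε
      · -- near the singularity 1
        have hb := hnear 1 (Or.inl rfl) z hzlt h1
        set d := ‖z - (1:ℂ)‖ with hddef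
        have hd1 : (c + |θ|/3)/2 ≤ d := by
          have h := TS_circle_dist_one c θ hc0 hc2 hθ
          rw [← hrdef] at h
          exact h
        have hdc : c ≤ d := by
          have h := norm_sub_norm_le (1:ℂ) z
          rw [norm_sub_rev, norm_one] at h
          rw [hz1, hrdef] at h
          linarith
        have hd0 : 0 < d := lt_of_lt_of_le hc0 hdc
        have hdlt : d < 1 := by linarith
        have hbaseL : 1 + Real.log 2 - Real.log d ≤ L := by
          have hlogc : Real.log c ≤ Real.log d := Real.log_le_log hc0 hdc
          rw [hcdef, Real.log_inv] at hlogc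
          rw [hLdef]
          linarith
        have hbase0 : 0 < 1 + Real.log 2 - Real.log d := by
          have := Real.log_nonpos hd0.le hdlt.le
          linarith
        have hpowk : (1 + Real.log 2 - Real.log d) ^ k ≤ L ^ k :=
          pow_le_pow_left₀ hbase0.le hbaseL k
        have hkey : 72 * M * (1 + Real.log 2 - Real.log d) ^ k / d ^ 2 ≤ A * F |θ| := by
          have hFe : F |θ| = ((c + 3⁻¹ * |θ|)^2)⁻¹ := by rw [hFdef]
          have hsd : c + 3⁻¹ * |θ| ≤ 2 * d := by
            have h : c + 3⁻¹ * |θ| = c + |θ|/3 := by ring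
            linarith
          rw [hFe, hAdef]
          exact TS_key M (L^k) ((1 + Real.log 2 - Real.log d)^k) d (c + 3⁻¹ * |θ|) hM
            (pow_nonneg hL0.le k) (pow_nonneg hbase0.le k) hpowk hd0 hs1pos hsd
        calc ‖g z‖ ≤ 72 * M * (1 + Real.log 2 - Real.log d) ^ k / d ^ 2 := hb
          _ ≤ A * F |θ| := hkey
          _ ≤ B + A * F |θ| + A * F (Real.pi - |θ|) := by linarith
      · by_cases h2 : ‖z + 1‖ < ε
        · -- near the singularity -1
          have h2' : ‖z - (-1)‖ < ε := by rwa [show z - (-1) = z + 1 from by ring]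
          have hb := hnear (-1) (Or.inr rfl) z hzlt h2'
          rw [show z - (-1) = z + 1 from by ring] at hb
          set d := ‖z + 1‖ with hddef
          have hd1 : (c + (Real.pi - |θ|)/3)/2 ≤ d := by
            have h := TS_circle_dist_neg_one c θ hc0 hc2 hθ
            rw [← hrdef] at h
            exact h
          have hdc : c ≤ d := by
            have h := norm_sub_norm_le (-1:ℂ) z
            rw [norm_sub_rev] at h
            have he : ‖(-1:ℂ)‖ = 1 := by norm_num
            have he2 : ‖z - (-1)‖ = ‖z + 1‖ := by rw [show z - (-1) = z + 1 from by ring]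
            rw [he, he2, hz1, hrdef] at h
            linarith
          have hd0 : 0 < d := lt_of_lt_of_le hc0 hdc
          have hdlt : d < 1 := by linarith
          have hbaseL : 1 + Real.log 2 - Real.log d ≤ L := by
            have hlogc : Real.log c ≤ Real.log d := Real.log_le_log hc0 hdc
            rw [hcdef, Real.log_inv] at hlogc
            rw [hLdef]
            linarith
          have hbase0 : 0 < 1 + Real.log 2 - Real.log d := by
            have := Real.log_nonpos hd0.le hdlt.le
            linarith
          have hpowk : (1 + Real.log 2 - Real.log d) ^ k ≤ L ^ k :=
            pow_le_pow_left₀ hbase0.le hbaseL k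
          have hkey : 72 * M * (1 + Real.log 2 - Real.log d) ^ k / d ^ 2
              ≤ A * F (Real.pi - |θ|) := by
            have hFe : F (Real.pi - |θ|) = ((c + 3⁻¹ * (Real.pi - |θ|))^2)⁻¹ := by rw [hFdef]
            have hsd : c + 3⁻¹ * (Real.pi - |θ|) ≤ 2 * d := by
              have h : c + 3⁻¹ * (Real.pi - |θ|) = c + (Real.pi - |θ|)/3 := by ring
              linarith
            rw [hFe, hAdef]
            exact TS_key M (L^k) ((1 + Real.log 2 - Real.log d)^k) d (c + 3⁻¹ * (Real.pi - |θ|))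
              hM (pow_nonneg hL0.le k) (pow_nonneg hbase0.le k) hpowk hd0 hs2pos hsd
          calc ‖g z‖ ≤ 72 * M * (1 + Real.log 2 - Real.log d) ^ k / d ^ 2 := hb
            _ ≤ A * F (Real.pi - |θ|) := hkey
            _ ≤ B + A * F |θ| + A * F (Real.pi - |θ|) := by linarith
        · -- away from the singularities
          have hzK : z ∈ K := by
            constructor
            · rw [mem_closedBall, dist_zero_right, hz1]; linarith
            · rintro (h|h) <;> rw [mem_ball, dist_eq_norm] at h
              · exact h1 h
              · exact h2 (by rwa [show z - (-1) = z + 1 from by ring] at h)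
          have := hB z hzK
          linarith
    -- the two half-circle integral estimates
    have hQc1 : ContinuousOn F (Set.Icc 0 Real.pi) := by
      rw [hFdef]
      apply ContinuousOn.inv₀
      · fun_prop
      · intro u hu
        exact pow_ne_zero _ (hFpos u hu.1).ne'
    have hFval : ∫ θ in (0:ℝ)..Real.pi, F θ = 3*(c⁻¹ - (c + 3⁻¹*Real.pi)⁻¹) := by
      have hpos : ∀ θ ∈ Set.uIcc (0:ℝ) Real.pi, 0 < c + 3⁻¹ * θ := by
        intro θ hθ
        rw [Set.uIcc_of_le Real.pi_pos.le] at hθ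
        exact hFpos θ hθ.1
      have h := TS_int_inv_sq c 3⁻¹ 0 Real.pi (by norm_num) hpos
      rw [hFdef]
      rw [h]
      norm_num
    have hFbound : ∫ θ in (0:ℝ)..Real.pi, F θ ≤ 3*(N:ℝ) := by
      rw [hFval]
      have h1 : 0 < (c + 3⁻¹*Real.pi)⁻¹ :=
        inv_pos.mpr (hFpos Real.pi Real.pi_pos.le)
      have h2 : c⁻¹ = (N:ℝ) := by rw [hcdef, inv_inv]
      rw [h2]
      linarith
    have hi0 : ∀ a b : ℝ, IntervalIntegrable (fun θ : ℝ => ‖g (circleMap 0 r θ)‖)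
        MeasureTheory.volume a b := fun a b => hcomp.intervalIntegrable a b
    -- first half
    have hiF1 : IntervalIntegrable (fun θ : ℝ => A * F θ) MeasureTheory.volume 0 Real.pi := by
      apply ContinuousOn.intervalIntegrable
      apply continuousOn_const.mul
      rw [Set.uIcc_of_le Real.pi_pos.le]
      exact hQc1
    have hiF2 : IntervalIntegrable (fun θ : ℝ => A * F (Real.pi - θ))
        MeasureTheory.volume 0 Real.pi := by
      apply ContinuousOn.intervalIntegrable
      apply continuousOn_const.mul
      rw [Set.uIcc_of_le Real.pi_pos.le]
      apply hQc1.comp (by fun_prop)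
      intro u hu
      simp only [Set.mem_Icc] at hu ⊢
      constructor <;> linarith [hu.1, hu.2]
    have hhalf1 : ∫ θ in (0:ℝ)..Real.pi, ‖g (circleMap 0 r θ)‖
        ≤ Real.pi * B + 6*A*(N:ℝ) := by
      have hmono : ∫ θ in (0:ℝ)..Real.pi, ‖g (circleMap 0 r θ)‖
          ≤ ∫ θ in (0:ℝ)..Real.pi, (B + A * F θ + A * F (Real.pi - θ)) := by
        apply intervalIntegral.integral_mono_on Real.pi_pos.le (hi0 0 Real.pi)
          ((intervalIntegrable_const.add hiF1).add hiF2)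
        intro θ hθ
        have h := hpoint θ (by rw [abs_of_nonneg hθ.1]; exact hθ.2)
        rwa [abs_of_nonneg hθ.1] at h
      have hval : ∫ θ in (0:ℝ)..Real.pi, (B + A * F θ + A * F (Real.pi - θ))
          = Real.pi * B + A * (∫ θ in (0:ℝ)..Real.pi, F θ)
            + A * (∫ θ in (0:ℝ)..Real.pi, F (Real.pi - θ)) := by
        rw [intervalIntegral.integral_add (intervalIntegrable_const.add hiF1) hiF2,
          intervalIntegral.integral_add intervalIntegrable_const hiF1,
          intervalIntegral.integral_const, intervalIntegral.integral_const_mul,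
          intervalIntegral.integral_const_mul]
        simp [smul_eq_mul]
      have hsubst : ∫ θ in (0:ℝ)..Real.pi, F (Real.pi - θ)
          = ∫ θ in (0:ℝ)..Real.pi, F θ := by
        rw [intervalIntegral.integral_comp_sub_left F Real.pi]
        norm_num
      rw [hval, hsubst] at hmono
      have hAS := mul_le_mul_of_nonneg_left hFbound hA0
      linarith
    -- second half
    have hiG1 : IntervalIntegrable (fun θ : ℝ => A * F (-θ))
        MeasureTheory.volume (-Real.pi) 0 := by
      apply ContinuousOn.intervalIntegrable
      apply continuousOn_const.mul
      rw [Set.uIcc_of_le (by linarith [Real.pi_pos] : -Real.pi ≤ 0)]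
      apply hQc1.comp (by fun_prop)
      intro u hu
      simp only [Set.mem_Icc] at hu ⊢
      constructor <;> linarith [hu.1, hu.2]
    have hiG2 : IntervalIntegrable (fun θ : ℝ => A * F (θ + Real.pi))
        MeasureTheory.volume (-Real.pi) 0 := by
      apply ContinuousOn.intervalIntegrable
      apply continuousOn_const.mul
      rw [Set.uIcc_of_le (by linarith [Real.pi_pos] : -Real.pi ≤ 0)]
      apply hQc1.comp (by fun_prop)
      intro u hu
      simp only [Set.mem_Icc] at hu ⊢
      constructor <;> linarith [hu.1, hu.2]
    have hhalf2 : ∫ θ in (-Real.pi)..(0:ℝ), ‖g (circleMap 0 r θ)‖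
        ≤ Real.pi * B + 6*A*(N:ℝ) := by
      have hmono : ∫ θ in (-Real.pi)..(0:ℝ), ‖g (circleMap 0 r θ)‖
          ≤ ∫ θ in (-Real.pi)..(0:ℝ), (B + A * F (-θ) + A * F (θ + Real.pi)) := by
        apply intervalIntegral.integral_mono_on (by linarith [Real.pi_pos])
          (hi0 (-Real.pi) 0) ((intervalIntegrable_const.add hiG1).add hiG2)
        intro θ hθ
        have h := hpoint θ (by rw [abs_of_nonpos hθ.2]; linarith [hθ.1])
        rw [abs_of_nonpos hθ.2] at h
        rwa [show Real.pi - -θ = θ + Real.pi from by ring] at h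
      have hval : ∫ θ in (-Real.pi)..(0:ℝ), (B + A * F (-θ) + A * F (θ + Real.pi))
          = Real.pi * B + A * (∫ θ in (-Real.pi)..(0:ℝ), F (-θ))
            + A * (∫ θ in (-Real.pi)..(0:ℝ), F (θ + Real.pi)) := by
        rw [intervalIntegral.integral_add (intervalIntegrable_const.add hiG1) hiG2,
          intervalIntegral.integral_add intervalIntegrable_const hiG1,
          intervalIntegral.integral_const, intervalIntegral.integral_const_mul,
          intervalIntegral.integral_const_mul]
        simp [smul_eq_mul]
      have hsubst1 : ∫ θ in (-Real.pi)..(0:ℝ), F (-θ) = ∫ θ in (0:ℝ)..Real.pi, F θ := by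
        rw [intervalIntegral.integral_comp_neg F]
        norm_num
      have hsubst2 : ∫ θ in (-Real.pi)..(0:ℝ), F (θ + Real.pi)
          = ∫ θ in (0:ℝ)..Real.pi, F θ := by
        rw [intervalIntegral.integral_comp_add_right F Real.pi]
        norm_num
      rw [hval, hsubst1, hsubst2] at hmono
      have hAS := mul_le_mul_of_nonneg_left hFbound hA0
      linarith
    -- assemble the full integral
    set I : ℝ := ∫ θ in (0:ℝ)..2*Real.pi, ‖g (circleMap 0 r θ)‖ with hIdef
    have hper : Function.Periodic (fun θ : ℝ => ‖g (circleMap 0 r θ)‖) (2*Real.pi) :=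
      fun θ => congrArg (fun w => ‖g w‖) (periodic_circleMap 0 r θ)
    have hshift := hper.intervalIntegral_add_eq 0 (-Real.pi)
    rw [show (0:ℝ) + 2*Real.pi = 2*Real.pi from by ring,
      show -Real.pi + 2*Real.pi = Real.pi from by ring] at hshift
    have hsplit := intervalIntegral.integral_add_adjacent_intervals
      (hi0 (-Real.pi) 0) (hi0 0 Real.pi)
    have hI : I ≤ 2*Real.pi*B + 12*A*(N:ℝ) := by
      rw [hIdef, hshift, ← hsplit]
      linarith
    have hI0 : 0 ≤ I := by
      rw [hIdef, hshift, ← hsplit]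
      have n1 := intervalIntegral.integral_nonneg (μ := MeasureTheory.volume)
        (f := fun u : ℝ => ‖g (circleMap 0 r u)‖)
        (by linarith [Real.pi_pos] : -Real.pi ≤ (0:ℝ))
        (fun u _ => norm_nonneg (g (circleMap 0 r u)))
      have n2 := intervalIntegral.integral_nonneg (μ := MeasureTheory.volume)
        (f := fun u : ℝ => ‖g (circleMap 0 r u)‖) Real.pi_pos.le
        (fun u _ => norm_nonneg (g (circleMap 0 r u)))
      linarith
    -- bound (2π)⁻¹ I
    have hAN0 : 0 ≤ A*(N:ℝ) := mul_nonneg hA0 hN0.le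
    have hP : (2*Real.pi)⁻¹ * I ≤ B + 2*(A*(N:ℝ)) := by
      have h1 : (2*Real.pi)⁻¹ * I ≤ (2*Real.pi)⁻¹ * (2*Real.pi*B + 12*A*(N:ℝ)) :=
        mul_le_mul_of_nonneg_left hI (by positivity)
      have h2 : (2*Real.pi)⁻¹ * (2*Real.pi*B + 12*A*(N:ℝ)) = B + 6*(A*(N:ℝ))/Real.pi := by
        field_simp
        ring
      have h3 := TS_six_div_pi (A*(N:ℝ)) Real.pi hAN0 Real.pi_gt_three
      rw [h2] at h1
      linarith
    have hP0 : 0 ≤ (2*Real.pi)⁻¹ * I := mul_nonneg (by positivity) hI0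
    -- bound r⁻¹ ^ m
    have hEm : r⁻¹ ^ m ≤ Real.exp 2 := by
      have hrinv : r⁻¹ ≤ 1 + 2*c := by
        have h1 : 1 ≤ r*(1+2*c) := by rw [hrdef]; nlinarith
        have h2 := mul_le_mul_of_nonneg_left h1 (inv_nonneg.mpr hr0.le)
        rw [mul_one, ← mul_assoc, inv_mul_cancel₀ hr0.ne', one_mul] at h2
        exact h2
      have hexp : 1 + 2*c ≤ Real.exp (2*c) := by
        have := Real.add_one_le_exp (2*c)
        linarith
      have hp1 : r⁻¹ ^ m ≤ (1+2*c)^m := pow_le_pow_left₀ (inv_nonneg.mpr hr0.le) hrinv m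
      have hp2 : (1+2*c)^m ≤ Real.exp (2*c) ^ m :=
        pow_le_pow_left₀ (by linarith [hc0] : (0:ℝ) ≤ 1+2*c) hexp m
      have hp3 : Real.exp (2*c) ^ m = Real.exp ((m:ℝ)*(2*c)) := (Real.exp_nat_mul _ m).symm
      have hmN : (m:ℝ) ≤ (N:ℝ) := by rw [hm]; push_cast; linarith
      have hp4 : (m:ℝ)*(2*c) ≤ 2 := by
        rw [hcdef]
        have h5 : (m:ℝ) * (N:ℝ)⁻¹ ≤ 1 := by
          rw [← div_eq_mul_inv, div_le_one hN0]
          exact hmN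
        nlinarith
      calc r⁻¹ ^ m ≤ (1+2*c)^m := hp1
        _ ≤ Real.exp (2*c) ^ m := hp2
        _ = Real.exp ((m:ℝ)*(2*c)) := hp3
        _ ≤ Real.exp 2 := Real.exp_le_exp.mpr hp4
    -- factorial ratio
    have hNfacpos : (0:ℝ) < (N.factorial : ℝ) := by exact_mod_cast N.factorial_pos
    have hmfacpos : (0:ℝ) < (m.factorial : ℝ) := by exact_mod_cast m.factorial_pos
    have hfactR : ((N.factorial : ℕ) : ℝ)
        = ((m:ℝ)+3)*(((m:ℝ)+2)*(((m:ℝ)+1)*(m.factorial : ℝ))) := by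
      rw [hm, show m + 3 = (m + 2) + 1 from rfl, Nat.factorial_succ,
        show m + 2 = (m + 1) + 1 from rfl, Nat.factorial_succ, Nat.factorial_succ]
      push_cast
      ring
    have hNm : (N:ℝ) = (m:ℝ)+3 := by rw [hm]; push_cast; ring
    have hfr : (m.factorial : ℝ)/(N.factorial : ℝ) ≤ 6/(N:ℝ)^3 := by
      rw [div_le_div_iff₀ hNfacpos (by positivity)]
      rw [hfactR, hNm]
      exact TS_fact_ratio (m:ℝ) (m.factorial:ℝ) (Nat.cast_nonneg m) hmfacpos
    -- the log bounds
    have hL3 : L ≤ 3*Real.log N := by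
      rw [hLdef]
      have := Real.log_two_lt_d9
      linarith
    have hLk : L^k ≤ (3*Real.log N)^k := pow_le_pow_left₀ hL0.le hL3 k
    have hA' : A ≤ 288*(3^k*M)*(Real.log N)^k := by
      rw [hAdef]
      calc 288*M*L^k ≤ 288*M*(3*Real.log N)^k := by
            apply mul_le_mul_of_nonneg_left hLk (by positivity)
        _ = 288*(3^k*M)*(Real.log N)^k := by rw [mul_pow]; ring
    have hlogk1 : 1 ≤ (Real.log N)^k := one_le_pow₀ hlogN1
    have hBA0 : 0 ≤ B + 2*(A*(N:ℝ)) := by linarith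
    -- final assembly
    have hMder : iteratedDeriv N f 0 = iteratedDeriv m g 0 := by rw [hm, hiter m]
    rw [hMder, norm_div, Complex.norm_natCast]
    have hC20 : 0 ≤ C2 := norm_nonneg _
    calc ‖iteratedDeriv m g 0‖ / (N.factorial : ℝ)
        ≤ ((m.factorial : ℝ) * ((2*Real.pi)⁻¹ * I) * r⁻¹^m) / (N.factorial : ℝ) := by
          have := mul_le_mul_of_nonneg_right hmain (inv_nonneg.mpr hNfacpos.le)
          simpa [div_eq_mul_inv] using this
      _ = ((2*Real.pi)⁻¹ * I) * (r⁻¹^m) * ((m.factorial : ℝ)/(N.factorial : ℝ)) := by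
          ring
      _ ≤ ((B + 2*(A*(N:ℝ))) * Real.exp 2) * (6/(N:ℝ)^3) := by
          apply mul_le_mul (mul_le_mul hP hEm (by positivity) hBA0) hfr
            (by positivity) (mul_nonneg hBA0 (Real.exp_pos 2).le)
      _ = (B + 2*A*(N:ℝ)) * Real.exp 2 * (6/(N:ℝ)^3) := by ring
      _ ≤ (Real.exp 2 * (6*B + 3456*(3^k*M)) + 4*2^k*C2) * (Real.log N)^k / (N:ℝ)^2 :=
          TS_final B (3^k*M) (Real.exp 2) ((Real.log N)^k) (N:ℝ) (4*2^k*C2) A hB0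
            (by positivity) (Real.exp_pos 2) hlogk1 hNcast3 (by positivity) hA0 hA'
end

section
/- For all integers K ≥ 2 and n ≥ 1 there is a constant C > 0 with the following property. Let 2 ≤ k ≤ K, let g ≥ 1 be an integer, and let g_1, …, g_k ≥ 0 and n_1, …, n_k ≥ 1 be integers such that 2g_v − 2 + n_v ≥ 1 for every v, ∑_{v=1}^k n_v = n, and ∑_{v=1}^k (2g_v − 2 + n_v) = 2g − 2 + n. Then ∏_{v=1}^k (6g_v − 5 + 2n_v)!!/(g_v!·24^{g_v}) ≤ C·((6g − 5 + 2n)!!/(g!·24^{g}))·(∏_{v=1}^k (2g_v − 2 + n_v)!)/(2g − 2 + n)!. -/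
open Nat Finset

lemma df_fact' : ∀ m : ℕ, 1 ≤ m → (2*m-1)‼ * (2^m * (m)!) = (2*m)!
  | 1, _ => rfl
  | (m+2), _ => by
    have ih := df_fact' (m+1) (Nat.le_add_left 1 m)
    have h1 : 2*(m+2)-1 = (2*(m+1)-1) + 2 := by omega
    have h2 : 2*(m+2) = (2*(m+1)) + 2 := by omega
    rw [h1, Nat.doubleFactorial_add_two, h2]
    rw [show (2*(m+1)+2)! = (2*(m+1)+2) * ((2*(m+1)+1) * (2*(m+1))!) by
      rw [← Nat.factorial_succ, ← Nat.factorial_succ]]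
    rw [← ih]
    have h3 : 2*(m+1)-1+2 = 2*(m+1)+1 := by omega
    rw [h3, pow_succ, Nat.factorial_succ]
    ring



lemma choose_pair (a b c d : ℕ) :
    (a+b).choose b * (c+d).choose d ≤ (a+b+(c+d)).choose (b+d) := by
  calc (a+b).choose b * (c+d).choose d
      ≤ ∑ ij ∈ Finset.HasAntidiagonal.antidiagonal (b+d), (a+b).choose ij.1 * (c+d).choose ij.2 :=
        Finset.single_le_sum (f := fun (ij : ℕ × ℕ) => (a+b).choose ij.1 * (c+d).choose ij.2)
          (a := ((b, d) : ℕ × ℕ))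
          (fun i _ => Nat.zero_le _) (Finset.HasAntidiagonal.mem_antidiagonal.2 rfl)
    _ = (a+b+(c+d)).choose (b+d) := (Nat.add_choose_eq _ _ _).symm

/-- Factorial form of the pair Vandermonde bound. -/
lemma fact_pair (a b c d : ℕ) :
    (a+b)! * (c+d)! * ((a+c)! * (b+d)!) ≤ (a+b+c+d)! * ((a)! * (b)! * ((c)! * (d)!)) := by
  have h := choose_pair a b c d
  have e1 := Nat.add_choose_mul_factorial_mul_factorial a b
  have e2 := Nat.add_choose_mul_factorial_mul_factorial c d
  have e3 := Nat.add_choose_mul_factorial_mul_factorial (a+c) (b+d)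
  rw [show a+c+(b+d) = a+b+(c+d) by ring] at e3
  calc (a+b)! * (c+d)! * ((a+c)! * (b+d)!)
      = ((a+b).choose b * (c+d).choose d) * ((a+c)! * (b+d)!) * ((a)! * (b)! * ((c)! * (d)!)) := by
        rw [← e1, ← e2]; ring
    _ ≤ (a+b+(c+d)).choose (b+d) * ((a+c)! * (b+d)!) * ((a)! * (b)! * ((c)! * (d)!)) :=
        Nat.mul_le_mul_right _ (Nat.mul_le_mul_right _ h)
    _ = (a+b+c+d)! * ((a)! * (b)! * ((c)! * (d)!)) := by
        rw [show a+b+c+d = a+b+(c+d) by ring, ← e3]; ring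

/-- Multinomial doubling: `multinomial(2f) ≥ multinomial(f)^2`, in factorial form. -/
lemma lemA {ι : Type*} [DecidableEq ι] (s : Finset ι) (f : ι → ℕ) :
    (∑ i ∈ s, f i)! ^ 2 * ∏ i ∈ s, (2 * f i)! ≤ (2 * ∑ i ∈ s, f i)! * ∏ i ∈ s, ((f i))! ^ 2 := by
  induction s using Finset.induction_on with
  | empty => simp
  | insert a s ha ih =>
    rw [Finset.sum_insert ha, Finset.prod_insert ha, Finset.prod_insert ha]
    set A := f a
    set B := ∑ i ∈ s, f i
    have P1 := fact_pair A A B B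
    rw [show A+A+B+B = 2*A+2*B by ring, show A+A = 2*A by ring, show B+B = 2*B by ring] at P1
    have key : (A+B)! ^ 2 * ((2*A)! * ∏ i ∈ s, (2 * f i)!) * ((B)! ^2 * (2*B)!)
        ≤ (2 * (A+B))! * (((A))! ^2 * ∏ i ∈ s, ((f i))! ^ 2) * ((B)! ^2 * (2*B)!) := by
      calc (A+B)! ^ 2 * ((2*A)! * ∏ i ∈ s, (2 * f i)!) * ((B)! ^2 * (2*B)!)
          = ((2*A)! * (2*B)! * ((A+B)! * (A+B)!)) * ((B)!^2 * ∏ i ∈ s, (2*f i)!) := by ring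
        _ ≤ ((2*A+2*B)! * ((A)! * (A)! * ((B)! * (B)!))) * ((2*B)! * ∏ i ∈ s, ((f i))!^2) :=
            Nat.mul_le_mul P1 ih
        _ = (2*(A+B))! * ((A)!^2 * ∏ i ∈ s, ((f i))!^2) * ((B)!^2 * (2*B)!) := by
            rw [show 2*(A+B) = 2*A+2*B by ring]; ring
    exact Nat.le_of_mul_le_mul_right key (by positivity)

/-- Product of binomials bound (Vandermonde), factorial form. -/
lemma lemB {ι : Type*} [DecidableEq ι] (s : Finset ι) (d g : ι → ℕ) :
    (∏ i ∈ s, (d i + g i)!) * ((∑ i ∈ s, d i)! * (∑ i ∈ s, g i)!)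
      ≤ (∑ i ∈ s, (d i + g i))! * ((∏ i ∈ s, (d i)!) * ∏ i ∈ s, (g i)!) := by
  induction s using Finset.induction_on with
  | empty => simp
  | insert a s ha ih =>
    rw [Finset.sum_insert ha, Finset.sum_insert ha, Finset.sum_insert ha,
      Finset.prod_insert ha, Finset.prod_insert ha, Finset.prod_insert ha]
    set A := d a
    set Bg := g a
    set Ds := ∑ i ∈ s, d i
    set Gs := ∑ i ∈ s, g i
    set Pm := ∏ i ∈ s, (d i + g i)!
    set Pd := ∏ i ∈ s, (d i)!
    set Pg := ∏ i ∈ s, (g i)!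
    have hsum : ∑ i ∈ s, (d i + g i) = Ds + Gs := Finset.sum_add_distrib
    rw [hsum] at ih ⊢
    have P2 := fact_pair A Bg Ds Gs
    have key : (A+Bg)! * Pm * ((A + Ds)! * (Bg + Gs)!) * ((Ds)! * (Gs)! * (Ds+Gs)!)
        ≤ (A + Bg + (Ds + Gs))! * ((A)! * Pd * ((Bg)! * Pg)) * ((Ds)! * (Gs)! * (Ds+Gs)!) := by
      calc (A+Bg)! * Pm * ((A + Ds)! * (Bg + Gs)!) * ((Ds)! * (Gs)! * (Ds+Gs)!)
          = ((A+Bg)! * (Ds+Gs)! * ((A+Ds)! * (Bg+Gs)!)) * (Pm * ((Ds)! * (Gs)!)) := by ring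
        _ ≤ ((A+Bg+Ds+Gs)! * ((A)! * (Bg)! * ((Ds)! * (Gs)!))) * ((Ds+Gs)! * (Pd * Pg)) :=
            Nat.mul_le_mul P2 ih
        _ = (A + Bg + (Ds + Gs))! * ((A)! * Pd * ((Bg)! * Pg)) * ((Ds)! * (Gs)! * (Ds+Gs)!) := by
            rw [show A+Bg+(Ds+Gs) = A+Bg+Ds+Gs by ring]; ring
    exact Nat.le_of_mul_le_mul_right key
      (by positivity)

lemma fact_le_shift (a : ℕ) : ∀ t : ℕ, (a + t)! ≤ (a)! * (a + t)^t
  | 0 => by simp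
  | t+1 => by
    have ih := fact_le_shift a t
    calc (a + (t+1))! = (a+t+1) * (a+t)! := by rw [show a+(t+1) = (a+t)+1 by ring, Nat.factorial_succ]
      _ ≤ (a+t+1) * ((a)! * (a+t)^t) := Nat.mul_le_mul_left _ ih
      _ ≤ (a+t+1) * ((a)! * (a+t+1)^t) :=
          Nat.mul_le_mul_left _ (Nat.mul_le_mul_left _ (Nat.pow_le_pow_left (by omega) t))
      _ = (a)! * (a+t+1)^(t+1) := by rw [pow_succ]; ring
      _ = (a)! * (a+(t+1))^(t+1) := by rw [show a+t+1 = a+(t+1) by ring]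

lemma shift_le_fact (a : ℕ) : ∀ t : ℕ, (a)! * (a+1)^t ≤ (a + t)!
  | 0 => by simp
  | t+1 => by
    have ih := shift_le_fact a t
    calc (a)! * (a+1)^(t+1) = ((a)! * (a+1)^t) * (a+1) := by rw [pow_succ]; ring
      _ ≤ (a+t)! * (a+t+1) := Nat.mul_le_mul ih (by omega)
      _ = (a + (t+1))! := by rw [show a+(t+1) = (a+t)+1 by ring, Nat.factorial_succ]; ring

lemma key_nat (K n : ℕ) (hK : 2 ≤ K) (hn : 1 ≤ n)
    (k : ℕ) (hk2 : 2 ≤ k) (hkK : k ≤ K) (g : ℕ) (hg : 1 ≤ g)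
    (gs ns : Fin k → ℕ) (hns1 : ∀ v, 1 ≤ ns v)
    (hd1 : ∀ v, (1 : ℤ) ≤ 2 * (gs v : ℤ) - 2 + (ns v : ℤ))
    (hsum_n : ∑ v, ns v = n)
    (hEuler : ∑ v, (2 * (gs v : ℤ) - 2 + (ns v : ℤ)) = 2 * (g : ℤ) - 2 + (n : ℤ)) :
    (∏ v, (6*gs v + 2*ns v - 5)‼) * ((g)! * 24^g * (2*g+n-2)!)
      ≤ (4*(1+K)^2*(3+n))^K * (6*g+2*n-5)‼
        * ((∏ v, (gs v)!) * 24^(g+(k-1)) * ∏ v, (2*gs v + ns v - 2)!) := by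
  have hd3 : ∀ v, 3 ≤ 2 * gs v + ns v := fun v => by have := hd1 v; omega
  -- sums
  have hgsZ : (∑ v, (gs v : ℤ)) = g + k - 1 := by
    have h : ∑ v, (2 * (gs v : ℤ) - 2 + (ns v : ℤ))
        = 2 * (∑ v, (gs v : ℤ)) - 2 * k + ∑ v, (ns v : ℤ) := by
      rw [Finset.sum_add_distrib, Finset.sum_sub_distrib, ← Finset.mul_sum,
        Finset.sum_const, Finset.card_univ, Fintype.card_fin]
      ring
    have hnsZ : (∑ v, (ns v : ℤ)) = n := by exact_mod_cast congrArg (Nat.cast : ℕ → ℤ) hsum_n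
    rw [hEuler, hnsZ] at h
    linarith
  have hG : (∑ v, gs v) = g + (k-1) := by
    have hc : ((∑ v, gs v : ℕ) : ℤ) = (g : ℤ) + k - 1 := by push_cast; exact hgsZ
    omega
  have hnsZ : (∑ v, (ns v : ℤ)) = n := by exact_mod_cast congrArg (Nat.cast : ℕ → ℤ) hsum_n
  have hD : (∑ v, (2*gs v + ns v - 2)) = 2*g + n - 2 := by
    have hc : ((∑ v, (2*gs v + ns v - 2) : ℕ) : ℤ) = 2*(g:ℤ) + n - 2 := by
      push_cast
      rw [Finset.sum_congr rfl (fun v _ => by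
        have h3 := hd3 v
        have : ((2*gs v + ns v - 2 : ℕ) : ℤ) = 2*(gs v:ℤ) + ns v - 2 := by omega
        exact this)]
      rw [Finset.sum_sub_distrib, Finset.sum_add_distrib, ← Finset.mul_sum,
        Finset.sum_const, Finset.card_univ, Fintype.card_fin, hgsZ, hnsZ]
      push_cast
      ring
    omega
  -- abbreviations
  set Dn := 2*g + n - 2 with hDn
  set Mn := Dn + g with hMn
  set Gn := g + (k-1) with hGn
  set Sn := Mn + (k-1) with hSn
  set P := ∏ v, (6*gs v + 2*ns v - 5)‼ with hP
  set Q := (6*g+2*n-5)‼ with hQ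
  set Pm := ∏ v, ((2*gs v + ns v - 2) + gs v)! with hPm
  set Pd := ∏ v, (2*gs v + ns v - 2)! with hPd
  set Pg := ∏ v, (gs v)! with hPg
  set c0K := (4*(1+K)^2*(3+n))^K with hc0K
  have hPmpos : 0 < Pm := Finset.prod_pos fun v _ => Nat.factorial_pos _
  clear_value Dn Mn Gn Sn P Q Pm Pd Pg c0K
  have hS : (∑ v, ((2*gs v + ns v - 2) + gs v)) = Sn := by
    rw [Finset.sum_add_distrib, hD, hG]; omega
  -- N1
  have N1 : P * (2^Sn * Pm) = ∏ v, (2 * ((2*gs v + ns v - 2) + gs v))! := by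
    rw [← hS, ← Finset.prod_pow_eq_pow_sum, hP, hPm, ← Finset.prod_mul_distrib,
      ← Finset.prod_mul_distrib]
    refine Finset.prod_congr rfl fun v _ => ?_
    have h3 := hd3 v
    rw [show 6*gs v + 2*ns v - 5 = 2*((2*gs v + ns v - 2) + gs v) - 1 by omega]
    exact df_fact' _ (by omega)
  have hA := lemA (Finset.univ : Finset (Fin k)) (fun v => (2*gs v + ns v - 2) + gs v)
  rw [hS] at hA
  -- E1
  have E1 : P * 2^Sn * (Sn)! ^ 2 ≤ (2*Sn)! * Pm := by
    have key : (P * 2^Sn * (Sn)! ^ 2) * Pm ≤ ((2*Sn)! * Pm) * Pm := by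
      calc (P * 2^Sn * (Sn)! ^ 2) * Pm
          = (Sn)! ^2 * (P * (2^Sn * Pm)) := by ring
        _ = (Sn)! ^2 * ∏ v, (2 * ((2*gs v + ns v - 2) + gs v))! := by rw [N1]
        _ ≤ (2*Sn)! * ∏ v, (((2*gs v + ns v - 2) + gs v))! ^ 2 := hA
        _ = ((2*Sn)! * Pm) * Pm := by
            rw [Finset.prod_pow, ← hPm]; ring
    exact Nat.le_of_mul_le_mul_right key hPmpos
  -- N3, N4, N5, N6
  have N3 : (2*Sn)! ≤ (2*Mn)! * (2*Sn)^(2*(k-1)) := by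
    have h := fact_le_shift (2*Mn) (2*(k-1))
    rwa [show 2*Mn + 2*(k-1) = 2*Sn by omega] at h
  have N4 : (Mn)! * (Mn+1)^(k-1) ≤ (Sn)! := by
    have h := shift_le_fact Mn (k-1)
    rwa [show Mn + (k-1) = Sn by omega] at h
  have N5 : Q * (2^Mn * (Mn)!) = (2*Mn)! := by
    rw [hQ, show 6*g+2*n-5 = 2*Mn - 1 by omega]
    exact df_fact' _ (by omega)
  have N6 : Pm * ((Dn)! * (Gn)!) ≤ (Sn)! * (Pd * Pg) := by
    have h := lemB (Finset.univ : Finset (Fin k)) (fun v => 2*gs v + ns v - 2) gs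
    rw [hD, hG, hS] at h
    rw [hPm, hPd, hPg]
    exact h
  -- E4
  have E4 : P * 2^Sn * (Sn)! * ((Dn)! * (Gn)!)
      ≤ Q * 2^Mn * (Mn)! * ((2*Sn)^(2*(k-1)) * (Pd * Pg)) := by
    have key : (P * 2^Sn * (Sn)! * ((Dn)! * (Gn)!)) * (Sn)!
        ≤ (Q * 2^Mn * (Mn)! * ((2*Sn)^(2*(k-1)) * (Pd * Pg))) * (Sn)! := by
      calc (P * 2^Sn * (Sn)! * ((Dn)! * (Gn)!)) * (Sn)!
          = (P * 2^Sn * (Sn)!^2) * ((Dn)! * (Gn)!) := by ring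
        _ ≤ ((2*Sn)! * Pm) * ((Dn)! * (Gn)!) := Nat.mul_le_mul_right _ E1
        _ = (2*Sn)! * (Pm * ((Dn)! * (Gn)!)) := by ring
        _ ≤ ((2*Mn)! * (2*Sn)^(2*(k-1))) * ((Sn)! * (Pd * Pg)) := Nat.mul_le_mul N3 N6
        _ = (Q * (2^Mn * (Mn)!)) * (2*Sn)^(2*(k-1)) * ((Sn)! * (Pd * Pg)) := by rw [N5]
        _ = (Q * 2^Mn * (Mn)! * ((2*Sn)^(2*(k-1)) * (Pd * Pg))) * (Sn)! := by ring
    exact Nat.le_of_mul_le_mul_right key (Nat.factorial_pos _)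
  -- E5
  have E5 : P * ((Mn+1)^(k-1) * ((Dn)! * (Gn)!)) ≤ Q * ((2*Sn)^(2*(k-1)) * (Pd * Pg)) := by
    have key : (P * ((Mn+1)^(k-1) * ((Dn)! * (Gn)!))) * (2^Mn * (Mn)!)
        ≤ (Q * ((2*Sn)^(2*(k-1)) * (Pd * Pg))) * (2^Mn * (Mn)!) := by
      calc (P * ((Mn+1)^(k-1) * ((Dn)! * (Gn)!))) * (2^Mn * (Mn)!)
          = (2^Mn * ((Mn)! * (Mn+1)^(k-1))) * (P * ((Dn)! * (Gn)!)) := by ring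
        _ ≤ (2^Sn * (Sn)!) * (P * ((Dn)! * (Gn)!)) :=
            Nat.mul_le_mul (Nat.mul_le_mul
              (Nat.pow_le_pow_right (by norm_num) (by omega)) N4) le_rfl
        _ = P * 2^Sn * (Sn)! * ((Dn)! * (Gn)!) := by ring
        _ ≤ Q * 2^Mn * (Mn)! * ((2*Sn)^(2*(k-1)) * (Pd * Pg)) := E4
        _ = (Q * ((2*Sn)^(2*(k-1)) * (Pd * Pg))) * (2^Mn * (Mn)!) := by ring
    exact Nat.le_of_mul_le_mul_right key (by positivity)
  -- E6
  have hMlin : Mn + 2 = 3*g + n := by omega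
  have h1 : Sn ≤ (1+K)*(Mn+1) := by
    rw [show (1+K)*(Mn+1) = Mn + K + (1 + K*Mn) by ring]
    exact le_trans (by omega) (Nat.le_add_right _ _)
  have h2 : Mn + 1 ≤ (3+n)*(g+1) := by
    rw [show (3+n)*(g+1) = (3*g + n + 3) + n*g by ring]
    exact le_trans (show Mn + 1 ≤ 3*g + n + 3 by omega) (Nat.le_add_right _ _)
  have hq : (2*Sn)^2 ≤ (4*(1+K)^2*(3+n)) * (24*((g+1)*(Mn+1))) := by
    calc (2*Sn)^2 = 4*(Sn*Sn) := by ring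
      _ ≤ 4*(((1+K)*(Mn+1))*((1+K)*(Mn+1))) := Nat.mul_le_mul_left _ (Nat.mul_le_mul h1 h1)
      _ = (4*(1+K)^2)*((Mn+1)*(Mn+1)) := by ring
      _ ≤ (4*(1+K)^2)*((Mn+1)*((3+n)*(g+1))) :=
          Nat.mul_le_mul_left _ (Nat.mul_le_mul_left _ h2)
      _ = (4*(1+K)^2*(3+n))*((g+1)*(Mn+1)) := by ring
      _ ≤ (4*(1+K)^2*(3+n))*(24*((g+1)*(Mn+1))) :=
          Nat.mul_le_mul_left _ (Nat.le_mul_of_pos_left _ (by norm_num))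
  have hGfac : (g)! * (g+1)^(k-1) ≤ (g+(k-1))! := shift_le_fact g (k-1)
  have E6 : (2*Sn)^(2*(k-1)) * ((g)! * 24^g) ≤ c0K * (24^Gn * ((Gn)! * (Mn+1)^(k-1))) := by
    calc (2*Sn)^(2*(k-1)) * ((g)! * 24^g)
        = ((2*Sn)^2)^(k-1) * ((g)! * 24^g) := by rw [← pow_mul]
      _ ≤ ((4*(1+K)^2*(3+n)) * (24*((g+1)*(Mn+1))))^(k-1) * ((g)! * 24^g) :=
          Nat.mul_le_mul_right _ (Nat.pow_le_pow_left hq _)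
      _ = (4*(1+K)^2*(3+n))^(k-1) * (24^(k-1) * ((g+1)^(k-1) * (Mn+1)^(k-1))) * ((g)! * 24^g) := by
          rw [mul_pow, show (24*((g+1)*(Mn+1)))^(k-1)
            = 24^(k-1)*((g+1)^(k-1)*(Mn+1)^(k-1)) from by rw [mul_pow, mul_pow]]
      _ ≤ (4*(1+K)^2*(3+n))^K * (24^(k-1) * ((g+1)^(k-1) * (Mn+1)^(k-1))) * ((g)! * 24^g) :=
          Nat.mul_le_mul_right _ (Nat.mul_le_mul_right _
            (Nat.pow_le_pow_right (by positivity) (by omega)))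
      _ = (4*(1+K)^2*(3+n))^K * ((24^g * 24^(k-1)) * (((g)! * (g+1)^(k-1)) * (Mn+1)^(k-1))) := by
          ring
      _ ≤ c0K * (24^Gn * ((Gn)! * (Mn+1)^(k-1))) := by
          rw [hc0K]
          refine Nat.mul_le_mul_left _ ?_
          rw [hGn, pow_add]
          exact Nat.mul_le_mul le_rfl (Nat.mul_le_mul_right _ hGfac)
  -- final combination
  have final : (P * ((g)! * 24^g * (Dn)!)) * ((Gn)! * (Mn+1)^(k-1))
      ≤ (c0K * Q * (Pg * 24^Gn * Pd)) * ((Gn)! * (Mn+1)^(k-1)) := by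
    calc (P * ((g)! * 24^g * (Dn)!)) * ((Gn)! * (Mn+1)^(k-1))
        = (P * ((Mn+1)^(k-1) * ((Dn)! * (Gn)!))) * ((g)! * 24^g) := by ring
      _ ≤ (Q * ((2*Sn)^(2*(k-1)) * (Pd * Pg))) * ((g)! * 24^g) := Nat.mul_le_mul_right _ E5
      _ = ((2*Sn)^(2*(k-1)) * ((g)! * 24^g)) * (Q * (Pd * Pg)) := by ring
      _ ≤ (c0K * (24^Gn * ((Gn)! * (Mn+1)^(k-1)))) * (Q * (Pd * Pg)) :=
          Nat.mul_le_mul_right _ E6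
      _ = (c0K * Q * (Pg * 24^Gn * Pd)) * ((Gn)! * (Mn+1)^(k-1)) := by ring
  exact Nat.le_of_mul_le_mul_right final (by positivity)

/-- The paper's Lemma lem:bound product: for all `K ≥ 2` and `n ≥ 1` there is a constant
`C > 0` such that for any `2 ≤ k ≤ K`, `g ≥ 1`, and genera/boundary data `(g_v, n_v)`
with `2g_v − 2 + n_v ≥ 1`, `∑ n_v = n`, `∑ (2g_v − 2 + n_v) = 2g − 2 + n`, one has
`∏_v (6g_v−5+2n_v)!!/(g_v!·24^{g_v}) ≤ C·((6g−5+2n)!!/(g!·24^g))·(∏_v (2g_v−2+n_v)!)/(2g−2+n)!`. -/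
theorem double_factorial_product_bound :
    ∀ K n : ℕ, 2 ≤ K → 1 ≤ n →
      ∃ C : ℝ, 0 < C ∧
        ∀ k : ℕ, 2 ≤ k → k ≤ K →
          ∀ g : ℕ, 1 ≤ g →
            ∀ gs ns : Fin k → ℕ,
              (∀ v, 1 ≤ ns v) →
              (∀ v, (1 : ℤ) ≤ 2 * (gs v : ℤ) - 2 + (ns v : ℤ)) →
              (∑ v, ns v = n) →
              (∑ v, (2 * (gs v : ℤ) - 2 + (ns v : ℤ)) = 2 * (g : ℤ) - 2 + (n : ℤ)) →
              ∏ v, ((Nat.doubleFactorial (6 * gs v + 2 * ns v - 5) : ℝ) /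
                  ((Nat.factorial (gs v) : ℝ) * 24 ^ (gs v))) ≤
              C * ((Nat.doubleFactorial (6 * g + 2 * n - 5) : ℝ) /
                  ((Nat.factorial g : ℝ) * 24 ^ g)) *
                (∏ v, (Nat.factorial (2 * gs v + ns v - 2) : ℝ)) /
                (Nat.factorial (2 * g + n - 2) : ℝ) := by
  intro K n hK hn
  refine ⟨(((4*(1+K)^2*(3+n))^K : ℕ) : ℝ), by positivity, ?_⟩
  intro k hk2 hkK g hg gs ns hns1 hd1 hsum_n hEuler
  have key := key_nat K n hK hn k hk2 hkK g hg gs ns hns1 hd1 hsum_n hEuler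
  -- sum of genera
  have hgsZ : (∑ v, (gs v : ℤ)) = g + k - 1 := by
    have h : ∑ v, (2 * (gs v : ℤ) - 2 + (ns v : ℤ))
        = 2 * (∑ v, (gs v : ℤ)) - 2 * k + ∑ v, (ns v : ℤ) := by
      rw [Finset.sum_add_distrib, Finset.sum_sub_distrib, ← Finset.mul_sum,
        Finset.sum_const, Finset.card_univ, Fintype.card_fin]
      ring
    have hnsZ : (∑ v, (ns v : ℤ)) = n := by exact_mod_cast congrArg (Nat.cast : ℕ → ℤ) hsum_n
    rw [hEuler, hnsZ] at h
    linarith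
  have hG : (∑ v, gs v) = g + (k-1) := by
    have hc : ((∑ v, gs v : ℕ) : ℤ) = (g : ℤ) + k - 1 := by push_cast; exact hgsZ
    omega
  -- rewrite LHS as a single fraction
  have hL : (∏ v, ((Nat.doubleFactorial (6 * gs v + 2 * ns v - 5) : ℝ) /
        ((Nat.factorial (gs v) : ℝ) * 24 ^ (gs v))))
      = ((∏ v, (6*gs v + 2*ns v - 5)‼ : ℕ) : ℝ)
        / (((∏ v, (gs v)! : ℕ) : ℝ) * 24^(g+(k-1))) := by
    rw [Finset.prod_div_distrib, Finset.prod_mul_distrib, Finset.prod_pow_eq_pow_sum, hG,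
      Nat.cast_prod, Nat.cast_prod]
  rw [hL]
  have hrhs : ((((4*(1+K)^2*(3+n))^K : ℕ) : ℝ) * ((Nat.doubleFactorial (6 * g + 2 * n - 5) : ℝ) /
        ((Nat.factorial g : ℝ) * 24 ^ g)) *
        (∏ v, (Nat.factorial (2 * gs v + ns v - 2) : ℝ)) /
        (Nat.factorial (2 * g + n - 2) : ℝ))
      = ((((4*(1+K)^2*(3+n))^K : ℕ) : ℝ) * ((6*g+2*n-5)‼ : ℕ)
          * (((∏ v, (2*gs v + ns v - 2)! : ℕ)) : ℝ))
        / (((Nat.factorial g : ℝ) * 24 ^ g) * (Nat.factorial (2 * g + n - 2) : ℝ)) := by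
    rw [Nat.cast_prod]
    ring
  rw [hrhs, div_le_div_iff₀ (by positivity) (by positivity)]
  have keyR : ((∏ v, (6*gs v + 2*ns v - 5)‼ : ℕ) : ℝ) * ((g)! * 24^g * ((2*g+n-2)! : ℕ))
      ≤ (((4*(1+K)^2*(3+n))^K : ℕ) : ℝ) * (((6*g+2*n-5)‼ : ℕ) : ℝ)
        * (((∏ v, (gs v)! : ℕ) : ℝ) * 24^(g+(k-1)) * ((∏ v, (2*gs v + ns v - 2)! : ℕ) : ℝ)) := by
    exact_mod_cast key
  calc ((∏ v, (6*gs v + 2*ns v - 5)‼ : ℕ) : ℝ)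
        * ((Nat.factorial g : ℝ) * 24 ^ g * (Nat.factorial (2 * g + n - 2) : ℝ))
      ≤ (((4*(1+K)^2*(3+n))^K : ℕ) : ℝ) * (((6*g+2*n-5)‼ : ℕ) : ℝ)
        * (((∏ v, (gs v)! : ℕ) : ℝ) * 24^(g+(k-1)) * ((∏ v, (2*gs v + ns v - 2)! : ℕ) : ℝ)) :=
        keyR
    _ = (((4*(1+K)^2*(3+n))^K : ℕ) : ℝ) * ((((6*g+2*n-5)‼ : ℕ)) : ℝ)
        * ((∏ v, (2*gs v + ns v - 2)! : ℕ) : ℝ)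
        * (((∏ v, (gs v)! : ℕ) : ℝ) * 24 ^ (g+(k-1))) := by ring
end

section
/- For all integers n and k with 2 ≤ k ≤ n, ∑ (n_1!·n_2!⋯n_k!)/n! ≤ 4/n, where the sum ranges over all k-tuples (n_1, …, n_k) of positive integers with n_1 + ⋯ + n_k = n. -/
open Nat Finset

private lemma fact_mul_fact_le_aux (a b : ℕ) (ha : 2 ≤ a) (hb : 2 ≤ b) :
    a ! * b ! ≤ 2 * (a + b - 2)! := by
  induction b, hb using Nat.le_induction with
  | base =>
    have h : a + 2 - 2 = a := by omega
    rw [h, Nat.factorial_two]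
    exact le_of_eq (mul_comm _ _)
  | succ b hb ih =>
    have h1 : a + (b + 1) - 2 = (a + b - 2) + 1 := by omega
    rw [h1, Nat.factorial_succ, Nat.factorial_succ]
    calc a ! * ((b + 1) * b !) = (b + 1) * (a ! * b !) := by ring
      _ ≤ (b + 1) * (2 * (a + b - 2)!) := Nat.mul_le_mul_left _ ih
      _ ≤ (a + b - 2 + 1) * (2 * (a + b - 2)!) := Nat.mul_le_mul_right _ (by omega)
      _ = 2 * ((a + b - 2 + 1) * (a + b - 2)!) := by ring

/-- `∑_{a=1}^{N-1} a! (N-a)! ≤ 4 (N-1)!` for `N ≥ 2`. -/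
private lemma sum_fact_mul_fact_le (N : ℕ) (hN : 2 ≤ N) :
    ∑ a ∈ Icc 1 (N - 1), a ! * (N - a)! ≤ 4 * (N - 1)! := by
  rcases lt_or_ge N 4 with h4 | h4
  · interval_cases N <;> decide
  · have hsplit : Icc 1 (N - 1) = insert 1 (insert (N - 1) (Icc 2 (N - 2))) := by
      ext a; simp only [mem_Icc, mem_insert]; omega
    rw [hsplit, Finset.sum_insert, Finset.sum_insert]
    · have hmid : ∑ a ∈ Icc 2 (N - 2), a ! * (N - a)! ≤ ∑ _a ∈ Icc 2 (N - 2), 2 * (N - 2)! := by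
        apply Finset.sum_le_sum
        intro a ha
        rw [mem_Icc] at ha
        have h : a + (N - a) - 2 = N - 2 := by omega
        calc a ! * (N - a)! ≤ 2 * (a + (N - a) - 2)! :=
              fact_mul_fact_le_aux a (N - a) ha.1 (by omega)
          _ = 2 * (N - 2)! := by rw [h]
      have hcN : N - 2 + 1 - 2 = N - 3 := by omega
      have hcard : ∑ _a ∈ Icc 2 (N - 2), 2 * (N - 2)! = (N - 3) * (2 * (N - 2)!) := by
        rw [Finset.sum_const, Nat.card_Icc, smul_eq_mul, hcN]
      have h1 : (1 : ℕ)! * (N - 1)! = (N - 1)! := by simp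
      have h2 : (N - 1)! * (N - (N - 1))! = (N - 1)! := by
        have h : N - (N - 1) = 1 := by omega
        rw [h]; simp
      rw [h1, h2]
      have hmid2 : (N - 3) * (2 * (N - 2)!) ≤ 2 * (N - 1)! := by
        have h : (N - 1)! = (N - 1) * (N - 2)! := by
          rw [show N - 2 = (N - 1) - 1 by omega, Nat.mul_factorial_pred (by omega)]
        rw [h]
        calc (N - 3) * (2 * (N - 2)!) = 2 * ((N - 3) * (N - 2)!) := by ring
          _ ≤ 2 * ((N - 1) * (N - 2)!) :=
              Nat.mul_le_mul_left _ (Nat.mul_le_mul_right _ (by omega))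
      have := le_trans hmid (le_of_eq hcard)
      omega
    · rw [mem_Icc]; omega
    · simp only [mem_insert, mem_Icc]; omega

/-- `∑_{a=1}^{N-1} a! (N-a)! ≤ N!`. -/
private lemma sum_fact_mul_fact_le' (N : ℕ) :
    ∑ a ∈ Icc 1 (N - 1), a ! * (N - a)! ≤ N ! := by
  rcases lt_or_ge N 4 with h4 | h4
  · interval_cases N <;> decide
  · calc ∑ a ∈ Icc 1 (N - 1), a ! * (N - a)! ≤ 4 * (N - 1)! :=
          sum_fact_mul_fact_le _ (by omega)
      _ ≤ N * (N - 1)! := Nat.mul_le_mul_right _ (by omega)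
      _ = N ! := Nat.mul_factorial_pred (by omega)

private lemma keyA (n : ℕ) (hn : 2 ≤ n) :
    ∑ p ∈ antidiagonal n, (if 1 ≤ p.1 ∧ 1 ≤ p.2 then p.1 ! * p.2 ! else 0)
      ≤ 4 * (n - 1)! := by
  rw [Finset.Nat.sum_antidiagonal_eq_sum_range_succ_mk, ← Finset.sum_filter]
  have hfil : (range (n + 1)).filter (fun a => 1 ≤ a ∧ 1 ≤ n - a) = Icc 1 (n - 1) := by
    ext a; simp only [mem_filter, mem_range, mem_Icc]; omega
  rw [hfil]
  exact sum_fact_mul_fact_le n hn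

private lemma keyB (n : ℕ) :
    ∑ p ∈ antidiagonal n, (if 1 ≤ p.1 ∧ 2 ≤ p.2 then p.1 ! * (p.2 - 1)! else 0)
      ≤ (n - 1)! := by
  rw [Finset.Nat.sum_antidiagonal_eq_sum_range_succ_mk, ← Finset.sum_filter]
  have hfil : (range (n + 1)).filter (fun a => 1 ≤ a ∧ 2 ≤ n - a) = Icc 1 (n - 2) := by
    ext a; simp only [mem_filter, mem_range, mem_Icc]; omega
  rw [hfil]
  calc ∑ a ∈ Icc 1 (n - 2), a ! * (n - a - 1)!
      = ∑ a ∈ Icc 1 ((n - 1) - 1), a ! * ((n - 1) - a)! := by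
        apply Finset.sum_congr
        · congr 1
        · intro a _; congr 2; omega
    _ ≤ (n - 1)! := sum_fact_mul_fact_le' (n - 1)

/-! The composition sum. -/

noncomputable def compS (n k : ℕ) : ℝ :=
  ∑ f ∈ (Finset.Nat.antidiagonalTuple k n).filter (fun f => ∀ i, 1 ≤ f i),
    (∏ i, (Nat.factorial (f i) : ℝ)) / (Nat.factorial n : ℝ)

lemma compS_nonneg (n k : ℕ) : 0 ≤ compS n k := by
  apply Finset.sum_nonneg
  intro f _
  positivity

lemma compS_eq_zero {n k : ℕ} (h : n < k) : compS n k = 0 := by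
  apply Finset.sum_eq_zero
  intro f hf
  simp only [mem_filter, Finset.Nat.mem_antidiagonalTuple] at hf
  exfalso
  have hkn : k ≤ n := by
    calc k = ∑ _i : Fin k, 1 := by simp
      _ ≤ ∑ i, f i := Finset.sum_le_sum fun i _ => hf.2 i
      _ = n := hf.1
  omega

lemma compS_one {r : ℕ} (h : 1 ≤ r) : compS r 1 = 1 := by
  unfold compS
  rw [Finset.Nat.antidiagonalTuple_one, Finset.filter_singleton]
  have hc : ∀ i : Fin 1, 1 ≤ (![r] : Fin 1 → ℕ) i := by
    intro i
    fin_cases i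
    simpa using h
  rw [if_pos hc, Finset.sum_singleton]
  have hp : ∏ i : Fin 1, ((Nat.factorial ((![r] : Fin 1 → ℕ) i)) : ℝ) = (r ! : ℝ) := by simp
  rw [hp, div_self]
  positivity

lemma compS_rec (n k : ℕ) :
    compS n (k + 1) = ∑ p ∈ (antidiagonal n).filter (fun p => 1 ≤ p.1),
      (((p.1 !) : ℝ) * ((p.2 !) : ℝ) / ((n !) : ℝ)) * compS p.2 k := by
  have hsig : compS n (k + 1) =
      ∑ x ∈ ((antidiagonal n).filter (fun p => 1 ≤ p.1)).sigma
          (fun p => (Finset.Nat.antidiagonalTuple k p.2).filter (fun g => ∀ i, 1 ≤ g i)),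
        (((x.1.1 !) : ℝ) * ∏ i, ((x.2 i)! : ℝ)) / ((n !) : ℝ) := by
    unfold compS
    refine Finset.sum_nbij'
      (i := fun (f : Fin (k + 1) → ℕ) => (⟨(f 0, ∑ i : Fin k, f i.succ), Fin.tail f⟩ : Σ _p : ℕ × ℕ, Fin k → ℕ))
      (j := fun (x : Σ _p : ℕ × ℕ, Fin k → ℕ) => Fin.cons x.1.1 x.2) ?_ ?_ ?_ ?_ ?_
    · intro f hf
      simp only [mem_filter, Finset.Nat.mem_antidiagonalTuple] at hf
      obtain ⟨hsum, hpos⟩ := hf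
      rw [Fin.sum_univ_succ] at hsum
      simp only [Finset.mem_sigma, mem_filter, Finset.Nat.mem_antidiagonalTuple,
        Finset.HasAntidiagonal.mem_antidiagonal]
      exact ⟨⟨hsum, hpos 0⟩, rfl, fun i => hpos i.succ⟩
    · rintro ⟨⟨p1, p2⟩, g⟩ hx
      simp only [Finset.mem_sigma, mem_filter, Finset.Nat.mem_antidiagonalTuple,
        Finset.HasAntidiagonal.mem_antidiagonal] at hx
      obtain ⟨⟨hsum, hpos1⟩, hsum2, hpos2⟩ := hx
      simp only [mem_filter, Finset.Nat.mem_antidiagonalTuple]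
      constructor
      · rw [Fin.sum_univ_succ]
        simp only [Fin.cons_zero, Fin.cons_succ]
        rw [hsum2, hsum]
      · intro i
        refine Fin.cases ?_ ?_ i
        · simpa using hpos1
        · intro j; simpa using hpos2 j
    · intro f _
      exact Fin.cons_self_tail f
    · rintro ⟨⟨p1, p2⟩, g⟩ hx
      simp only [Finset.mem_sigma, mem_filter, Finset.Nat.mem_antidiagonalTuple,
        Finset.HasAntidiagonal.mem_antidiagonal] at hx
      simp [Fin.tail_cons, Fin.cons_succ, hx.2.1]
    · intro f _
      simp [Fin.prod_univ_succ, Fin.tail]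
  rw [hsig, Finset.sum_sigma]
  apply Finset.sum_congr rfl
  intro p _
  unfold compS
  rw [Finset.mul_sum]
  apply Finset.sum_congr rfl
  intro g _
  have h2 : ((p.2)! : ℝ) ≠ 0 := by positivity
  have hn : ((n)! : ℝ) ≠ 0 := by positivity
  field_simp

private lemma fact_div_eq (n : ℕ) (hn : 1 ≤ n) :
    (((n - 1)!) : ℝ) / ((n !) : ℝ) = 1 / n := by
  have hfe : ((n !) : ℝ) = (n : ℝ) * (((n - 1)!) : ℝ) := by
    rw [← Nat.mul_factorial_pred (by omega : n ≠ 0)]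
    push_cast
    ring
  have h1 : ((n : ℝ)) ≠ 0 := by
    exact_mod_cast Nat.pos_iff_ne_zero.mp (by omega)
  have h2 : (((n - 1)!) : ℝ) ≠ 0 := by positivity
  rw [hfe]
  field_simp

/-- Main induction: for `2 ≤ k ≤ n`, `compS n k ≤ 4 / n`. -/
lemma compS_le (k : ℕ) (hk : 2 ≤ k) : ∀ n, k ≤ n → compS n k ≤ 4 / n := by
  induction k, hk using Nat.le_induction with
  | base =>
    intro n hn
    have hfac : (0 : ℝ) < ((n !) : ℝ) := by positivity
    rw [show compS n 2 = compS n (1 + 1) from rfl, compS_rec n 1]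
    calc ∑ p ∈ (antidiagonal n).filter (fun p => 1 ≤ p.1),
          (((p.1 !) : ℝ) * ((p.2 !) : ℝ) / ((n !) : ℝ)) * compS p.2 1
        ≤ ∑ p ∈ (antidiagonal n).filter (fun p => 1 ≤ p.1),
          (((if 1 ≤ p.1 ∧ 1 ≤ p.2 then p.1 ! * p.2 ! else 0 : ℕ)) : ℝ) / ((n !) : ℝ) := by
          apply Finset.sum_le_sum
          intro p hp
          simp only [mem_filter, Finset.mem_antidiagonal] at hp
          by_cases hp2 : 1 ≤ p.2
          · rw [compS_one hp2, mul_one, if_pos ⟨hp.2, hp2⟩]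
            push_cast
            exact le_refl _
          · rw [show p.2 = 0 by omega, compS_eq_zero (by omega), mul_zero]
            positivity
      _ ≤ ∑ p ∈ antidiagonal n,
          (((if 1 ≤ p.1 ∧ 1 ≤ p.2 then p.1 ! * p.2 ! else 0 : ℕ)) : ℝ) / ((n !) : ℝ) := by
          apply Finset.sum_le_sum_of_subset_of_nonneg (Finset.filter_subset _ _)
          intro p _ _
          positivity
      _ = (((∑ p ∈ antidiagonal n, if 1 ≤ p.1 ∧ 1 ≤ p.2 then p.1 ! * p.2 ! else 0 : ℕ)) : ℝ)
            / ((n !) : ℝ) := by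
          rw [← Finset.sum_div]
          push_cast
          rfl
      _ ≤ ((4 * (n - 1)! : ℕ) : ℝ) / ((n !) : ℝ) := by
          gcongr
          exact_mod_cast keyA n hn
      _ = 4 / n := by
          push_cast
          rw [mul_div_assoc, fact_div_eq n (by omega)]
          ring
  | succ k hk ih =>
    intro n hn
    have hfac : (0 : ℝ) < ((n !) : ℝ) := by positivity
    rw [compS_rec n k]
    calc ∑ p ∈ (antidiagonal n).filter (fun p => 1 ≤ p.1),
          (((p.1 !) : ℝ) * ((p.2 !) : ℝ) / ((n !) : ℝ)) * compS p.2 k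
        ≤ ∑ p ∈ (antidiagonal n).filter (fun p => 1 ≤ p.1),
          4 * (((if 1 ≤ p.1 ∧ 2 ≤ p.2 then p.1 ! * (p.2 - 1)! else 0 : ℕ)) : ℝ) / ((n !) : ℝ) := by
          apply Finset.sum_le_sum
          intro p hp
          simp only [mem_filter, Finset.mem_antidiagonal] at hp
          by_cases hr : k ≤ p.2
          · have h2 : 2 ≤ p.2 := le_trans hk hr
            have hih := ih p.2 hr
            rw [if_pos ⟨hp.2, h2⟩]
            have hc : (0 : ℝ) ≤ ((p.1 !) : ℝ) * ((p.2 !) : ℝ) / ((n !) : ℝ) := by positivity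
            have hp2 : ((p.2 : ℕ) : ℝ) ≠ 0 := by
              exact_mod_cast (by omega : p.2 ≠ 0)
            have hfactp : ((p.2 !) : ℝ) = (p.2 : ℝ) * (((p.2 - 1)!) : ℝ) := by
              rw [← Nat.mul_factorial_pred (by omega : p.2 ≠ 0)]
              push_cast
              ring
            calc (((p.1 !) : ℝ) * ((p.2 !) : ℝ) / ((n !) : ℝ)) * compS p.2 k
                ≤ (((p.1 !) : ℝ) * ((p.2 !) : ℝ) / ((n !) : ℝ)) * (4 / p.2) :=
                  mul_le_mul_of_nonneg_left hih hc
              _ = 4 * (((p.1 ! * (p.2 - 1)! : ℕ)) : ℝ) / ((n !) : ℝ) := by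
                  rw [hfactp]
                  push_cast
                  field_simp
          · rw [compS_eq_zero (by omega), mul_zero]
            positivity
      _ ≤ ∑ p ∈ antidiagonal n,
          4 * (((if 1 ≤ p.1 ∧ 2 ≤ p.2 then p.1 ! * (p.2 - 1)! else 0 : ℕ)) : ℝ) / ((n !) : ℝ) := by
          apply Finset.sum_le_sum_of_subset_of_nonneg (Finset.filter_subset _ _)
          intro p _ _
          positivity
      _ = 4 * (((∑ p ∈ antidiagonal n, if 1 ≤ p.1 ∧ 2 ≤ p.2 then p.1 ! * (p.2 - 1)! else 0 : ℕ)) : ℝ)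
            / ((n !) : ℝ) := by
          push_cast
          rw [← Finset.sum_div, ← Finset.mul_sum]
      _ ≤ 4 * (((n - 1)!) : ℝ) / ((n !) : ℝ) := by
          gcongr
          exact_mod_cast keyB n
      _ = 4 / n := by
          rw [mul_div_assoc, fact_div_eq n (by omega)]
          ring

/-- The composition-sum bound (Barazer–Giacchetto–Liu, Lemma 4.3): for `2 ≤ k ≤ n`,
`∑ (n₁!⋯n_k!)/n! ≤ 4/n`, the sum ranging over all `k`-tuples of positive integers with
`n₁ + ⋯ + n_k = n`. -/
theorem composition_factorial_sum_bound :
    ∀ n k : ℕ, 2 ≤ k → k ≤ n →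
      ∑ f ∈ (Finset.Nat.antidiagonalTuple k n).filter (fun f => ∀ i, 1 ≤ f i),
          (∏ i, (Nat.factorial (f i) : ℝ)) / (Nat.factorial n : ℝ)
        ≤ 4 / (n : ℝ) := by
  intro n k h2 hkn
  exact compS_le k h2 n hkn
end
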